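/- arXiv:nlin/0306040 — 10 statements merged into one kernel-verified Lean document; each statement's English description precedes it below -/
import Mathlib

section
/- Let Q = {0,…,q−1}, let f : Q^n → Q be a local rule with f(0,…,0) = 0, and let F : Q^ℤ → Q^ℤ be the cellular automaton F(c)_i = f(c_i,…,c_{i+n−1}). Let b ≥ 1 and φ : Q^b → ℝ with φ(0,…,0) = 0. Then the following are equivalent: (a) for every p ≥ 1 and every p-periodic configuration c ∈ Q^ℤ (i.e. c_{i+p} = c_i for all i), ∑_{k=0}^{p−1} φ(F(c)_k,…,F(c)_{k+b−1}) = ∑_{k=0}^{p−1} φ(c_k,…,c_{k+b−1}); (b) for every finite configuration c ∈ Q^ℤ (i.e. c_i = 0 for all but finitely many i), ∑_{k∈ℤ} φ(F(c)_k,…,F(c)_{k+b−1}) = ∑_{k∈ℤ} φ(c_k,…,c_{k+b−1}), both sums having only finitely many nonzero terms. -/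
private lemma icoSingleton (b : ℤ) : Finset.Ico b (b+1) = {b} := by
  ext x; simp; omega

private lemma sumIcoSplit (f : ℤ → ℝ) {a b c : ℤ} (h1 : a ≤ b) (h2 : b ≤ c) :
    ((∑ k ∈ Finset.Ico a b, f k) + ∑ k ∈ Finset.Ico b c, f k) = ∑ k ∈ Finset.Ico a c, f k := by
  rw [← Finset.sum_union (Finset.Ico_disjoint_Ico_consecutive a b c),
    Finset.Ico_union_Ico_eq_Ico h1 h2]

private lemma sumIcoTop (f : ℤ → ℝ) {a b : ℤ} (h : a ≤ b) :
    ∑ k ∈ Finset.Ico a (b+1), f k = (∑ k ∈ Finset.Ico a b, f k) + f b := by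
  rw [← sumIcoSplit f h (by omega), icoSingleton, Finset.sum_singleton]

private lemma sumIcoBot (f : ℤ → ℝ) {a b : ℤ} (h : a ≤ b) :
    ∑ k ∈ Finset.Ico a (b+1), f k = f a + (∑ k ∈ Finset.Ico (a+1) (b+1), f k) := by
  rw [← sumIcoSplit f (show a ≤ a+1 by omega) (by omega), icoSingleton, Finset.sum_singleton]

private lemma sumRangeIco (g : ℤ → ℝ) (p : ℕ) :
    ∑ k ∈ Finset.range p, g (k : ℤ) = ∑ k ∈ Finset.Ico (0:ℤ) (p:ℤ), g k := by
  induction p with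
  | zero => simp
  | succ p ih =>
    rw [Finset.sum_range_succ, ih, show ((p+1:ℕ) : ℤ) = (p:ℤ)+1 by push_cast; ring,
      sumIcoTop g (by positivity)]

private lemma sumIcoPeriodic (g : ℤ → ℝ) (p : ℕ) (hg : ∀ i, g (i + (p:ℤ)) = g i) (a : ℤ) :
    ∑ k ∈ Finset.Ico a (a + (p:ℤ)), g k = ∑ k ∈ Finset.Ico (0:ℤ) (p:ℤ), g k := by
  have step : ∀ x : ℤ, ∑ k ∈ Finset.Ico x (x + (p:ℤ)), g k
      = ∑ k ∈ Finset.Ico (x+1) (x + 1 + (p:ℤ)), g k := by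
    intro x
    rcases Nat.eq_zero_or_pos p with h | h
    · simp [h]
    have hp : (1:ℤ) ≤ (p:ℤ) := by exact_mod_cast h
    rw [show x + (p:ℤ) = (x + (p:ℤ) - 1) + 1 by ring, sumIcoBot g (by omega),
      show x + (p:ℤ) - 1 + 1 = x + (p:ℤ) by ring,
      show x + 1 + (p:ℤ) = (x + (p:ℤ) - 1) + 1 + 1 by ring,
      sumIcoTop g (by omega), show x + (p:ℤ) - 1 + 1 = x + (p:ℤ) by ring]
    rw [hg x]
    ring
  have main : ∀ x : ℤ, ∑ k ∈ Finset.Ico x (x + (p:ℤ)), g k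
      = ∑ k ∈ Finset.Ico (0:ℤ) (p:ℤ), g k := by
    intro x
    induction x using Int.induction_on with
    | zero => simp
    | succ i ih => rw [← step i, ih]
    | pred i ih => rw [step (-i-1)]; simpa using ih
  exact main a

private lemma telescopeAux (g G : ℤ → ℝ) (A B m : ℤ) (p : ℕ)
    (hA : A ≤ m - (p:ℤ)) (hB : m ≤ B)
    (hg : Function.support g ⊆ Set.Ico A B)
    (hG : Function.support G ⊆ Set.Ico A (B + (p:ℤ)))
    (h1 : ∀ k < m, G k = g k)
    (h2 : ∀ k, m - (p:ℤ) ≤ k → G (k + (p:ℤ)) = g k) :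
    ∑ᶠ k, G k = (∑ᶠ k, g k) + ∑ k ∈ Finset.Ico (m - (p:ℤ)) m, g k := by
  have hp0 : (0:ℤ) ≤ (p:ℤ) := by positivity
  have eG : ∑ᶠ k, G k = ∑ k ∈ Finset.Ico A (B + (p:ℤ)), G k := by
    apply finsum_eq_finset_sum_of_support_subset
    rwa [Finset.coe_Ico]
  have eg : ∑ᶠ k, g k = ∑ k ∈ Finset.Ico A B, g k := by
    apply finsum_eq_finset_sum_of_support_subset
    rwa [Finset.coe_Ico]
  rw [eG, eg]
  rw [← sumIcoSplit G (show A ≤ m by omega) (by omega)]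
  have e1 : ∑ k ∈ Finset.Ico A m, G k = ∑ k ∈ Finset.Ico A m, g k :=
    Finset.sum_congr rfl (fun k hk => h1 k (Finset.mem_Ico.mp hk).2)
  have e2 : ∑ k ∈ Finset.Ico m (B + (p:ℤ)), G k = ∑ k ∈ Finset.Ico (m - (p:ℤ)) B, g k := by
    rw [show Finset.Ico m (B + (p:ℤ))
        = (Finset.Ico (m - (p:ℤ)) B).map (addRightEmbedding (p:ℤ)) by
      rw [Finset.map_add_right_Ico]; congr 1; ring]
    rw [Finset.sum_map]
    exact Finset.sum_congr rfl (fun k hk => h2 k (Finset.mem_Ico.mp hk).1)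
  rw [e1, e2, ← sumIcoSplit g (show m - (p:ℤ) ≤ m by omega) hB,
    ← sumIcoSplit g (show A ≤ m by omega) hB]
  ring

/-- Equivalence between conservation of an additive quantity on periodic
configurations and on finite configurations (generalized Durand–Formenti–Róka theorem). -/
theorem periodic_conservation_iff_finite_conservation
    (q n b : ℕ) [NeZero q] (hn : 1 ≤ n) (hb : 1 ≤ b)
    (f : (Fin n → Fin q) → Fin q) (hf0 : f (fun _ => 0) = 0)
    (φ : (Fin b → Fin q) → ℝ) (hφ0 : φ (fun _ => 0) = 0)
    (F : (ℤ → Fin q) → ℤ → Fin q)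
    (hF : ∀ (c : ℤ → Fin q) (i : ℤ), F c i = f (fun t => c (i + ((t : ℕ) : ℤ)))) :
    (∀ p : ℕ, 1 ≤ p → ∀ c : ℤ → Fin q, (∀ i : ℤ, c (i + (p : ℤ)) = c i) →
        ∑ k ∈ Finset.range p, φ (fun j => F c ((k : ℤ) + ((j : ℕ) : ℤ))) =
        ∑ k ∈ Finset.range p, φ (fun j => c ((k : ℤ) + ((j : ℕ) : ℤ)))) ↔
    (∀ c : ℤ → Fin q, {i : ℤ | c i ≠ 0}.Finite →
        ∑ᶠ k : ℤ, φ (fun j => F c (k + ((j : ℕ) : ℤ))) =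
        ∑ᶠ k : ℤ, φ (fun j => c (k + ((j : ℕ) : ℤ)))) := by
  -- generic window lemmas
  have Wcongr : ∀ (x y : ℤ → Fin q) (k : ℤ),
      (∀ t : ℤ, k ≤ t → t < k + b → x t = y t) →
      φ (fun j => x (k + ((j:ℕ):ℤ))) = φ (fun j => y (k + ((j:ℕ):ℤ))) := by
    intro x y k h
    congr 1
    funext j
    have hj := j.isLt
    exact h _ (by omega) (by omega)
  have Wzero : ∀ (x : ℤ → Fin q) (k : ℤ),
      (∀ t : ℤ, k ≤ t → t < k + b → x t = 0) →
      φ (fun j => x (k + ((j:ℕ):ℤ))) = 0 := by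
    intro x k h
    rw [show (fun j : Fin b => x (k + ((j:ℕ):ℤ))) = (fun _ => 0) from
      funext fun j => h _ (by have := j.isLt; omega) (by have := j.isLt; omega)]
    exact hφ0
  have Fzero : ∀ (x : ℤ → Fin q) (i : ℤ),
      (∀ t : ℤ, i ≤ t → t < i + n → x t = 0) → F x i = 0 := by
    intro x i h
    rw [hF, show (fun t : Fin n => x (i + ((t:ℕ):ℤ))) = (fun _ => 0) from
      funext fun t => h _ (by have := t.isLt; omega) (by have := t.isLt; omega)]
    exact hf0
  have WFcongr : ∀ (x y : ℤ → Fin q) (k : ℤ),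
      (∀ t : ℤ, k ≤ t → t < k + b + n → x t = y t) →
      φ (fun j => F x (k + ((j:ℕ):ℤ))) = φ (fun j => F y (k + ((j:ℕ):ℤ))) := by
    intro x y k h
    congr 1
    funext j
    have hj := j.isLt
    rw [hF, hF]
    congr 1
    funext t
    have ht := t.isLt
    exact h _ (by omega) (by omega)
  have WFzero : ∀ (x : ℤ → Fin q) (k : ℤ),
      (∀ t : ℤ, k ≤ t → t < k + b + n → x t = 0) →
      φ (fun j => F x (k + ((j:ℕ):ℤ))) = 0 := by
    intro x k h
    exact Wzero (F x) k (fun t ht1 ht2 => Fzero x t (fun s hs1 hs2 => h s (by omega) (by omega)))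
  constructor
  · -- periodic conservation → finite conservation
    intro ha c hc
    set s := hc.toFinset with hs
    set N : ℕ := (s.sup fun i => i.natAbs) + 1 with hN
    have hsupp : ∀ i : ℤ, c i ≠ 0 → -(N:ℤ) ≤ i ∧ i < (N:ℤ) := by
      intro i hi
      have hi' : i ∈ s := hc.mem_toFinset.mpr hi
      have h2 : i.natAbs ≤ s.sup (fun i => i.natAbs) := Finset.le_sup hi'
      omega
    set p : ℕ := 2*N + n + b with hpdef
    have hp : 1 ≤ p := by omega
    have hpc : (p:ℤ) = 2*(N:ℤ) + n + b := by push_cast [hpdef]; ring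
    set A : ℤ := -((N:ℤ) + n + b) with hA
    set d : ℤ → Fin q := fun i => c ((i + (N:ℤ)) % (p:ℤ) - (N:ℤ)) with hd
    have hpz : (0:ℤ) < (p:ℤ) := by omega
    have hdper : ∀ i, d (i + (p:ℤ)) = d i := by
      intro i
      simp only [hd]
      congr 2
      rw [show i + (p:ℤ) + (N:ℤ) = i + (N:ℤ) + (p:ℤ)*1 by ring, Int.add_mul_emod_self_left]
    have hdc : ∀ i : ℤ, A ≤ i → i < (N:ℤ) + n + b → d i = c i := by
      intro i h1 h2
      by_cases hiN : -(N:ℤ) ≤ i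
      · have e0 : (0:ℤ) ≤ i + (N:ℤ) := by omega
        have e1 : i + (N:ℤ) < (p:ℤ) := by omega
        have e : (i + (N:ℤ)) % (p:ℤ) = i + (N:ℤ) := Int.emod_eq_of_lt e0 e1
        simp only [hd]
        rw [e, show i + (N:ℤ) - (N:ℤ) = i by ring]
      · have e0 : (0:ℤ) ≤ i + (N:ℤ) + (p:ℤ) := by omega
        have e1 : i + (N:ℤ) + (p:ℤ) < (p:ℤ) := by omega
        have e : (i + (N:ℤ)) % (p:ℤ) = i + (N:ℤ) + (p:ℤ) := by
          have e2 := Int.add_mul_emod_self_left (a := i + (N:ℤ) + (p:ℤ)) (b := (p:ℤ)) (c := -1)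
          rw [show i + (N:ℤ) + (p:ℤ) + (p:ℤ)*(-1) = i + (N:ℤ) by ring] at e2
          rw [e2]
          exact Int.emod_eq_of_lt e0 e1
        simp only [hd]
        rw [e]
        have hz1 : c (i + (N:ℤ) + (p:ℤ) - (N:ℤ)) = 0 := by
          by_contra h
          have := hsupp _ h
          omega
        have hz2 : c i = 0 := by
          by_contra h
          have := hsupp _ h
          omega
        rw [hz1, hz2]
    -- supports
    have hsc : Function.support (fun k : ℤ => φ (fun j => c (k + ((j:ℕ):ℤ))))
        ⊆ Set.Ico A (N:ℤ) := by
      intro k hk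
      rw [Function.mem_support] at hk
      rw [Set.mem_Ico]
      by_contra h
      exact hk (Wzero c k (fun t ht1 ht2 => by
        by_contra h0
        have := hsupp _ h0
        omega))
    have hsFc : Function.support (fun k : ℤ => φ (fun j => F c (k + ((j:ℕ):ℤ))))
        ⊆ Set.Ico A (N:ℤ) := by
      intro k hk
      rw [Function.mem_support] at hk
      rw [Set.mem_Ico]
      by_contra h
      exact hk (WFzero c k (fun t ht1 ht2 => by
        by_contra h0
        have := hsupp _ h0
        omega))
    have e1 : ∑ᶠ k : ℤ, φ (fun j => F c (k + ((j:ℕ):ℤ)))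
        = ∑ k ∈ Finset.Ico A (N:ℤ), φ (fun j => F c (k + ((j:ℕ):ℤ))) := by
      apply finsum_eq_finset_sum_of_support_subset
      rwa [Finset.coe_Ico]
    have e2 : ∑ᶠ k : ℤ, φ (fun j => c (k + ((j:ℕ):ℤ)))
        = ∑ k ∈ Finset.Ico A (N:ℤ), φ (fun j => c (k + ((j:ℕ):ℤ))) := by
      apply finsum_eq_finset_sum_of_support_subset
      rwa [Finset.coe_Ico]
    have e3 : ∑ k ∈ Finset.Ico A (N:ℤ), φ (fun j => F c (k + ((j:ℕ):ℤ)))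
        = ∑ k ∈ Finset.Ico A (N:ℤ), φ (fun j => F d (k + ((j:ℕ):ℤ))) := by
      refine Finset.sum_congr rfl (fun k hk => ?_)
      rw [Finset.mem_Ico] at hk
      exact (WFcongr d c k (fun t ht1 ht2 => hdc t (by omega) (by omega))).symm
    have e4 : ∑ k ∈ Finset.Ico A (N:ℤ), φ (fun j => c (k + ((j:ℕ):ℤ)))
        = ∑ k ∈ Finset.Ico A (N:ℤ), φ (fun j => d (k + ((j:ℕ):ℤ))) := by
      refine Finset.sum_congr rfl (fun k hk => ?_)
      rw [Finset.mem_Ico] at hk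
      exact (Wcongr d c k (fun t ht1 ht2 => hdc t (by omega) (by omega))).symm
    have hAp : A + (p:ℤ) = (N:ℤ) := by omega
    have hdWper : ∀ k : ℤ, (fun k : ℤ => φ (fun j => d (k + ((j:ℕ):ℤ)))) (k + (p:ℤ))
        = (fun k : ℤ => φ (fun j => d (k + ((j:ℕ):ℤ)))) k := by
      intro k
      simp only []
      congr 1
      funext j
      rw [show k + (p:ℤ) + ((j:ℕ):ℤ) = (k + ((j:ℕ):ℤ)) + (p:ℤ) by ring, hdper]
    have hFdper : ∀ i, F d (i + (p:ℤ)) = F d i := by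
      intro i
      rw [hF, hF]
      congr 1
      funext t
      rw [show i + (p:ℤ) + ((t:ℕ):ℤ) = (i + ((t:ℕ):ℤ)) + (p:ℤ) by ring, hdper]
    have hFdWper : ∀ k : ℤ, (fun k : ℤ => φ (fun j => F d (k + ((j:ℕ):ℤ)))) (k + (p:ℤ))
        = (fun k : ℤ => φ (fun j => F d (k + ((j:ℕ):ℤ)))) k := by
      intro k
      simp only []
      congr 1
      funext j
      rw [show k + (p:ℤ) + ((j:ℕ):ℤ) = (k + ((j:ℕ):ℤ)) + (p:ℤ) by ring, hFdper]
    have e5 : ∑ k ∈ Finset.Ico A (N:ℤ), φ (fun j => F d (k + ((j:ℕ):ℤ)))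
        = ∑ k ∈ Finset.Ico (0:ℤ) (p:ℤ), φ (fun j => F d (k + ((j:ℕ):ℤ))) := by
      rw [← hAp]
      exact sumIcoPeriodic _ p hFdWper A
    have e6 : ∑ k ∈ Finset.Ico A (N:ℤ), φ (fun j => d (k + ((j:ℕ):ℤ)))
        = ∑ k ∈ Finset.Ico (0:ℤ) (p:ℤ), φ (fun j => d (k + ((j:ℕ):ℤ))) := by
      rw [← hAp]
      exact sumIcoPeriodic _ p hdWper A
    have e7 : ∑ k ∈ Finset.range p, φ (fun j => F d ((k:ℤ) + ((j:ℕ):ℤ)))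
        = ∑ k ∈ Finset.Ico (0:ℤ) (p:ℤ), φ (fun j => F d (k + ((j:ℕ):ℤ))) :=
      sumRangeIco (fun k => φ (fun j => F d (k + ((j:ℕ):ℤ)))) p
    have e8 : ∑ k ∈ Finset.range p, φ (fun j => d ((k:ℤ) + ((j:ℕ):ℤ)))
        = ∑ k ∈ Finset.Ico (0:ℤ) (p:ℤ), φ (fun j => d (k + ((j:ℕ):ℤ))) :=
      sumRangeIco (fun k => φ (fun j => d (k + ((j:ℕ):ℤ)))) p
    have key := ha p hp d hdper
    rw [e1, e2, e3, e4, e5, e6, ← e7, ← e8, key]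
  · -- finite conservation → periodic conservation
    intro hbfin p hp c hcper
    have hpz : (0:ℤ) < (p:ℤ) := by exact_mod_cast hp
    set trunc : ℕ → ℤ → Fin q := fun m i => if 0 ≤ i ∧ i < (m:ℤ)*(p:ℤ) then c i else 0
      with htr
    have truncZero : ∀ (m : ℕ) (t : ℤ), (t < 0 ∨ (m:ℤ)*(p:ℤ) ≤ t) → trunc m t = 0 := by
      intro m t ht
      simp only [htr]
      rw [if_neg (by omega)]
    have hfin : ∀ m : ℕ, {i : ℤ | trunc m i ≠ 0}.Finite := by
      intro m
      apply Set.Finite.subset (Set.finite_Ico (0:ℤ) ((m:ℤ)*(p:ℤ)))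
      intro i hi
      rw [Set.mem_setOf_eq] at hi
      rw [Set.mem_Ico]
      by_contra h
      exact hi (truncZero m i (by omega))
    have F1 : ∀ (m : ℕ) (i : ℤ), i < (m:ℤ)*(p:ℤ) → trunc (m+1) i = trunc m i := by
      intro m i h
      have hle : (m:ℤ)*(p:ℤ) ≤ ((m+1:ℕ):ℤ)*(p:ℤ) := by push_cast; nlinarith
      simp only [htr]
      by_cases h0 : 0 ≤ i
      · rw [if_pos ⟨h0, by omega⟩, if_pos ⟨h0, h⟩]
      · rw [if_neg (by omega), if_neg (by omega)]
    have F2 : ∀ (m : ℕ) (i : ℤ), 0 ≤ i → trunc (m+1) (i + (p:ℤ)) = trunc m i := by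
      intro m i h0
      have hc1 : ((m+1:ℕ):ℤ)*(p:ℤ) = (m:ℤ)*(p:ℤ) + (p:ℤ) := by push_cast; ring
      simp only [htr]
      by_cases h1 : i < (m:ℤ)*(p:ℤ)
      · rw [if_pos ⟨by omega, by omega⟩, if_pos ⟨h0, h1⟩, hcper]
      · rw [if_neg (by omega), if_neg (by omega)]
    have F3 : ∀ (m : ℕ) (i : ℤ), 0 ≤ i → i < (m:ℤ)*(p:ℤ) → trunc m i = c i := by
      intro m i h0 h1
      simp only [htr]
      rw [if_pos ⟨h0, h1⟩]
    -- telescope results, plain part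
    have T1 : ∀ m : ℕ, (p:ℤ) + n + b ≤ (m:ℤ)*(p:ℤ) →
        ∑ᶠ k : ℤ, φ (fun j => trunc (m+1) (k + ((j:ℕ):ℤ)))
        = (∑ᶠ k : ℤ, φ (fun j => trunc m (k + ((j:ℕ):ℤ))))
          + ∑ k ∈ Finset.Ico (0:ℤ) (p:ℤ), φ (fun j => c (k + ((j:ℕ):ℤ))) := by
      intro m hm
      have hm1 : (m:ℤ)*(p:ℤ) + (p:ℤ) = ((m+1:ℕ):ℤ)*(p:ℤ) := by push_cast; ring
      have := telescopeAux (fun k => φ (fun j => trunc m (k + ((j:ℕ):ℤ))))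
        (fun k => φ (fun j => trunc (m+1) (k + ((j:ℕ):ℤ))))
        (-(b:ℤ)) ((m:ℤ)*(p:ℤ)) (p:ℤ) p (by omega) (by omega)
        (by
          intro k hk
          rw [Function.mem_support] at hk
          rw [Set.mem_Ico]
          by_contra h
          exact hk (Wzero _ k (fun t ht1 ht2 => truncZero m t (by omega))))
        (by
          intro k hk
          rw [Function.mem_support] at hk
          rw [Set.mem_Ico]
          by_contra h
          exact hk (Wzero _ k (fun t ht1 ht2 => truncZero (m+1) t (by omega))))
        (by
          intro k hk
          exact Wcongr _ _ k (fun t ht1 ht2 => F1 m t (by omega)))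
        (by
          intro k hk
          have : ∀ j : Fin b, trunc (m+1) (k + (p:ℤ) + ((j:ℕ):ℤ)) = trunc m (k + ((j:ℕ):ℤ)) := by
            intro j
            have hj := j.isLt
            rw [show k + (p:ℤ) + ((j:ℕ):ℤ) = (k + ((j:ℕ):ℤ)) + (p:ℤ) by ring]
            exact F2 m _ (by omega)
          congr 1
          funext j
          exact this j)
      rw [show (p:ℤ) - (p:ℤ) = 0 by ring] at this
      rw [this]
      congr 1
      refine Finset.sum_congr rfl (fun k hk => ?_)
      rw [Finset.mem_Ico] at hk
      exact Wcongr _ _ k (fun t ht1 ht2 => F3 m t (by omega) (by omega))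
    -- telescope results, F part
    have T2 : ∀ m : ℕ, (p:ℤ) + n + b ≤ (m:ℤ)*(p:ℤ) →
        ∑ᶠ k : ℤ, φ (fun j => F (trunc (m+1)) (k + ((j:ℕ):ℤ)))
        = (∑ᶠ k : ℤ, φ (fun j => F (trunc m) (k + ((j:ℕ):ℤ))))
          + ∑ k ∈ Finset.Ico (0:ℤ) (p:ℤ), φ (fun j => F c (k + ((j:ℕ):ℤ))) := by
      intro m hm
      have hm1 : (m:ℤ)*(p:ℤ) + (p:ℤ) = ((m+1:ℕ):ℤ)*(p:ℤ) := by push_cast; ring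
      have := telescopeAux (fun k => φ (fun j => F (trunc m) (k + ((j:ℕ):ℤ))))
        (fun k => φ (fun j => F (trunc (m+1)) (k + ((j:ℕ):ℤ))))
        (-((b:ℤ)+n)) ((m:ℤ)*(p:ℤ)) (p:ℤ) p (by omega) (by omega)
        (by
          intro k hk
          rw [Function.mem_support] at hk
          rw [Set.mem_Ico]
          by_contra h
          exact hk (WFzero _ k (fun t ht1 ht2 => truncZero m t (by omega))))
        (by
          intro k hk
          rw [Function.mem_support] at hk
          rw [Set.mem_Ico]
          by_contra h
          exact hk (WFzero _ k (fun t ht1 ht2 => truncZero (m+1) t (by omega))))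
        (by
          intro k hk
          exact WFcongr _ _ k (fun t ht1 ht2 => F1 m t (by omega)))
        (by
          intro k hk
          congr 1
          funext j
          have hj := j.isLt
          rw [hF, hF]
          congr 1
          funext t
          have ht := t.isLt
          rw [show k + (p:ℤ) + ((j:ℕ):ℤ) + ((t:ℕ):ℤ)
            = (k + ((j:ℕ):ℤ) + ((t:ℕ):ℤ)) + (p:ℤ) by ring]
          exact F2 m _ (by omega))
      rw [show (p:ℤ) - (p:ℤ) = 0 by ring] at this
      rw [this]
      congr 1
      refine Finset.sum_congr rfl (fun k hk => ?_)
      rw [Finset.mem_Ico] at hk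
      exact WFcongr _ _ k (fun t ht1 ht2 => F3 m t (by omega) (by omega))
    -- choose M
    set M : ℕ := n + b + 1 with hM
    have hMbound : (p:ℤ) + n + b ≤ (M:ℤ)*(p:ℤ) := by
      have h1 : ((n:ℤ) + b) * 1 ≤ ((n:ℤ) + b) * (p:ℤ) := by
        apply mul_le_mul_of_nonneg_left (by omega) (by omega)
      push_cast [hM]
      nlinarith
    have hM1bound : (p:ℤ) + n + b ≤ ((M+1:ℕ):ℤ)*(p:ℤ) := by
      have : (M:ℤ)*(p:ℤ) ≤ ((M+1:ℕ):ℤ)*(p:ℤ) := by push_cast; nlinarith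
      omega
    have eM := hbfin (trunc M) (hfin M)
    have eM1 := hbfin (trunc (M+1)) (hfin (M+1))
    have t1 := T1 M hMbound
    have t2 := T2 M hMbound
    have goalIco : ∑ k ∈ Finset.Ico (0:ℤ) (p:ℤ), φ (fun j => F c (k + ((j:ℕ):ℤ)))
        = ∑ k ∈ Finset.Ico (0:ℤ) (p:ℤ), φ (fun j => c (k + ((j:ℕ):ℤ))) := by
      rw [t1] at eM1
      rw [t2] at eM1
      rw [eM] at eM1
      linarith
    have r1 : ∑ k ∈ Finset.range p, φ (fun j => F c ((k:ℤ) + ((j:ℕ):ℤ)))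
        = ∑ k ∈ Finset.Ico (0:ℤ) (p:ℤ), φ (fun j => F c (k + ((j:ℕ):ℤ))) :=
      sumRangeIco (fun k => φ (fun j => F c (k + ((j:ℕ):ℤ)))) p
    have r2 : ∑ k ∈ Finset.range p, φ (fun j => c ((k:ℤ) + ((j:ℕ):ℤ)))
        = ∑ k ∈ Finset.Ico (0:ℤ) (p:ℤ), φ (fun j => c (k + ((j:ℕ):ℤ))) :=
      sumRangeIco (fun k => φ (fun j => c (k + ((j:ℕ):ℤ)))) p
    rw [r1, r2, goalIco]
end

section
/- (Hattori–Takesue characterization.) Let Q = {0,…,q−1}, f : Q^n → Q, and F(c)_i = f(c_i,…,c_{i+n−1}) for c ∈ Q^ℤ. Fix b ≥ 1 and φ : Q^b → ℝ, and define φ_f : Q^{b+n−1} → ℝ by φ_f(y_0,…,y_{b+n−2}) = φ(f(y_0,…,y_{n−1}), f(y_1,…,y_n), …, f(y_{b−1},…,y_{b+n−2})). Let a ∈ Q be arbitrary. Then φ is an additive conserved quantity for F (i.e. for every p ≥ 1 and every p-periodic c ∈ Q^ℤ, ∑_{k=0}^{p−1} φ(F(c)_k,…,F(c)_{k+b−1})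 = ∑_{k=0}^{p−1} φ(c_k,…,c_{k+b−1})) if and only if for all x_0,…,x_{b+n−2} ∈ Q: φ_f(x_0,…,x_{b+n−2}) − φ(x_0,…,x_{b−1}) = ∑_{i=1}^{b+n−2} [ φ_f(a^i, x_1,…,x_{b+n−1−i}) − φ_f(a^i, x_0,…,x_{b+n−2−i}) ] + ∑_{i=1}^{b−1} [ φ(a^{b−i}, x_0,…,x_{i−1}) − φ(a^{b−i}, x_1,…,x_i) ], where a^i denotes i consecutive copies of a. -/
/-- Hattori–Takesue characterization of additive conserved quantities.
Vectors of length `b + n - 1` are encoded as functions `ℕ → Fin q` (only the coordinates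
`0, …, b + n - 2` are ever read).  `φf` is the map `φ_f`, `φ'` is `φ` read on the first
`b` coordinates, and `pad m y` is the word `a^m y_0 y_1 ⋯`. -/
theorem hattori_takesue
    (q n b : ℕ) [NeZero q] (hn : 1 ≤ n) (hb : 1 ≤ b)
    (f : (Fin n → Fin q) → Fin q)
    (φ : (Fin b → Fin q) → ℝ)
    (a : Fin q)
    (F : (ℤ → Fin q) → ℤ → Fin q)
    (hF : ∀ (c : ℤ → Fin q) (i : ℤ), F c i = f (fun t => c (i + ((t : ℕ) : ℤ))))
    (φf : (ℕ → Fin q) → ℝ)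
    (hφf : ∀ y, φf y = φ (fun k => f (fun t => y ((k : ℕ) + (t : ℕ)))))
    (φ' : (ℕ → Fin q) → ℝ)
    (hφ' : ∀ y, φ' y = φ (fun k => y (k : ℕ)))
    (pad : ℕ → (ℕ → Fin q) → ℕ → Fin q)
    (hpad : ∀ m y t, pad m y t = if t < m then a else y (t - m)) :
    (∀ p : ℕ, 1 ≤ p → ∀ c : ℤ → Fin q, (∀ i : ℤ, c (i + (p : ℤ)) = c i) →
        ∑ k ∈ Finset.range p, φ (fun j => F c ((k : ℤ) + ((j : ℕ) : ℤ))) =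
        ∑ k ∈ Finset.range p, φ (fun j => c ((k : ℤ) + ((j : ℕ) : ℤ)))) ↔
    (∀ x : ℕ → Fin q,
        φf x - φ' x =
          (∑ i ∈ Finset.Icc 1 (b + n - 2),
              (φf (pad i (fun t => x (t + 1))) - φf (pad i x))) +
          (∑ i ∈ Finset.Icc 1 (b - 1),
              (φ' (pad (b - i) x) - φ' (pad (b - i) (fun t => x (t + 1)))))) := by
  obtain ⟨L, hLdef⟩ : ∃ L, L = b + n - 1 := ⟨_, rfl⟩
  have hL : 1 ≤ L := by omega
  -- locality of φf and φ'
  have hφfx : ∀ y z : ℕ → Fin q, (∀ t, t < L → y t = z t) → φf y = φf z := by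
    intro y z h
    rw [hφf, hφf]
    congr 1; funext k; congr 1; funext t
    exact h _ (by have := k.isLt; have := t.isLt; omega)
  have hφ'x : ∀ y z : ℕ → Fin q, (∀ t, t < b → y t = z t) → φ' y = φ' z := by
    intro y z h
    rw [hφ', hφ']
    congr 1; funext k
    exact h _ k.isLt
  set G : (ℕ → Fin q) → ℝ := fun y => φf y - φ' y with hGdef
  have hGx : ∀ y z : ℕ → Fin q, (∀ t, t < L → y t = z t) → G y = G z := by
    intro y z h
    simp only [hGdef]
    rw [hφfx y z h, hφ'x y z (fun t ht => h t (by omega))]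
  -- rewriting the conserved-quantity sums in terms of G
  have sumG : ∀ (c : ℤ → Fin q) (p : ℕ),
      ∑ k ∈ Finset.range p, φ (fun j => F c ((k : ℤ) + ((j : ℕ) : ℤ))) -
      ∑ k ∈ Finset.range p, φ (fun j => c ((k : ℤ) + ((j : ℕ) : ℤ))) =
      ∑ k ∈ Finset.range p, G (fun t => c ((k : ℤ) + (t : ℤ))) := by
    intro c p
    rw [← Finset.sum_sub_distrib]
    refine Finset.sum_congr rfl fun k _ => ?_
    simp only [hGdef]
    have e1 : φ (fun j => F c ((k : ℤ) + ((j : ℕ) : ℤ))) =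
        φf (fun t => c ((k : ℤ) + (t : ℤ))) := by
      rw [hφf]
      congr 1; funext j
      rw [hF]
      congr 1; funext t
      congr 1
      push_cast
      ring
    have e2 : φ (fun j => c ((k : ℤ) + ((j : ℕ) : ℤ))) =
        φ' (fun t => c ((k : ℤ) + (t : ℤ))) := by
      rw [hφ']
    rw [e1, e2]
  constructor
  · -- forward direction
    intro hcons x
    set sx : ℕ → Fin q := fun t => x (t + 1) with hsx
    set u : ℕ → Fin q := fun t => if t < L then x t else a with hu
    set u' : ℕ → Fin q := fun t => u (t + 1) with hu'
    -- conservation for the constant-a configuration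
    have hGa : G (fun _ => a) = 0 := by
      have h1 := hcons 1 le_rfl (fun _ => a) (fun i => rfl)
      have h2 := sumG (fun _ => a) 1
      rw [h1, sub_self] at h2
      rw [Finset.sum_range_one] at h2
      exact h2.symm
    -- toNat/emod helpers
    have hmod1 : ∀ s : ℕ, s < 2 * L → (((s : ℤ)) % (((2 * L : ℕ) : ℤ))).toNat = s := by
      intro s hs
      rw [Int.emod_eq_of_lt (Int.natCast_nonneg s) (by exact_mod_cast hs)]
      exact Int.toNat_natCast s
    have hmod2 : ∀ s : ℕ, 2 * L ≤ s → s < 4 * L →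
        (((s : ℤ)) % (((2 * L : ℕ) : ℤ))).toNat = s - 2 * L := by
      intro s h1 h2
      have e : (s : ℤ) = ((s - 2 * L : ℕ) : ℤ) + ((2 * L : ℕ) : ℤ) := by push_cast; omega
      rw [e, Int.add_emod_right, hmod1 _ (by omega)]
    -- the key identity from conservation on a period-2L configuration
    have claim : ∀ w : ℕ → Fin q, (∀ s, L ≤ s → w s = a) →
        (∑ k ∈ Finset.range (L + 1), G (fun t => w (k + t))) +
          (∑ i ∈ Finset.Icc 1 (L - 1), G (pad i w)) = 0 := by
      intro w hw
      set c : ℤ → Fin q := fun i => w ((i % (((2 * L : ℕ) : ℤ))).toNat) with hc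
      have hper : ∀ i : ℤ, c (i + ((2 * L : ℕ) : ℤ)) = c i := by
        intro i
        simp only [hc]
        rw [Int.add_emod_right]
      have h0 := hcons (2 * L) (by omega) c hper
      have h1 := sumG c (2 * L)
      rw [h0, sub_self] at h1
      rw [show 2 * L = (L + 1) + (L - 1) by omega, Finset.sum_range_add] at h1
      have e1 : ∀ k ∈ Finset.range (L + 1),
          G (fun t => c ((k : ℤ) + (t : ℤ))) = G (fun t => w (k + t)) := by
        intro k hk
        rw [Finset.mem_range] at hk
        refine hGx _ _ fun t ht => ?_
        simp only [hc]
        have e : ((k : ℤ) + (t : ℤ)) = ((k + t : ℕ) : ℤ) := by push_cast; ring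
        rw [e, hmod1 _ (by omega)]
      have e2 : ∀ j ∈ Finset.range (L - 1),
          G (fun t => c (((L + 1 + j : ℕ) : ℤ) + (t : ℤ))) = G (pad (L - 1 - j) w) := by
        intro j hj
        rw [Finset.mem_range] at hj
        refine hGx _ _ fun t ht => ?_
        simp only [hc]
        have e : (((L + 1 + j : ℕ) : ℤ) + (t : ℤ)) = ((L + 1 + j + t : ℕ) : ℤ) := by
          push_cast; ring
        rw [e, hpad]
        by_cases hcase : t < L - 1 - j
        · rw [if_pos hcase, hmod1 _ (by omega)]
          exact hw _ (by omega)
        · rw [if_neg hcase, hmod2 _ (by omega) (by omega)]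
          congr 1
          omega
      rw [Finset.sum_congr rfl e1, Finset.sum_congr rfl e2] at h1
      have reidx : (∑ j ∈ Finset.range (L - 1), G (pad (L - 1 - j) w)) =
          ∑ i ∈ Finset.Icc 1 (L - 1), G (pad i w) := by
        refine Finset.sum_nbij' (fun j => L - 1 - j) (fun i => L - 1 - i) ?_ ?_ ?_ ?_ ?_
        · intro j hj
          simp only [Finset.mem_range] at hj
          simp only [Finset.mem_Icc]
          omega
        · intro i hi
          simp only [Finset.mem_Icc] at hi
          simp only [Finset.mem_range]
          omega
        · intro j hj
          simp only [Finset.mem_range] at hj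
          show L - 1 - (L - 1 - j) = j
          omega
        · intro i hi
          simp only [Finset.mem_Icc] at hi
          show L - 1 - (L - 1 - i) = i
          omega
        · intro j hj
          rfl
      rw [reidx] at h1
      linarith [h1]
    -- apply the claim to u and u'
    have hu_tail : ∀ s, L ≤ s → u s = a := by
      intro s hs
      simp only [hu]
      rw [if_neg (by omega)]
    have hu'_tail : ∀ s, L ≤ s → u' s = a := by
      intro s hs
      simp only [hu']
      exact hu_tail _ (by omega)
    have E1 := claim u hu_tail
    have E2 := claim u' hu'_tail
    -- the shifted windows of u' are windows of u
    have eshift : (∑ k ∈ Finset.range (L + 1), G (fun t => u' (k + t))) =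
        ∑ k ∈ Finset.range (L + 1), G (fun t => u ((k + 1) + t)) := by
      refine Finset.sum_congr rfl fun k _ => ?_
      congr 1; funext t
      simp only [hu']
      congr 1
      omega
    rw [eshift] at E2
    -- telescoping
    have tel : (∑ k ∈ Finset.range (L + 1),
          ((fun m => G (fun t => u (m + t))) k - (fun m => G (fun t => u (m + t))) (k + 1))) =
        G (fun t => u (0 + t)) - G (fun t => u ((L + 1) + t)) :=
      Finset.sum_range_sub' (fun m => G (fun t => u (m + t))) (L + 1)
    rw [Finset.sum_sub_distrib] at tel
    have hv0 : (fun t => u (0 + t)) = u := by funext t; rw [Nat.zero_add]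
    have hvL : G (fun t => u ((L + 1) + t)) = 0 := by
      rw [show (fun t => u ((L + 1) + t)) = (fun _ => a) from
        funext fun t => hu_tail _ (by omega)]
      exact hGa
    rw [hv0, hvL, sub_zero] at tel
    -- combine E1, E2, tel
    have key : G u = ∑ i ∈ Finset.Icc 1 (L - 1), (G (pad i u') - G (pad i u)) := by
      rw [Finset.sum_sub_distrib]
      linarith [E1, E2, tel]
    -- locality: replace u by x, u' by sx
    have hGu : G u = G x := by
      refine hGx _ _ fun t ht => ?_
      simp only [hu]
      rw [if_pos ht]
    have hGpadu : ∀ i ∈ Finset.Icc 1 (L - 1), G (pad i u) = G (pad i x) := by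
      intro i hi
      refine hGx _ _ fun t ht => ?_
      rw [hpad, hpad]
      by_cases hc : t < i
      · rw [if_pos hc, if_pos hc]
      · rw [if_neg hc, if_neg hc]
        simp only [hu]
        rw [if_pos (by omega)]
    have hGpadu' : ∀ i ∈ Finset.Icc 1 (L - 1), G (pad i u') = G (pad i sx) := by
      intro i hi
      simp only [Finset.mem_Icc] at hi
      refine hGx _ _ fun t ht => ?_
      rw [hpad, hpad]
      by_cases hc : t < i
      · rw [if_pos hc, if_pos hc]
      · rw [if_neg hc, if_neg hc]
        simp only [hu', hu, hsx]
        rw [if_pos (by omega)]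
    have key2 : G x = ∑ i ∈ Finset.Icc 1 (L - 1), (G (pad i sx) - G (pad i x)) := by
      rw [← hGu, key]
      exact Finset.sum_congr rfl fun i hi => by rw [hGpadu i hi, hGpadu' i hi]
    -- split G into φf and φ' parts
    have split : (∑ i ∈ Finset.Icc 1 (L - 1), (G (pad i sx) - G (pad i x))) =
        (∑ i ∈ Finset.Icc 1 (L - 1), (φf (pad i sx) - φf (pad i x))) -
        (∑ i ∈ Finset.Icc 1 (L - 1), (φ' (pad i sx) - φ' (pad i x))) := by
      rw [← Finset.sum_sub_distrib]
      refine Finset.sum_congr rfl fun i _ => ?_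
      simp only [hGdef]
      ring
    -- the φ' sum reduces to Icc 1 (b-1)
    have hsub : Finset.Icc 1 (b - 1) ⊆ Finset.Icc 1 (L - 1) :=
      Finset.Icc_subset_Icc_right (by omega)
    have red : (∑ i ∈ Finset.Icc 1 (L - 1), (φ' (pad i sx) - φ' (pad i x))) =
        ∑ i ∈ Finset.Icc 1 (b - 1), (φ' (pad i sx) - φ' (pad i x)) := by
      refine (Finset.sum_subset hsub fun i hi hni => ?_).symm
      simp only [Finset.mem_Icc] at hi hni
      have hib : b ≤ i := by omega
      have e : φ' (pad i sx) = φ' (pad i x) := by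
        refine hφ'x _ _ fun t ht => ?_
        rw [hpad, hpad, if_pos (by omega), if_pos (by omega)]
      rw [e, sub_self]
    -- reindex i ↦ b - i
    have reindex : (∑ i ∈ Finset.Icc 1 (b - 1), (φ' (pad i sx) - φ' (pad i x))) =
        ∑ i ∈ Finset.Icc 1 (b - 1), (φ' (pad (b - i) sx) - φ' (pad (b - i) x)) := by
      refine Finset.sum_nbij' (fun i => b - i) (fun i => b - i) ?_ ?_ ?_ ?_ ?_
      · intro i hi
        simp only [Finset.mem_Icc] at hi ⊢
        omega
      · intro i hi
        simp only [Finset.mem_Icc] at hi ⊢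
        omega
      · intro i hi
        simp only [Finset.mem_Icc] at hi
        show b - (b - i) = i
        omega
      · intro i hi
        simp only [Finset.mem_Icc] at hi
        show b - (b - i) = i
        omega
      · intro i hi
        simp only [Finset.mem_Icc] at hi
        show φ' (pad i sx) - φ' (pad i x) =
          φ' (pad (b - (b - i)) sx) - φ' (pad (b - (b - i)) x)
        rw [show b - (b - i) = i by omega]
    -- index set of the φf sum
    have hIcc : Finset.Icc 1 (L - 1) = Finset.Icc 1 (b + n - 2) := by
      congr 1
      omega
    have e3 : (∑ i ∈ Finset.Icc 1 (b - 1), (φ' (pad (b - i) x) - φ' (pad (b - i) sx))) =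
        -(∑ i ∈ Finset.Icc 1 (b - 1), (φ' (pad (b - i) sx) - φ' (pad (b - i) x))) := by
      rw [← Finset.sum_neg_distrib]
      exact Finset.sum_congr rfl fun i _ => by ring
    have hGxval : G x = φf x - φ' x := rfl
    rw [e3, ← reindex, ← red, ← hIcc, ← hGxval, key2, split]
    ring
  · -- backward direction
    intro hid p hp c hper
    set H : (ℕ → Fin q) → ℝ := fun y =>
      (∑ i ∈ Finset.Icc 1 (b + n - 2), φf (pad i y)) -
        ∑ i ∈ Finset.Icc 1 (b - 1), φ' (pad (b - i) y) with hH
    have hkey : ∀ y : ℕ → Fin q, G y = H (fun t => y (t + 1)) - H y := by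
      intro y
      have h := hid y
      rw [Finset.sum_sub_distrib, Finset.sum_sub_distrib] at h
      simp only [hGdef, hH]
      linarith [h]
    have step : ∀ k : ℕ, G (fun t => c ((k : ℤ) + (t : ℤ))) =
        (fun m : ℕ => H (fun t => c ((m : ℤ) + (t : ℤ)))) (k + 1) -
        (fun m : ℕ => H (fun t => c ((m : ℤ) + (t : ℤ)))) k := by
      intro k
      rw [hkey]
      congr 2
      funext t
      congr 1
      push_cast
      ring
    have tel : (∑ k ∈ Finset.range p, G (fun t => c ((k : ℤ) + (t : ℤ)))) =
        H (fun t => c ((p : ℤ) + (t : ℤ))) - H (fun t => c (((0 : ℕ) : ℤ) + (t : ℤ))) := by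
      rw [Finset.sum_congr rfl fun k _ => step k]
      exact Finset.sum_range_sub (fun m : ℕ => H (fun t => c ((m : ℤ) + (t : ℤ)))) p
    have hper' : (fun t : ℕ => c ((p : ℤ) + (t : ℤ))) =
        fun t : ℕ => c (((0 : ℕ) : ℤ) + (t : ℤ)) := by
      funext t
      rw [add_comm ((p : ℕ) : ℤ) (t : ℤ), hper (t : ℤ)]
      norm_num
    rw [hper', sub_self] at tel
    have h := sumG c p
    rw [tel] at h
    linarith [h]
end

section
/- (Boccara–Fukś characterization.) Let Q = {0,…,q−1} and f : Q^n → Q. Then f is conservative (f ∈ CA^0(q,n)) if and only if for all (x_1,…,x_n) ∈ Q^n: f(x_1,…,x_n) = x_1 + ∑_{k=1}^{n−1} [ f(0^{n−k}, x_2,…,x_{k+1}) − f(0^{n−k}, x_1,…,x_k) ], where 0^{n−k} denotes n−k consecutive zeros. -/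
/-- A local rule `f ∈ CA(q,n)` is conservative (`f ∈ CA^0(q,n)`) if for every period
`p ≥ 1` and every `p`-periodic (circular) word `w`, the sum of the images over one period
equals the sum of the states over one period. -/
def Conserves (q n : ℕ) (f : (Fin n → Fin q) → Fin q) : Prop :=
  ∀ p : ℕ, 1 ≤ p → ∀ w : ℤ → Fin q, (∀ i : ℤ, w (i + (p : ℤ)) = w i) →
    ∑ k ∈ Finset.range p, ((f (fun t => w ((k : ℤ) + ((t : ℕ) : ℤ)))) : ℤ) =
    ∑ k ∈ Finset.range p, ((w (k : ℤ)) : ℤ)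

/-- A local rule `f ∈ CA(q,n)` is non-increasing (`f ∈ CA^-(q,n)`) if for every period
`p ≥ 1` and every `p`-periodic (circular) word `w`, the sum of the images over one period
is at most the sum of the states over one period. -/
def NonIncreasing (q n : ℕ) (f : (Fin n → Fin q) → Fin q) : Prop :=
  ∀ p : ℕ, 1 ≤ p → ∀ w : ℤ → Fin q, (∀ i : ℤ, w (i + (p : ℤ)) = w i) →
    ∑ k ∈ Finset.range p, ((f (fun t => w ((k : ℤ) + ((t : ℕ) : ℤ)))) : ℤ) ≤
    ∑ k ∈ Finset.range p, ((w (k : ℤ)) : ℤ)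

/-- The window `x_j x_{j+1} ⋯ x_{n-1} 0^j` (read on the first `n` coordinates). -/
def bfSuf (q n : ℕ) [NeZero q] (x : ℕ → Fin q) (j : ℕ) : Fin n → Fin q :=
  fun t => if (t : ℕ) < n - j then x (j + (t : ℕ)) else 0

/-- The window `0^{n-j} x_0 ⋯ x_{j-1}`. -/
def bfPre (q n : ℕ) [NeZero q] (x : ℕ → Fin q) (j : ℕ) : Fin n → Fin q :=
  fun t => if (t : ℕ) < n - j then 0 else x ((t : ℕ) - (n - j))

lemma bf_f0 {q n : ℕ} [NeZero q] {f : (Fin n → Fin q) → Fin q}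
    (hC : Conserves q n f) : ((f (fun _ => 0)) : ℤ) = 0 := by
  have h := hC 1 le_rfl (fun _ => 0) (fun _ => rfl)
  simpa using h

lemma bfE {q n : ℕ} [NeZero q] {f : (Fin n → Fin q) → Fin q}
    (hn : 1 ≤ n) (hC : Conserves q n f) (x : ℕ → Fin q) :
    (∑ j ∈ Finset.range n, ((f (bfSuf q n x j)) : ℤ)) +
      ∑ j ∈ Finset.range (n - 1), ((f (bfPre q n x (j + 1))) : ℤ) =
    ∑ k ∈ Finset.range n, ((x k : ℤ)) := by
  set p := 2 * n - 1 with hpdef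
  set w : ℤ → Fin q := fun i =>
    if ((i % (p : ℤ)).toNat) < n then x ((i % (p : ℤ)).toNat) else 0 with hwdef
  have hper : ∀ i : ℤ, w (i + (p : ℤ)) = w i := by
    intro i
    have h : (i + (p : ℤ)) % (p : ℤ) = i % (p : ℤ) := by
      have := Int.add_mul_emod_self_left (a := i) (b := (p : ℤ)) (c := 1)
      simpa using this
    simp only [hwdef, h]
  have hw : ∀ s : ℕ, w ((s : ℕ) : ℤ) = if s % p < n then x (s % p) else 0 := by
    intro s
    have h1 : ((s : ℤ) % (p : ℤ)) = ((s % p : ℕ) : ℤ) := (Int.natCast_mod s p).symm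
    simp only [hwdef, h1, Int.toNat_natCast]
  have hE := hC p (by omega) w hper
  -- the right-hand side
  have hR : ∑ k ∈ Finset.range p, ((w (k : ℤ)) : ℤ) = ∑ k ∈ Finset.range n, ((x k : ℤ)) := by
    have h1 : ∀ k ∈ Finset.range p, ((w (k : ℤ)) : ℤ) = (if k < n then ((x k : ℤ)) else 0) := by
      intro k hk
      simp only [Finset.mem_range] at hk
      rw [hw k, Nat.mod_eq_of_lt hk]
      split_ifs <;> simp
    rw [Finset.sum_congr rfl h1]
    rw [← Finset.sum_subset (Finset.range_subset_range.2 (show n ≤ p by omega))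
      (by intro k _ hk; simp only [Finset.mem_range, not_lt] at hk; rw [if_neg (by omega)])]
    exact Finset.sum_congr rfl fun k hk => by
      simp only [Finset.mem_range] at hk; rw [if_pos hk]
  -- the windows
  have hwin : ∀ k, k < p → ((f (fun t => w ((k : ℤ) + ((t : ℕ) : ℤ)))) : ℤ)
      = if k < n then ((f (bfSuf q n x k)) : ℤ) else ((f (bfPre q n x (k - (n - 1)))) : ℤ) := by
    intro k hk
    by_cases hkn : k < n
    · rw [if_pos hkn]
      have hfun : (fun t : Fin n => w ((k : ℤ) + ((t : ℕ) : ℤ))) = bfSuf q n x k := by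
        funext t
        have ht : (t : ℕ) < n := t.isLt
        rw [show ((k : ℤ) + ((t : ℕ) : ℤ)) = (((k + (t : ℕ) : ℕ)) : ℤ) by push_cast; ring, hw]
        rw [Nat.mod_eq_of_lt (by omega)]
        simp only [bfSuf]
        split_ifs <;> first | rfl | (exfalso; omega)
      rw [hfun]
    · rw [if_neg hkn]
      have hfun : (fun t : Fin n => w ((k : ℤ) + ((t : ℕ) : ℤ))) = bfPre q n x (k - (n - 1)) := by
        funext t
        have ht : (t : ℕ) < n := t.isLt
        rw [show ((k : ℤ) + ((t : ℕ) : ℤ)) = (((k + (t : ℕ) : ℕ)) : ℤ) by push_cast; ring, hw]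
        by_cases hlt : k + (t : ℕ) < p
        · rw [Nat.mod_eq_of_lt hlt]
          simp only [bfPre]
          rw [if_neg (by omega), if_pos (by omega)]
        · have hmod : (k + (t : ℕ)) % p = k + (t : ℕ) - p := by
            rw [Nat.mod_eq_sub_mod (by omega), Nat.mod_eq_of_lt (by omega)]
          rw [hmod]
          simp only [bfPre]
          rw [if_pos (by omega), if_neg (by omega)]
          have harg : k + (t : ℕ) - p = (t : ℕ) - (n - (k - (n - 1))) := by omega
          rw [harg]
      rw [hfun]
  -- the left-hand side
  have hL : ∑ k ∈ Finset.range p, ((f (fun t => w ((k : ℤ) + ((t : ℕ) : ℤ)))) : ℤ)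
      = (∑ j ∈ Finset.range n, ((f (bfSuf q n x j)) : ℤ)) +
        ∑ j ∈ Finset.range (n - 1), ((f (bfPre q n x (j + 1))) : ℤ) := by
    have h1 : ∀ k ∈ Finset.range p, ((f (fun t => w ((k : ℤ) + ((t : ℕ) : ℤ)))) : ℤ)
        = if k < n then ((f (bfSuf q n x k)) : ℤ) else ((f (bfPre q n x (k - (n - 1)))) : ℤ) := by
      intro k hk
      exact hwin k (Finset.mem_range.1 hk)
    rw [Finset.sum_congr rfl h1]
    rw [show Finset.range p = Finset.range (n + (n - 1)) by congr 1; omega]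
    rw [Finset.sum_range_add]
    congr 1
    · exact Finset.sum_congr rfl fun k hk => by
        rw [if_pos (Finset.mem_range.1 hk)]
    · refine Finset.sum_congr rfl fun j hj => ?_
      simp only [Finset.mem_range] at hj
      rw [if_neg (by omega), show n + j - (n - 1) = j + 1 by omega]
  rw [hL, hR] at hE
  exact hE

/-- Boccara–Fukś characterization of conservative rules.
Words of length `n` are encoded as functions `ℕ → Fin q` (only coordinates `0,…,n-1` are
read); `g` is `f` read on the first `n` coordinates, and `pad m y` is the word
`0^m y_0 y_1 ⋯`. -/
theorem boccara_fuks
    (q n : ℕ) [NeZero q] (hn : 1 ≤ n)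
    (f : (Fin n → Fin q) → Fin q)
    (g : (ℕ → Fin q) → Fin q) (hg : ∀ y, g y = f (fun t => y (t : ℕ)))
    (pad : ℕ → (ℕ → Fin q) → ℕ → Fin q)
    (hpad : ∀ m y t, pad m y t = if t < m then 0 else y (t - m)) :
    Conserves q n f ↔
      ∀ x : ℕ → Fin q,
        ((g x : ℤ)) = ((x 0 : ℤ)) +
          ∑ k ∈ Finset.Icc 1 (n - 1),
            (((g (pad (n - k) (fun t => x (t + 1)))) : ℤ) - ((g (pad (n - k) x)) : ℤ)) := by
  have hgp : ∀ (y : ℕ → Fin q) (k : ℕ), g (pad (n - k) y) = f (bfPre q n y k) := by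
    intro y k
    rw [hg]
    congr 1
    funext t
    rw [hpad]
    rfl
  have hIcc : ∀ F : ℕ → ℤ, ∑ k ∈ Finset.Icc 1 (n - 1), F k
      = ∑ j ∈ Finset.range (n - 1), F (j + 1) := by
    intro F
    rw [show Finset.Icc 1 (n - 1) = Finset.Ico 1 n by
      rw [← Finset.Ico_add_one_right_eq_Icc]; congr 1; omega]
    rw [Finset.sum_Ico_eq_sum_range]
    exact Finset.sum_congr (by congr 1) fun j _ => by rw [Nat.add_comm]
  constructor
  · -- forward direction
    intro hC x
    set x' : ℕ → Fin q := fun i => if i + 1 < n then x (i + 1) else 0 with hx'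
    have E1 := bfE hn hC x
    have E2 := bfE hn hC x'
    have hf0 := bf_f0 hC
    have hS : ∀ j, bfSuf q n x' j = bfSuf q n x (j + 1) := by
      intro j
      funext t
      have ht : (t : ℕ) < n := t.isLt
      simp only [bfSuf, hx']
      split_ifs <;> first | rfl | (congr 1; omega) | (exfalso; omega)
    have hSn : bfSuf q n x n = (fun _ => 0) := by
      funext t
      simp only [bfSuf]
      rw [if_neg (by omega)]
    have hP2 : ∀ j, j + 1 ≤ n - 1 →
        bfPre q n x' (j + 1) = bfPre q n (fun i => x (i + 1)) (j + 1) := by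
      intro j hj
      funext t
      have ht : (t : ℕ) < n := t.isLt
      simp only [bfPre, hx']
      split_ifs <;> first | rfl | (congr 1; omega) | (exfalso; omega)
    have hgx : g x = f (bfSuf q n x 0) := by
      rw [hg]
      congr 1
      funext t
      have ht : (t : ℕ) < n := t.isLt
      simp only [bfSuf]
      rw [if_pos (by omega), Nat.zero_add]
    -- split off first/last terms of the suffix sums
    have e1 : ∑ j ∈ Finset.range n, ((f (bfSuf q n x j)) : ℤ)
        = ((f (bfSuf q n x 0)) : ℤ) +
          ∑ j ∈ Finset.range (n - 1), ((f (bfSuf q n x (j + 1))) : ℤ) := by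
      have h := Finset.sum_range_succ' (fun j => ((f (bfSuf q n x j)) : ℤ)) (n - 1)
      rw [show n - 1 + 1 = n by omega] at h
      rw [h]
      ring
    have e2 : ∑ j ∈ Finset.range n, ((f (bfSuf q n x' j)) : ℤ)
        = ∑ j ∈ Finset.range (n - 1), ((f (bfSuf q n x (j + 1))) : ℤ) := by
      have hc : ∑ j ∈ Finset.range n, ((f (bfSuf q n x' j)) : ℤ)
          = ∑ j ∈ Finset.range n, ((f (bfSuf q n x (j + 1))) : ℤ) :=
        Finset.sum_congr rfl fun j _ => by rw [hS j]
      have h := Finset.sum_range_succ (fun j => ((f (bfSuf q n x (j + 1))) : ℤ)) (n - 1)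
      rw [show n - 1 + 1 = n by omega] at h
      rw [hc, h, hSn, hf0, add_zero]
    have e3 : ∑ k ∈ Finset.range n, ((x' k : ℤ))
        = ∑ k ∈ Finset.range (n - 1), ((x (k + 1) : ℤ)) := by
      have h := Finset.sum_range_succ (fun k => ((x' k : ℤ))) (n - 1)
      rw [show n - 1 + 1 = n by omega] at h
      rw [h, show x' (n - 1) = 0 by simp only [hx']; rw [if_neg (by omega)]]
      have hc : ∑ k ∈ Finset.range (n - 1), ((x' k : ℤ))
          = ∑ k ∈ Finset.range (n - 1), ((x (k + 1) : ℤ)) := by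
        refine Finset.sum_congr rfl fun k hk => ?_
        simp only [Finset.mem_range] at hk
        simp only [hx']
        rw [if_pos (by omega)]
      rw [hc]
      simp
    have e4 : ∑ k ∈ Finset.range n, ((x k : ℤ))
        = ((x 0 : ℤ)) + ∑ k ∈ Finset.range (n - 1), ((x (k + 1) : ℤ)) := by
      have h := Finset.sum_range_succ' (fun k => ((x k : ℤ))) (n - 1)
      rw [show n - 1 + 1 = n by omega] at h
      rw [h]
      ring
    have e5 : ∑ j ∈ Finset.range (n - 1), ((f (bfPre q n x' (j + 1))) : ℤ)
        = ∑ j ∈ Finset.range (n - 1), ((f (bfPre q n (fun i => x (i + 1)) (j + 1))) : ℤ) := by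
      refine Finset.sum_congr rfl fun j hj => ?_
      simp only [Finset.mem_range] at hj
      rw [hP2 j (by omega)]
    -- final assembly
    rw [hgx, hIcc]
    have hterm : ∀ j ∈ Finset.range (n - 1),
        (((g (pad (n - (j + 1)) (fun t => x (t + 1)))) : ℤ) - ((g (pad (n - (j + 1)) x)) : ℤ))
        = ((f (bfPre q n (fun i => x (i + 1)) (j + 1))) : ℤ) - ((f (bfPre q n x (j + 1))) : ℤ) := by
      intro j _
      rw [hgp, hgp]
    rw [Finset.sum_congr rfl hterm, Finset.sum_sub_distrib]
    rw [e1, e4] at E1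
    rw [e2, e3, e5] at E2
    linarith
  · -- reverse direction
    intro hF p hp w hw
    set X : ℕ → ℕ → Fin q := fun a i => w ((a : ℤ) + ((i : ℕ) : ℤ)) with hX
    have key : ∀ a : ℕ, ((g (X a)) : ℤ) = ((w (a : ℤ)) : ℤ) +
        ∑ k' ∈ Finset.Icc 1 (n - 1),
          (((g (pad (n - k') (X (a + 1)))) : ℤ) - ((g (pad (n - k') (X a))) : ℤ)) := by
      intro a
      have h := hF (X a)
      have h0 : X a 0 = w (a : ℤ) := by
        simp only [hX]
        norm_num
      have h1 : (fun t => X a (t + 1)) = X (a + 1) := by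
        funext i
        simp only [hX]
        congr 1
        push_cast
        ring
      rw [h0, h1] at h
      exact h
    have hX0 : X p = X 0 := by
      funext i
      simp only [hX]
      rw [add_comm, hw]
      norm_num
    calc ∑ k ∈ Finset.range p, ((f (fun t => w ((k : ℤ) + ((t : ℕ) : ℤ)))) : ℤ)
        = ∑ k ∈ Finset.range p, ((g (X k)) : ℤ) := by
          refine Finset.sum_congr rfl fun k _ => ?_
          rw [hg]
      _ = ∑ k ∈ Finset.range p, (((w (k : ℤ)) : ℤ) +
            ∑ k' ∈ Finset.Icc 1 (n - 1),
              (((g (pad (n - k') (X (k + 1)))) : ℤ) - ((g (pad (n - k') (X k))) : ℤ))) :=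
          Finset.sum_congr rfl fun k _ => key k
      _ = (∑ k ∈ Finset.range p, ((w (k : ℤ)) : ℤ)) +
            ∑ k ∈ Finset.range p, ∑ k' ∈ Finset.Icc 1 (n - 1),
              (((g (pad (n - k') (X (k + 1)))) : ℤ) - ((g (pad (n - k') (X k))) : ℤ)) :=
          Finset.sum_add_distrib
      _ = ∑ k ∈ Finset.range p, ((w (k : ℤ)) : ℤ) := by
          have hz : ∑ k ∈ Finset.range p, ∑ k' ∈ Finset.Icc 1 (n - 1),
              (((g (pad (n - k') (X (k + 1)))) : ℤ) - ((g (pad (n - k') (X k))) : ℤ)) = 0 := by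
            rw [Finset.sum_comm]
            refine Finset.sum_eq_zero fun k' _ => ?_
            have h := Finset.sum_range_sub (fun a => ((g (pad (n - k') (X a))) : ℤ)) p
            rw [h, hX0, sub_self]
          rw [hz, add_zero]
end

section
/- Let Q = {0,1,2} and define f : Q^2 → Q by f(x_1,x_2) = 2 if x_1 = 2; f(x_1,x_2) = 1 if x_1 ∈ {0,1} and x_2 = 1; and f(x_1,x_2) = 0 otherwise. Then f is non-increasing (f ∈ CA^-(3,2)), but there is no conservative rule h ∈ CA^0(3,2) that dominates f (i.e. no conservative h : Q^2 → Q with f(w) ≤ h(w) for all w ∈ Q^2). -/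
/-- left charge -/
def cL : Fin 3 → ℤ := fun x => if x = 2 then 2 else 0

/-- right charge -/
def cR : Fin 3 → ℤ := fun x => if x = 1 then 1 else 0

lemma key_ineq (a b : Fin 3) :
    (((if a = 2 then (2 : Fin 3) else if b = 1 then 1 else 0) : Fin 3) : ℤ) ≤ cL a + cR b := by
  fin_cases a <;> fin_cases b <;> simp [cL, cR]

lemma cd_le (x : Fin 3) : cL x + cR x ≤ (x : ℤ) := by
  fin_cases x <;> simp [cL, cR]

lemma shift_sum (p : ℕ) (g : ℤ → ℤ) (hg : g (p : ℤ) = g 0) :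
    ∑ k ∈ Finset.range p, g ((k : ℤ) + 1) = ∑ k ∈ Finset.range p, g (k : ℤ) := by
  cases p with
  | zero => simp
  | succ n =>
    rw [Finset.sum_range_succ, Finset.sum_range_succ' (fun k => g (k : ℤ)) n]
    have hg' : g ((n : ℤ) + 1) = g 0 := by push_cast at hg; exact hg
    rw [hg']
    have hcongr : ∀ k ∈ Finset.range n, g ((k : ℤ) + 1) = g (((k + 1 : ℕ)) : ℤ) := by
      intro k _; push_cast; ring_nf
    rw [Finset.sum_congr rfl hcongr]
    norm_num

/-- the rule `f(x₁,x₂) = 2` if `x₁ = 2`, `= 1` if `x₁ ∈ {0,1}` and `x₂ = 1`,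
`= 0` otherwise, is non-increasing but is dominated by no conservative rule. -/
theorem nonincreasing_not_dominated
    (f : (Fin 2 → Fin 3) → Fin 3)
    (hf : ∀ x : Fin 2 → Fin 3,
      f x = if x 0 = 2 then 2 else if x 1 = 1 then 1 else 0) :
    NonIncreasing 3 2 f ∧
      ¬ ∃ h : (Fin 2 → Fin 3) → Fin 3,
          Conserves 3 2 h ∧ ∀ w : Fin 2 → Fin 3, f w ≤ h w := by
  constructor
  · intro p hp w hw
    have step : ∀ k : ℕ, ((f (fun t => w ((k : ℤ) + ((t : ℕ) : ℤ)))) : ℤ) ≤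
        cL (w (k : ℤ)) + cR (w ((k : ℤ) + 1)) := by
      intro k
      rw [hf]
      have e0 : (k : ℤ) + ((((0 : Fin 2) : ℕ)) : ℤ) = (k : ℤ) := by norm_num
      have e1 : (k : ℤ) + ((((1 : Fin 2) : ℕ)) : ℤ) = (k : ℤ) + 1 := by norm_num
      rw [e0, e1]
      exact key_ineq _ _
    calc ∑ k ∈ Finset.range p, ((f (fun t => w ((k : ℤ) + ((t : ℕ) : ℤ)))) : ℤ)
        ≤ ∑ k ∈ Finset.range p, (cL (w (k : ℤ)) + cR (w ((k : ℤ) + 1))) :=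
          Finset.sum_le_sum (fun k _ => step k)
      _ = ∑ k ∈ Finset.range p, cL (w (k : ℤ)) + ∑ k ∈ Finset.range p, cR (w ((k : ℤ) + 1)) :=
          Finset.sum_add_distrib
      _ = ∑ k ∈ Finset.range p, cL (w (k : ℤ)) + ∑ k ∈ Finset.range p, cR (w (k : ℤ)) := by
          have hgp : cR (w ((p : ℕ) : ℤ)) = cR (w ((0 : ℕ) : ℤ)) := by
            rw [show (((p : ℕ)) : ℤ) = 0 + (p : ℤ) by ring, hw 0]
            norm_num
          exact congrArg₂ (· + ·) rfl (shift_sum p (fun i => cR (w i)) hgp)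
      _ = ∑ k ∈ Finset.range p, (cL (w (k : ℤ)) + cR (w (k : ℤ))) := Finset.sum_add_distrib.symm
      _ ≤ ∑ k ∈ Finset.range p, ((w (k : ℤ)) : ℤ) := Finset.sum_le_sum (fun k _ => cd_le _)
  · rintro ⟨h, hc, hd⟩
    -- values forced by domination
    have hval : ∀ x : Fin 2 → Fin 3, x 0 = 2 → h x = 2 := by
      intro x hx
      have hle := hd x
      rw [hf, if_pos hx] at hle
      have h2 : h x ≤ 2 := Fin.le_last (h x)
      exact le_antisymm h2 hle
    have hf01 : f ![0, 1] = 1 := by rw [hf]; decide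
    have h01 : (1 : Fin 3) ≤ h ![0, 1] := by
      have := hd ![0, 1]; rwa [hf01] at this
    have h01' : (1 : ℤ) ≤ ((h ![0, 1] : Fin 3) : ℤ) := by
      rw [Fin.le_def] at h01
      have hv1 : ((1 : Fin 3)).val = 1 := rfl
      rw [hv1] at h01
      omega
    -- period 2 word 1,2
    set w2 : ℤ → Fin 3 := fun i => if i % 2 = 0 then 1 else 2 with hw2
    have hper2 : ∀ i : ℤ, w2 (i + ((2 : ℕ) : ℤ)) = w2 i := by
      intro i
      simp only [hw2]
      have : (i + ((2 : ℕ) : ℤ)) % 2 = i % 2 := by omega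
      rw [this]
    have e2 := hc 2 (by norm_num) w2 hper2
    have a12 : (fun t : Fin 2 => w2 (((0 : ℕ) : ℤ) + ((t : ℕ) : ℤ))) = ![1, 2] := by
      funext t; fin_cases t <;> norm_num [hw2]
    have a21 : (fun t : Fin 2 => w2 (((1 : ℕ) : ℤ) + ((t : ℕ) : ℤ))) = ![2, 1] := by
      funext t; fin_cases t <;> norm_num [hw2]
    simp only [Finset.sum_range_succ, Finset.sum_range_zero] at e2
    rw [a12, a21] at e2
    have w20 : w2 ((0 : ℕ) : ℤ) = 1 := by norm_num [hw2]
    have w21 : w2 ((1 : ℕ) : ℤ) = 2 := by norm_num [hw2]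
    rw [w20, w21] at e2
    have hv21 : h ![2, 1] = 2 := hval _ rfl
    rw [hv21] at e2
    have h12 : ((h ![1, 2] : Fin 3) : ℤ) = 1 := by
      norm_num at e2; omega
    -- period 3 word 0,1,2
    set w3 : ℤ → Fin 3 := fun i => if i % 3 = 0 then 0 else if i % 3 = 1 then 1 else 2 with hw3
    have hper3 : ∀ i : ℤ, w3 (i + ((3 : ℕ) : ℤ)) = w3 i := by
      intro i
      simp only [hw3]
      have h3 : (i + ((3 : ℕ) : ℤ)) % 3 = i % 3 := by omega
      rw [h3]
    have e3 := hc 3 (by norm_num) w3 hper3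
    have b01 : (fun t : Fin 2 => w3 (((0 : ℕ) : ℤ) + ((t : ℕ) : ℤ))) = ![0, 1] := by
      funext t; fin_cases t <;> norm_num [hw3]
    have b12 : (fun t : Fin 2 => w3 (((1 : ℕ) : ℤ) + ((t : ℕ) : ℤ))) = ![1, 2] := by
      funext t; fin_cases t <;> norm_num [hw3]
    have b20 : (fun t : Fin 2 => w3 (((2 : ℕ) : ℤ) + ((t : ℕ) : ℤ))) = ![2, 0] := by
      funext t; fin_cases t <;> norm_num [hw3]
    simp only [Finset.sum_range_succ, Finset.sum_range_zero] at e3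
    rw [b01, b12, b20] at e3
    have w30 : w3 ((0 : ℕ) : ℤ) = 0 := by norm_num [hw3]
    have w31 : w3 ((1 : ℕ) : ℤ) = 1 := by norm_num [hw3]
    have w32 : w3 ((2 : ℕ) : ℤ) = 2 := by norm_num [hw3]
    rw [w30, w31, w32] at e3
    have hv20 : h ![2, 0] = 2 := hval _ rfl
    rw [hv20, h12] at e3
    norm_num at e3
    omega
end

section
/- Let Q = {0,…,q−1}, n ≥ 2, and f : Q^n → Q. Let L(q,n) be the set of circular words w : ℤ/pℤ → Q (p ≥ 1) such that the circular factors of length n−1 at distinct positions are pairwise distinct, i.e. (w_{i}, w_{i+1}, …, w_{i+n−2}) ≠ (w_{j}, w_{j+1}, …, w_{j+n−2}) (indices mod p) whenever i ≢ j (mod p). Then f is non-increasing (f ∈ CA^-(q,n)) if and only if S_f(w) ≤ S(w) holds for every w ∈ L(q,n). -/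
lemma shiftSum_one (g : ℤ → ℤ) (p : ℕ) (hg : ∀ k : ℤ, g (k + p) = g k) (b : ℤ) :
    ∑ k ∈ Finset.range p, g (b + 1 + k) = ∑ k ∈ Finset.range p, g (b + k) := by
  cases p with
  | zero => simp
  | succ m =>
    rw [Finset.sum_range_succ, Finset.sum_range_succ']
    have h1 : g (b + 1 + m) = g (b + 0) := by
      have := hg b
      simp only [Nat.cast_succ] at this
      rw [show b + 1 + (m:ℤ) = b + ((m:ℤ)+1) by ring, this]
      simp
    rw [h1]
    congr 1
    refine Finset.sum_congr rfl fun k _ => ?_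
    congr 1; push_cast; ring

lemma shiftSum (g : ℤ → ℤ) (p : ℕ) (hg : ∀ k : ℤ, g (k + p) = g k) (a : ℕ) :
    ∑ k ∈ Finset.range p, g ((a : ℤ) + k) = ∑ k ∈ Finset.range p, g (k : ℤ) := by
  induction a with
  | zero => simp
  | succ a ih =>
    have h : ∀ k ∈ Finset.range p, g (((a+1 : ℕ) : ℤ) + (k:ℤ)) = g ((a:ℤ) + 1 + k) := by
      intro k _
      have hc : ((a+1 : ℕ) : ℤ) = (a:ℤ) + 1 := by push_cast; ring
      rw [hc]
    rw [Finset.sum_congr rfl h]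
    rw [shiftSum_one g p hg]
    rw [ih]

lemma splitSum (g : ℤ → ℤ) (a : ℤ) (p1 p2 : ℕ) :
    ∑ k ∈ Finset.range (p1 + p2), g (a + k) =
      ∑ k ∈ Finset.range p1, g (a + k) + ∑ k ∈ Finset.range p2, g (a + p1 + k) := by
  rw [Finset.sum_range_add]
  congr 1
  refine Finset.sum_congr rfl fun k _ => ?_
  congr 1; push_cast; ring

lemma wrap {q : ℕ} (w : ℤ → Fin q) (i p1 m : ℕ) (hp1 : 1 ≤ p1)
    (key : ∀ t : ℕ, t < m → w ((i:ℤ) + p1 + t) = w ((i:ℤ) + t)) :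
    ∀ s : ℕ, s < p1 + m → w ((i:ℤ) + (s % p1 : ℕ)) = w ((i:ℤ) + s) := by
  intro s
  induction s using Nat.strong_induction_on with
  | _ s ih =>
    intro hs
    by_cases h : s < p1
    · rw [Nat.mod_eq_of_lt h]
    · push_neg at h
      have h1 : s - p1 < m := by omega
      have harg : (i:ℤ) + p1 + ((s - p1 : ℕ) : ℤ) = (i:ℤ) + s := by push_cast; omega
      have h3 : w ((i:ℤ) + s) = w ((i:ℤ) + ((s - p1 : ℕ) : ℤ)) := by
        rw [← harg]; exact key (s - p1) h1
      have h4 : s % p1 = (s - p1) % p1 := by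
        conv_lhs => rw [show s = (s - p1) + p1 by omega]
        exact Nat.add_mod_right _ _
      rw [h3, h4]
      exact ih (s - p1) (by omega) (by omega)

lemma piece (q n : ℕ) (hn : 2 ≤ n) (f : (Fin n → Fin q) → Fin q)
    (w : ℤ → Fin q) (a p1 : ℕ) (hp1 : 1 ≤ p1)
    (key : ∀ t : ℕ, t < n - 1 → w ((a:ℤ) + p1 + t) = w ((a:ℤ) + t))
    (IH1 : ∀ v : ℤ → Fin q, (∀ k : ℤ, v (k + (p1:ℤ)) = v k) →
      ∑ k ∈ Finset.range p1, ((f (fun t => v ((k:ℤ) + ((t:ℕ):ℤ)))) : ℤ) ≤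
      ∑ k ∈ Finset.range p1, ((v (k:ℤ)) : ℤ)) :
    ∑ k ∈ Finset.range p1, ((f (fun t => w ((a:ℤ) + (k:ℤ) + ((t:ℕ):ℤ)))) : ℤ) ≤
    ∑ k ∈ Finset.range p1, ((w ((a:ℤ) + (k:ℤ))) : ℤ) := by
  set w1 : ℤ → Fin q := fun k => w ((a:ℤ) + k % (p1:ℤ)) with hw1def
  have pw1 : ∀ k : ℤ, w1 (k + (p1:ℤ)) = w1 k := by
    intro k
    simp only [hw1def]
    congr 1
    simp
  have wrap1 : ∀ s : ℕ, s < p1 + (n-1) → w ((a:ℤ) + ((s % p1 : ℕ):ℤ)) = w ((a:ℤ) + s) :=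
    wrap w a p1 (n-1) hp1 key
  have hval : ∀ s : ℕ, s < p1 + (n-1) → w1 (s:ℤ) = w ((a:ℤ) + s) := by
    intro s hs
    show w ((a:ℤ) + (s:ℤ) % (p1:ℤ)) = _
    rw [← Int.natCast_mod]
    exact wrap1 s hs
  have hterm : ∀ k ∈ Finset.range p1,
      ((f (fun t => w1 ((k:ℤ) + ((t:ℕ):ℤ)))) : ℤ) =
      ((f (fun t => w ((a:ℤ) + (k:ℤ) + ((t:ℕ):ℤ)))) : ℤ) := by
    intro k hk
    simp only [Finset.mem_range] at hk
    have hfun : (fun t : Fin n => w1 ((k:ℤ) + ((t:ℕ):ℤ)))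
        = fun t : Fin n => w ((a:ℤ) + (k:ℤ) + ((t:ℕ):ℤ)) := by
      funext t
      have ht := t.isLt
      have h1 : (k:ℤ) + ((t:ℕ):ℤ) = ((k + (t:ℕ) : ℕ):ℤ) := by push_cast; ring
      rw [h1, hval (k + (t:ℕ)) (by omega)]
      congr 1; push_cast; ring
    rw [hfun]
  have hvterm : ∀ k ∈ Finset.range p1, ((w1 (k:ℤ)) : ℤ) = ((w ((a:ℤ) + (k:ℤ))) : ℤ) := by
    intro k hk
    simp only [Finset.mem_range] at hk
    rw [hval k (by omega)]
  calc ∑ k ∈ Finset.range p1, ((f (fun t => w ((a:ℤ) + (k:ℤ) + ((t:ℕ):ℤ)))) : ℤ)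
      = ∑ k ∈ Finset.range p1, ((f (fun t => w1 ((k:ℤ) + ((t:ℕ):ℤ)))) : ℤ) :=
        (Finset.sum_congr rfl hterm).symm
    _ ≤ ∑ k ∈ Finset.range p1, ((w1 (k:ℤ)) : ℤ) := IH1 w1 pw1
    _ = ∑ k ∈ Finset.range p1, ((w ((a:ℤ) + (k:ℤ))) : ℤ) := Finset.sum_congr rfl hvterm

lemma assemble (g : ℤ → ℤ) (p i j : ℕ) (hg : ∀ k : ℤ, g (k + p) = g k)
    (hij : i < j) (hjp : j < p) :
    ∑ k ∈ Finset.range p, g (k:ℤ) =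
      (∑ k ∈ Finset.range (j-i), g ((i:ℤ) + k)) +
      ∑ k ∈ Finset.range (p-(j-i)), g ((j:ℤ) + k) := by
  rw [← shiftSum g p hg i]
  have h := splitSum g (i:ℤ) (j-i) (p-(j-i))
  rw [show (j-i) + (p-(j-i)) = p by omega] at h
  rw [h]
  congr 1
  refine Finset.sum_congr rfl fun k _ => ?_
  congr 1; push_cast; omega

lemma stepLemma (q n : ℕ) (hn : 2 ≤ n) (f : (Fin n → Fin q) → Fin q)
    (p : ℕ) (w : ℤ → Fin q) (hw : ∀ k : ℤ, w (k + (p:ℤ)) = w k)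
    (i j : ℕ) (hij : i < j) (hjp : j < p)
    (heq : ∀ t : ℕ, t < n - 1 → w ((i:ℤ) + t) = w ((j:ℤ) + t))
    (IH : ∀ m, m < p → 1 ≤ m → ∀ v : ℤ → Fin q, (∀ k : ℤ, v (k + (m:ℤ)) = v k) →
      ∑ k ∈ Finset.range m, ((f (fun t => v ((k:ℤ) + ((t:ℕ):ℤ)))) : ℤ) ≤
      ∑ k ∈ Finset.range m, ((v (k:ℤ)) : ℤ)) :
    ∑ k ∈ Finset.range p, ((f (fun t => w ((k:ℤ) + ((t:ℕ):ℤ)))) : ℤ) ≤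
    ∑ k ∈ Finset.range p, ((w (k:ℤ)) : ℤ) := by
  have hp1a : 1 ≤ j - i := by omega
  have hp2a : 1 ≤ p - (j-i) := by omega
  have hp1p : j - i < p := by omega
  have hp2p : p - (j-i) < p := by omega
  have key1 : ∀ t : ℕ, t < n - 1 → w ((i:ℤ) + (j-i : ℕ) + t) = w ((i:ℤ) + t) := by
    intro t ht
    rw [show (i:ℤ) + ((j-i : ℕ):ℤ) + t = (j:ℤ) + t by push_cast; omega]
    exact (heq t ht).symm
  have key2 : ∀ t : ℕ, t < n - 1 → w ((j:ℤ) + (p-(j-i) : ℕ) + t) = w ((j:ℤ) + t) := by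
    intro t ht
    rw [show (j:ℤ) + ((p-(j-i) : ℕ):ℤ) + t = ((i:ℤ) + t) + p by push_cast; omega]
    rw [hw, heq t ht]
  have piece1 := piece q n hn f w i (j-i) hp1a key1 (fun v hv => IH (j-i) hp1p hp1a v hv)
  have piece2 := piece q n hn f w j (p-(j-i)) hp2a key2 (fun v hv => IH (p-(j-i)) hp2p hp2a v hv)
  have hFper : ∀ k : ℤ,
      ((f (fun t => w (k + (p:ℤ) + ((t:ℕ):ℤ)))) : ℤ) = ((f (fun t => w (k + ((t:ℕ):ℤ)))) : ℤ) := by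
    intro k
    have : (fun t : Fin n => w (k + (p:ℤ) + ((t:ℕ):ℤ))) = fun t : Fin n => w (k + ((t:ℕ):ℤ)) := by
      funext t
      rw [show k + (p:ℤ) + ((t:ℕ):ℤ) = (k + ((t:ℕ):ℤ)) + p by ring, hw]
    rw [this]
  have hA := assemble (fun x => ((f (fun t => w (x + ((t:ℕ):ℤ)))) : ℤ)) p i j hFper hij hjp
  have hB := assemble (fun x => ((w x) : ℤ)) p i j (fun k => by show ((w (k + (p:ℤ))):ℤ) = ((w k):ℤ); rw [hw]) hij hjp
  beta_reduce at hA hB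
  rw [hA, hB]
  exact add_le_add piece1 piece2

/-- `f` is non-increasing iff the non-increasing inequality holds for all
circular words in `L(q,n)`, i.e. those periodic words whose circular factors of length
`n-1` at distinct positions (mod the period) are pairwise distinct. -/
theorem nonincreasing_iff_on_L
    (q n : ℕ) (hn : 2 ≤ n)
    (f : (Fin n → Fin q) → Fin q) :
    NonIncreasing q n f ↔
      (∀ p : ℕ, 1 ≤ p → ∀ w : ℤ → Fin q, (∀ i : ℤ, w (i + (p : ℤ)) = w i) →
        (∀ i ∈ Finset.range p, ∀ j ∈ Finset.range p, i ≠ j →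
          ∃ t : Fin (n - 1), w ((i : ℤ) + ((t : ℕ) : ℤ)) ≠ w ((j : ℤ) + ((t : ℕ) : ℤ))) →
        ∑ k ∈ Finset.range p, ((f (fun t => w ((k : ℤ) + ((t : ℕ) : ℤ)))) : ℤ) ≤
        ∑ k ∈ Finset.range p, ((w (k : ℤ)) : ℤ)) := by
  constructor
  · intro h p hp w hw _
    exact h p hp w hw
  · intro H
    intro p
    induction p using Nat.strong_induction_on with
    | _ p IH =>
      intro hp w hw
      by_cases hd : ∀ i ∈ Finset.range p, ∀ j ∈ Finset.range p, i ≠ j →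
          ∃ t : Fin (n - 1), w ((i : ℤ) + ((t : ℕ) : ℤ)) ≠ w ((j : ℤ) + ((t : ℕ) : ℤ))
      · exact H p hp w hw hd
      · push_neg at hd
        obtain ⟨i, hi, j, hj, hij, heq⟩ := hd
        simp only [Finset.mem_range] at hi hj
        have IH' : ∀ m, m < p → 1 ≤ m → ∀ v : ℤ → Fin q, (∀ k : ℤ, v (k + (m:ℤ)) = v k) →
            ∑ k ∈ Finset.range m, ((f (fun t => v ((k:ℤ) + ((t:ℕ):ℤ)))) : ℤ) ≤
            ∑ k ∈ Finset.range m, ((v (k:ℤ)) : ℤ) :=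
          fun m hm hm1 v hv => IH m hm hm1 v hv
        rcases Nat.lt_or_ge i j with h | h
        · exact stepLemma q n hn f p w hw i j h hj
            (fun t ht => heq ⟨t, ht⟩) IH'
        · have hji : j < i := by omega
          exact stepLemma q n hn f p w hw j i hji hi
            (fun t ht => (heq ⟨t, ht⟩).symm) IH'
end

section
/- Let Q = {0,…,q−1} and f : Q^n → Q. For a function s : Q^n → ℤ and for w = (w_0,…,w_{n−1}) ∈ Q^n and 0 ≤ i ≤ n−1, define p(w,i) = max(0, min(s(w) + f(w), ∑_{j=0}^{i} w_j) − max(s(w), ∑_{j=0}^{i−1} w_j)). Then f is non-increasing (f ∈ CA^-(q,n)) if and only if there exists s : Q^n → ℤ satisfying: (1) 0 ≤ s(w) and s(w) + f(w) ≤ ∑_{i=0}^{n−1} w_i for all w ∈ Q^n; (2) s(w) = 0 whenever f(w) = 0; and (3) for all (w_0,…,w_{2n−2}) ∈ Q^{2n−1}: ∑_{i=0}^{n−1} p((w_{n−1−i},…,w_{2n−2−i}), i) ≤ w_{n−1}. -/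
open Finset

section Aux

/-- telescoping bound -/
lemma teleAux (U : ℤ) (G H : ℕ → ℤ) (n : ℕ) (hn : 1 ≤ n)
    (hH0 : H 0 ≤ U) (hG : ∀ i, 0 ≤ G i)
    (hchain : ∀ i, i + 1 < n → H (i + 1) ≤ G i) :
    ∑ i ∈ range n, (H i - G i) ≤ U := by
  have key : ∀ m, 1 ≤ m → m ≤ n → ∑ i ∈ range m, (H i - G i) ≤ H 0 - G (m - 1) := by
    intro m
    induction m with
    | zero => omega
    | succ m ih =>
      intro _ hmn
      rcases Nat.eq_zero_or_pos m with h0 | hpos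
      · subst h0; simp
      · rw [Finset.sum_range_succ]
        have h1 := ih (by omega) (by omega)
        have h2 := hchain (m - 1) (by omega)
        have hm : m - 1 + 1 = m := by omega
        rw [hm] at h2
        have hm2 : m + 1 - 1 = m := rfl
        rw [hm2]
        linarith
  have h1 := key n hn le_rfl
  have h2 := hG (n - 1)
  linarith

lemma shift1 (p : ℕ) (Ψ : ℕ → ℤ) (hΨ : Ψ p = Ψ 0) :
    ∑ k ∈ range p, Ψ (k + 1) = ∑ k ∈ range p, Ψ k := by
  have h1 := Finset.sum_range_succ' Ψ p
  have h2 := Finset.sum_range_succ Ψ p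
  linarith

lemma sum_shift (p : ℕ) (hp : 1 ≤ p) (Φ : ℤ → ℤ) (hper : ∀ x : ℤ, Φ (x + (p : ℤ)) = Φ x)
    (i : ℕ) :
    ∑ m ∈ range p, Φ ((m : ℤ) - (i : ℤ)) = ∑ k ∈ range p, Φ (k : ℤ) := by
  have hC : ∀ c : ℕ, ∑ k ∈ range p, Φ ((k : ℤ) + (c : ℤ)) = ∑ k ∈ range p, Φ (k : ℤ) := by
    intro c
    induction c with
    | zero => simp
    | succ c ih =>
      have hΨ : Φ ((p : ℤ) + (c : ℤ)) = Φ ((0 : ℕ) + (c : ℤ)) := by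
        rw [add_comm ((p:ℤ)) ((c:ℤ)), hper]
        norm_num
      have step := shift1 p (fun m => Φ ((m : ℤ) + (c : ℤ))) (by simpa using hΨ)
      have e : ∀ k : ℕ, ((k + 1 : ℕ) : ℤ) + (c : ℤ) = (k : ℤ) + ((c + 1 : ℕ) : ℤ) := by
        intro k; push_cast; ring
      calc ∑ k ∈ range p, Φ ((k : ℤ) + ((c + 1 : ℕ) : ℤ))
          = ∑ k ∈ range p, Φ (((k + 1 : ℕ) : ℤ) + (c : ℤ)) :=
            Finset.sum_congr rfl (fun k _ => by rw [e])
        _ = ∑ k ∈ range p, Φ ((k : ℤ) + (c : ℤ)) := step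
        _ = ∑ k ∈ range p, Φ (k : ℤ) := ih
  have hmul : ∀ (x : ℤ) (m : ℕ), Φ (x + (m : ℤ) * (p : ℤ)) = Φ x := by
    intro x m
    induction m with
    | zero => simp
    | succ m ih =>
      have e : x + ((m + 1 : ℕ) : ℤ) * (p : ℤ) = (x + (m : ℤ) * (p : ℤ)) + (p : ℤ) := by
        push_cast; ring
      rw [e, hper, ih]
  have key : ∀ m : ℕ, Φ ((m : ℤ) - (i : ℤ)) = Φ ((m : ℤ) + ((i * p - i : ℕ) : ℤ)) := by
    intro m
    have hip : i ≤ i * p := Nat.le_mul_of_pos_right i (by omega)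
    have e : (m : ℤ) + ((i * p - i : ℕ) : ℤ) = ((m : ℤ) - (i : ℤ)) + (i : ℤ) * (p : ℤ) := by
      push_cast [hip]; ring
    rw [e, hmul]
  rw [Finset.sum_congr rfl (fun m _ => key m), hC (i * p - i)]

lemma sum_ite_le_split (n i : ℕ) (hi : i < n) (c : Fin n → ℤ) :
    (∑ j : Fin n, if (j : ℕ) ≤ i then c j else 0)
      = (∑ j : Fin n, if (j : ℕ) < i then c j else 0) + c ⟨i, hi⟩ := by
  have h : ∀ j : Fin n, (if (j : ℕ) ≤ i then c j else 0)
      = (if (j : ℕ) < i then c j else 0) + (if j = ⟨i, hi⟩ then c j else 0) := by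
    intro j
    rcases Nat.lt_trichotomy (j : ℕ) i with h | h | h
    · rw [if_pos (Nat.le_of_lt h), if_pos h, if_neg (by simp [Fin.ext_iff]; omega)]; ring
    · rw [if_pos (Nat.le_of_eq h), if_neg (by omega), if_pos (by simp [Fin.ext_iff, h])]; ring
    · rw [if_neg (by omega), if_neg (by omega), if_neg (by simp [Fin.ext_iff]; omega)]; ring
  rw [Finset.sum_congr rfl (fun j _ => h j), Finset.sum_add_distrib]
  congr 1
  rw [Finset.sum_ite_eq' Finset.univ (⟨i, hi⟩ : Fin n) c]
  simp

end Aux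




namespace NIP

variable {q n : ℕ} [NeZero q]

/-- window of a one-sided configuration -/
def win (z : ℕ → Fin q) (j : ℕ) : Fin n → Fin q := fun t => z (j + (t : ℕ))

variable (f : (Fin n → Fin q) → Fin q)

/-- the KEY consequence of non-increasingness on one-sided configurations -/
lemma key (hni : NonIncreasing q n f) (hn : 1 ≤ n) (z : ℕ → Fin q) (k : ℕ) :
    ∑ j ∈ range (k + 1), ((f (win z j) : ℤ)) ≤ ∑ j ∈ range (k + n), ((z j : ℤ)) := by
  set p : ℕ := k + 2 * n with hp
  set W : ℤ → Fin q := fun i => if (i % (p : ℤ)).toNat < k + n then z (i % (p : ℤ)).toNat else 0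
    with hW
  have hper : ∀ i : ℤ, W (i + (p : ℤ)) = W i := by
    intro i
    have e : (i + (p : ℤ)) % (p : ℤ) = i % (p : ℤ) := by
      rw [show i + (p : ℤ) = i + (p : ℤ) * 1 by ring, Int.add_mul_emod_self_left]
    simp only [hW, e]
  have h := hni p (by omega) W hper
  have hWm : ∀ m : ℕ, m < p → W (m : ℤ) = if m < k + n then z m else 0 := by
    intro m hm
    simp only [hW]
    rw [Int.emod_eq_of_lt (by exact_mod_cast Nat.zero_le m) (by exact_mod_cast hm)]
    simp
  have hR : ∑ m ∈ range p, ((W (m : ℤ) : ℤ)) = ∑ j ∈ range (k + n), ((z j : ℤ)) := by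
    rw [← Finset.sum_subset (Finset.range_subset_range.2 (show k + n ≤ p by omega))]
    · apply Finset.sum_congr rfl
      intro m hm
      rw [hWm m (by simp at hm; omega), if_pos (by simp at hm; omega)]
    · intro m hm hnm
      rw [hWm m (by simp at hm; omega), if_neg (by simp at hnm; omega)]
      simp
  have hL : ∑ j ∈ range (k + 1), ((f (win z j) : ℤ)) ≤
      ∑ m ∈ range p, ((f (fun t => W ((m : ℤ) + ((t : ℕ) : ℤ))) : ℤ)) := by
    have hsub : range (k + 1) ⊆ range p := Finset.range_subset_range.2 (by omega)
    calc ∑ j ∈ range (k + 1), ((f (win z j) : ℤ))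
        = ∑ j ∈ range (k + 1), ((f (fun t => W ((j : ℤ) + ((t : ℕ) : ℤ))) : ℤ)) := by
          apply Finset.sum_congr rfl
          intro j hj
          simp only [mem_range] at hj
          have ewin : win z j = fun t : Fin n => W ((j : ℤ) + ((t : ℕ) : ℤ)) := by
            funext t
            have ht : (t : ℕ) < n := t.isLt
            have e : ((j : ℤ) + ((t : ℕ) : ℤ)) = ((j + (t : ℕ) : ℕ) : ℤ) := by push_cast; ring
            rw [win, e, hWm (j + (t : ℕ)) (by omega), if_pos (by omega)]
          rw [ewin]
      _ ≤ ∑ m ∈ range p, ((f (fun t => W ((m : ℤ) + ((t : ℕ) : ℤ))) : ℤ)) :=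
          Finset.sum_le_sum_of_subset_of_nonneg hsub (fun m _ _ => Int.natCast_nonneg _)
  calc ∑ j ∈ range (k + 1), ((f (win z j) : ℤ)) ≤ _ := hL
    _ ≤ ∑ m ∈ range p, ((W (m : ℤ) : ℤ)) := h
    _ = _ := hR

def Sset (v : Fin n → Fin q) : Set ℕ :=
  {m | ∃ z : ℕ → Fin q, (∀ t : Fin n, z (t : ℕ) = v t) ∧ ∃ k : ℕ,
    (m : ℤ) = ∑ j ∈ range (k + n), ((z j : ℤ)) - ∑ j ∈ range (k + 1), ((f (win z j) : ℤ))}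

noncomputable def sstar (v : Fin n → Fin q) : ℤ := ((sInf (Sset f v) : ℕ) : ℤ)

lemma sstar_nonneg (v : Fin n → Fin q) : 0 ≤ sstar f v := Int.natCast_nonneg _

lemma sstar_le (hni : NonIncreasing q n f) (hn : 1 ≤ n) (v : Fin n → Fin q)
    (z : ℕ → Fin q) (hz : ∀ t : Fin n, z (t : ℕ) = v t) (k : ℕ) :
    sstar f v ≤ ∑ j ∈ range (k + n), ((z j : ℤ)) - ∑ j ∈ range (k + 1), ((f (win z j) : ℤ)) := by
  have h0 : 0 ≤ ∑ j ∈ range (k + n), ((z j : ℤ)) - ∑ j ∈ range (k + 1), ((f (win z j) : ℤ)) := by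
    have := key f hni hn z k; omega
  have hmem : (∑ j ∈ range (k + n), ((z j : ℤ)) -
      ∑ j ∈ range (k + 1), ((f (win z j) : ℤ))).toNat ∈ Sset f v :=
    ⟨z, hz, k, by rw [Int.toNat_of_nonneg h0]⟩
  have h1 := Nat.sInf_le hmem
  have h2 : sstar f v ≤ (((∑ j ∈ range (k + n), ((z j : ℤ)) -
      ∑ j ∈ range (k + 1), ((f (win z j) : ℤ))).toNat : ℕ) : ℤ) := by
    unfold sstar
    exact Int.ofNat_le.2 h1
  calc sstar f v ≤ _ := h2
    _ = _ := Int.toNat_of_nonneg h0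

def pad (v : Fin n → Fin q) : ℕ → Fin q := fun j => if h : j < n then v ⟨j, h⟩ else 0

lemma pad_spec (v : Fin n → Fin q) : ∀ t : Fin n, pad v (t : ℕ) = v t := by
  intro t
  simp [pad, t.isLt]

lemma sstar_mem (hni : NonIncreasing q n f) (hn : 1 ≤ n) (v : Fin n → Fin q) :
    ∃ z : ℕ → Fin q, (∀ t : Fin n, z (t : ℕ) = v t) ∧ ∃ k : ℕ,
      sstar f v = ∑ j ∈ range (k + n), ((z j : ℤ)) -
        ∑ j ∈ range (k + 1), ((f (win z j) : ℤ)) := by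
  have hne : (Sset f v).Nonempty := by
    refine ⟨(∑ j ∈ range (0 + n), ((pad v j : ℤ)) -
      ∑ j ∈ range (0 + 1), ((f (win (pad v) j) : ℤ))).toNat, pad v, pad_spec v, 0, ?_⟩
    rw [Int.toNat_of_nonneg (by have := key f hni hn (pad v) 0; omega)]
  exact Nat.sInf_mem hne

lemma win_zero (z : ℕ → Fin q) : win (n := n) z 0 = fun t : Fin n => z (t : ℕ) := by
  funext t; simp [win]

lemma sstar_add_f_le (hni : NonIncreasing q n f) (hn : 1 ≤ n) (v : Fin n → Fin q) :
    sstar f v + ((f v : ℤ)) ≤ ∑ i : Fin n, ((v i : ℤ)) := by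
  have h := sstar_le f hni hn v (pad v) (pad_spec v) 0
  have h1 : ∑ j ∈ range (0 + n), ((pad v j : ℤ)) = ∑ i : Fin n, ((v i : ℤ)) := by
    rw [zero_add, Finset.sum_range fun j => _]
    exact Finset.sum_congr rfl (fun j _ => by rw [pad_spec])
  have hwv : win (n := n) (pad v) 0 = v := by
    rw [win_zero]; funext t; exact pad_spec v t
  have h2 : ∑ j ∈ range (0 + 1), ((f (win (pad v) j) : ℤ)) = ((f v : ℤ)) := by
    rw [zero_add, Finset.sum_range_one, hwv]
  rw [h1, h2] at h
  omega

lemma sstar_chain (hni : NonIncreasing q n f) (hn : 1 ≤ n) (v w : Fin n → Fin q)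
    (hvw : ∀ (j : ℕ) (h : j + 1 < n), w ⟨j, by omega⟩ = v ⟨j + 1, h⟩) :
    sstar f v + ((f v : ℤ)) ≤ ((v ⟨0, by omega⟩ : ℤ)) + sstar f w := by
  obtain ⟨z', hz', k', hk'⟩ := sstar_mem f hni hn w
  set z : ℕ → Fin q := fun j => if j = 0 then v ⟨0, by omega⟩ else z' (j - 1) with hzdef
  have hzv : ∀ t : Fin n, z (t : ℕ) = v t := by
    intro t
    rcases Nat.eq_zero_or_pos (t : ℕ) with h0 | hpos
    · have ht : t = ⟨0, by omega⟩ := Fin.ext h0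
      rw [ht]; simp [hzdef]
    · have h1 : (t : ℕ) ≠ 0 := by omega
      have h2 : (t : ℕ) - 1 + 1 < n := by have := t.isLt; omega
      calc z (t : ℕ) = z' ((t : ℕ) - 1) := by simp [hzdef, h1]
        _ = w ⟨(t : ℕ) - 1, by omega⟩ := hz' ⟨(t : ℕ) - 1, by omega⟩
        _ = v ⟨(t : ℕ) - 1 + 1, h2⟩ := hvw _ h2
        _ = v t := by congr 1; exact Fin.ext (by simp; omega)
  have hle := sstar_le f hni hn v z hzv (k' + 1)
  have e1 : ∑ j ∈ range (k' + 1 + n), ((z j : ℤ))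
      = ((v ⟨0, by omega⟩ : ℤ)) + ∑ j ∈ range (k' + n), ((z' j : ℤ)) := by
    have e : k' + 1 + n = (k' + n) + 1 := by omega
    rw [e, Finset.sum_range_succ']
    have hz0 : z 0 = v ⟨0, by omega⟩ := by simp [hzdef]
    have hzs : ∀ j : ℕ, z (j + 1) = z' j := by intro j; simp [hzdef]
    rw [hz0, Finset.sum_congr rfl (fun j _ => by rw [hzs j])]
    ring
  have e2 : ∑ j ∈ range (k' + 2), ((f (win z j) : ℤ))
      = ((f v : ℤ)) + ∑ j ∈ range (k' + 1), ((f (win z' j) : ℤ)) := by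
    have e : k' + 2 = (k' + 1) + 1 := rfl
    rw [e, Finset.sum_range_succ']
    have h0 : win (n := n) z 0 = v := by
      rw [win_zero]; funext t; exact hzv t
    have hs : ∀ j : ℕ, win (n := n) z (j + 1) = win z' j := by
      intro j; funext t
      have hne : j + 1 + (t : ℕ) ≠ 0 := by omega
      simp only [win, hzdef, if_neg hne]
      congr 1
      omega
    rw [h0, Finset.sum_congr rfl (fun j _ => by rw [hs j])]
    ring
  rw [e1, e2] at hle
  omega

end NIP



namespace NIP

variable {q n : ℕ} [NeZero q]

lemma sum_P_eq (f : (Fin n → Fin q) → Fin q) (s : (Fin n → Fin q) → ℤ)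
    (v : Fin n → Fin q) (Pv : ℕ → ℤ)
    (hPv : ∀ i : ℕ, Pv i =
      max 0
        (min (s v + ((f v : ℤ))) (∑ j : Fin n, if (j : ℕ) ≤ i then ((v j : ℤ)) else 0) -
         max (s v) (∑ j : Fin n, if (j : ℕ) < i then ((v j : ℤ)) else 0)))
    (h0 : 0 ≤ s v) (h1 : s v + ((f v : ℤ)) ≤ ∑ i : Fin n, ((v i : ℤ))) :
    ∑ i ∈ range n, Pv i = ((f v : ℤ)) := by
  set B : ℕ → ℤ := fun i => ∑ j : Fin n, if (j : ℕ) < i then ((v j : ℤ)) else 0 with hB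
  set G : ℕ → ℤ := fun i => max (s v) (min (s v + ((f v : ℤ))) (B i)) with hG
  have hBmono : ∀ i, B i ≤ B (i + 1) := by
    intro i
    apply Finset.sum_le_sum
    intro j _
    by_cases h : (j : ℕ) < i
    · rw [if_pos h, if_pos (by omega)]
    · rw [if_neg h]
      by_cases h2 : (j : ℕ) < i + 1
      · rw [if_pos h2]; positivity
      · rw [if_neg h2]
  have hB0 : B 0 = 0 := by simp [hB]
  have hBn : B n = ∑ i : Fin n, ((v i : ℤ)) := by
    apply Finset.sum_congr rfl
    intro j _
    rw [if_pos j.isLt]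
  have hf : (0 : ℤ) ≤ ((f v : ℤ)) := Int.natCast_nonneg _
  have hstep : ∀ i ∈ range n, Pv i = G (i + 1) - G i := by
    intro i _
    rw [hPv i]
    have hle : (∑ j : Fin n, if (j : ℕ) ≤ i then ((v j : ℤ)) else 0) = B (i + 1) := by
      simp only [hB, Nat.lt_succ_iff]
    have hlt : (∑ j : Fin n, if (j : ℕ) < i then ((v j : ℤ)) else 0) = B i := rfl
    rw [hle, hlt]
    have h2 := hBmono i
    simp only [hG]
    omega
  rw [Finset.sum_congr rfl hstep, Finset.sum_range_sub G n]
  simp only [hG, hB0, hBn]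
  omega

def Wi (u : ℕ → Fin q) (i : ℕ) : Fin n → Fin q := fun t => u (n - 1 - i + (t : ℕ))

def Aof (u : ℕ → Fin q) (i : ℕ) : ℤ := ∑ j : Fin n, if (j : ℕ) < i then ((Wi u i j : ℤ)) else 0

lemma Aof_nonneg (u : ℕ → Fin q) (i : ℕ) : 0 ≤ Aof (n := n) u i := by
  apply Finset.sum_nonneg
  intro j _
  by_cases h : (j : ℕ) < i
  · rw [if_pos h]; positivity
  · rw [if_neg h]

lemma Aof_eq_range (u : ℕ → Fin q) (i : ℕ) (hi : i ≤ n) :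
    Aof (n := n) u i = ∑ j ∈ range i, ((u (n - 1 - i + j) : ℤ)) := by
  unfold Aof Wi
  rw [show (∑ j : Fin n, if (j : ℕ) < i then ((u (n - 1 - i + (j : ℕ)) : ℤ)) else 0)
      = ∑ j ∈ range n, if j < i then ((u (n - 1 - i + j) : ℤ)) else 0 from
    Fin.sum_univ_eq_sum_range (fun j => if j < i then ((u (n - 1 - i + j) : ℤ)) else 0) n]
  rw [← Finset.sum_subset (Finset.range_subset_range.2 hi)
    (fun x _ hnx => if_neg (by simp at hnx; omega))]
  exact Finset.sum_congr rfl (fun j hj => if_pos (Finset.mem_range.1 hj))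

lemma Aof_succ (u : ℕ → Fin q) (i : ℕ) (hi : i + 1 < n) :
    Aof (n := n) u (i + 1) = Aof (n := n) u i + ((u (n - 2 - i) : ℤ)) := by
  rw [Aof_eq_range u (i + 1) (by omega), Aof_eq_range u i (by omega),
    Finset.sum_range_succ']
  have e0 : n - 1 - (i + 1) + 0 = n - 2 - i := by omega
  have e1 : ∀ j : ℕ, n - 1 - (i + 1) + (j + 1) = n - 1 - i + j := by intro j; omega
  rw [e0, Finset.sum_congr rfl (fun j _ => by rw [e1 j])]

end NIP

/-- characterization of non-increasing rules via the particle-assignment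
function `s`.  `P s w i = max(0, min(s(w)+f(w), ∑_{j≤i} w_j) − max(s(w), ∑_{j<i} w_j))`
is the number of particles contributed by cell `i` of the window `w` to the image cell.
Words of length `2n-1` in condition (3) are encoded as functions `ℕ → Fin q` (only
coordinates `0,…,2n-2` are read). -/
theorem nonincreasing_iff_exists_s
    (q n : ℕ) [NeZero q] (hn : 1 ≤ n)
    (f : (Fin n → Fin q) → Fin q)
    (P : ((Fin n → Fin q) → ℤ) → (Fin n → Fin q) → ℕ → ℤ)
    (hP : ∀ (s : (Fin n → Fin q) → ℤ) (w : Fin n → Fin q) (i : ℕ),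
      P s w i =
        max 0
          (min (s w + ((f w : ℤ))) (∑ j : Fin n, if (j : ℕ) ≤ i then ((w j : ℤ)) else 0) -
           max (s w) (∑ j : Fin n, if (j : ℕ) < i then ((w j : ℤ)) else 0))) :
    NonIncreasing q n f ↔
      ∃ s : (Fin n → Fin q) → ℤ,
        (∀ w : Fin n → Fin q, 0 ≤ s w ∧ s w + ((f w : ℤ)) ≤ ∑ i : Fin n, ((w i : ℤ))) ∧
        (∀ w : Fin n → Fin q, ((f w : ℤ)) = 0 → s w = 0) ∧
        (∀ w : ℕ → Fin q,
          ∑ i ∈ Finset.range n, P s (fun t => w (n - 1 - i + (t : ℕ))) i ≤ ((w (n - 1) : ℤ))) := by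
  constructor
  · -- forward direction
    intro hni
    refine ⟨fun v => if ((f v : ℤ)) = 0 then 0 else NIP.sstar f v, ?_, ?_, ?_⟩
    · intro w
      constructor
      · dsimp only
        split_ifs with h
        · exact le_refl 0
        · exact NIP.sstar_nonneg f w
      · dsimp only
        split_ifs with h
        · rw [h]
          norm_num
          exact Finset.sum_nonneg fun i _ => Int.natCast_nonneg _
        · exact NIP.sstar_add_f_le f hni hn w
    · intro w h
      dsimp only
      rw [if_pos h]
    · intro u
      have hWieq : ∀ i : ℕ, (fun t : Fin n => u (n - 1 - i + (t : ℕ))) = NIP.Wi (n := n) u i :=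
        fun _ => rfl
      simp only [hWieq]
      refine le_trans (Finset.sum_le_sum ?_)
        (teleAux ((u (n - 1) : ℤ))
          (fun i => max 0 (min (NIP.sstar f (NIP.Wi (n := n) u i) - NIP.Aof (n := n) u i) ((u (n - 1) : ℤ))))
          (fun i => max 0 (min (NIP.sstar f (NIP.Wi (n := n) u i) + ((f (NIP.Wi (n := n) u i) : ℤ)) - NIP.Aof (n := n) u i)
            ((u (n - 1) : ℤ))))
          n hn ?_ ?_ ?_)
      · -- per-term bound
        intro i hi
        have hi' : i < n := Finset.mem_range.1 hi
        rw [hP _ (NIP.Wi (n := n) u i) i]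
        rw [sum_ite_le_split n i hi' (fun j => ((NIP.Wi (n := n) u i j : ℤ)))]
        have hAdef : (∑ j : Fin n, if (j : ℕ) < i then ((NIP.Wi (n := n) u i j : ℤ)) else 0)
            = NIP.Aof (n := n) u i := rfl
        rw [hAdef]
        have hlast : ((NIP.Wi (n := n) u i ⟨i, hi'⟩ : ℤ)) = ((u (n - 1) : ℤ)) := by
          unfold NIP.Wi
          have e : n - 1 - i + i = n - 1 := by omega
          rw [e]
        rw [hlast]
        have hU : (0 : ℤ) ≤ ((u (n - 1) : ℤ)) := Int.natCast_nonneg _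
        have hA := NIP.Aof_nonneg (n := n) u i
        have hσ := NIP.sstar_nonneg f (NIP.Wi (n := n) u i)
        have hF : (0 : ℤ) ≤ ((f (NIP.Wi (n := n) u i) : ℤ)) := Int.natCast_nonneg _
        by_cases hf : ((f (NIP.Wi (n := n) u i) : ℤ)) = 0
        · rw [if_pos hf, hf]
          omega
        · rw [if_neg hf]
          omega
      · -- H 0 ≤ U
        have hU : (0 : ℤ) ≤ ((u (n - 1) : ℤ)) := Int.natCast_nonneg _
        omega
      · intro i
        omega
      · -- chain
        intro i hi
        have hchain := NIP.sstar_chain f hni hn (NIP.Wi (n := n) u (i + 1)) (NIP.Wi (n := n) u i) ?_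
        · have h0 : ((NIP.Wi (n := n) u (i + 1) ⟨0, by omega⟩ : ℤ)) = ((u (n - 2 - i) : ℤ)) := by
            unfold NIP.Wi
            have e : n - 1 - (i + 1) + 0 = n - 2 - i := by omega
            rw [e]
          rw [h0] at hchain
          have hAs := NIP.Aof_succ (n := n) u i hi
          omega
        · intro j h
          show u (n - 1 - i + j) = u (n - 1 - (i + 1) + (j + 1))
          congr 1
          omega
  · -- backward direction
    rintro ⟨s, h1, h2, h3⟩
    intro p hp w hper
    have hterm : ∀ k ∈ Finset.range p,
        ((f (fun t => w ((k : ℤ) + ((t : ℕ) : ℤ))) : ℤ))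
          = ∑ i ∈ Finset.range n, P s (fun t => w ((k : ℤ) + ((t : ℕ) : ℤ))) i := by
      intro k _
      exact (NIP.sum_P_eq f s _ (fun i => P s _ i) (fun i => hP s _ i) (h1 _).1 (h1 _).2).symm
    rw [Finset.sum_congr rfl hterm, Finset.sum_comm]
    have hswap : ∀ i ∈ Finset.range n,
        (∑ k ∈ Finset.range p, P s (fun t => w ((k : ℤ) + ((t : ℕ) : ℤ))) i)
          = ∑ m ∈ Finset.range p, P s (fun t => w (((m : ℤ) - (i : ℤ)) + ((t : ℕ) : ℤ))) i := by
      intro i _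
      have hper2 : ∀ x : ℤ, (fun x => P s (fun t => w (x + ((t : ℕ) : ℤ))) i) (x + (p : ℤ))
          = (fun x => P s (fun t => w (x + ((t : ℕ) : ℤ))) i) x := by
        intro x
        dsimp only
        have e : (fun t : Fin n => w (x + (p : ℤ) + ((t : ℕ) : ℤ)))
            = fun t : Fin n => w (x + ((t : ℕ) : ℤ)) := by
          funext t
          rw [show x + (p : ℤ) + ((t : ℕ) : ℤ) = (x + ((t : ℕ) : ℤ)) + (p : ℤ) by ring, hper]
        rw [e]
      exact (sum_shift p hp (fun x => P s (fun t => w (x + ((t : ℕ) : ℤ))) i) hper2 i).symm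
    rw [Finset.sum_congr rfl hswap, Finset.sum_comm]
    apply Finset.sum_le_sum
    intro m _
    have h := h3 (fun t : ℕ => w ((m : ℤ) - ((n - 1 : ℕ) : ℤ) + (t : ℤ)))
    beta_reduce at h
    have e1 : ∀ i ∈ Finset.range n,
        (fun t : Fin n => w ((m : ℤ) - ((n - 1 : ℕ) : ℤ) + (((n - 1 - i + (t : ℕ)) : ℕ) : ℤ)))
          = fun t : Fin n => w (((m : ℤ) - (i : ℤ)) + ((t : ℕ) : ℤ)) := by
      intro i hi
      funext t
      congr 1
      have hi1 : i < n := Finset.mem_range.1 hi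
      have ht : (t : ℕ) < n := t.isLt
      omega
    rw [Finset.sum_congr rfl (fun i hi => by rw [e1 i hi])] at h
    rw [show (m : ℤ) - ((n - 1 : ℕ) : ℤ) + (((n - 1 : ℕ)) : ℤ) = (m : ℤ) by ring] at h
    exact h
end

section
/- Let Q = {0,…,q−1} and f : Q^n → Q. Then f is non-increasing (f ∈ CA^-(q,n)) if and only if there exists a function p : Q^n × {0,…,n−1} → ℕ such that: (1) ∑_{i=0}^{n−1} p(w,i) = f(w) for all w ∈ Q^n; and (2) for all (w_0,…,w_{2n−2}) ∈ Q^{2n−1}: ∑_{i=0}^{n−1} p((w_{n−1−i},…,w_{2n−2−i}), i) ≤ w_{n−1}. (Interpretation: p(w,i) is the number of particles that the cell holding w_i contributes to the image cell of the window w, so that every non-increasing CA is the projection of a particle automaton with vanishing particles.) -/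
namespace PartRep

lemma shift_succ (p : ℕ) (G : ℤ → ℤ) (hG : ∀ j : ℤ, G (j + (p : ℤ)) = G j) (c : ℤ) :
    ∑ k ∈ Finset.range p, G ((k : ℤ) + (c + 1)) = ∑ k ∈ Finset.range p, G ((k : ℤ) + c) := by
  have h1 : ∑ k ∈ Finset.range (p+1), G ((k : ℤ) + c)
      = (∑ k ∈ Finset.range p, G ((k:ℤ) + (c + 1))) + G ((0:ℤ) + c) := by
    rw [Finset.sum_range_succ']
    congr 1
    apply Finset.sum_congr rfl
    intro i _
    congr 1
    push_cast
    ring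
  have h2 : ∑ k ∈ Finset.range (p+1), G ((k : ℤ) + c)
      = (∑ k ∈ Finset.range p, G ((k:ℤ) + c)) + G ((p : ℤ) + c) := by
    rw [Finset.sum_range_succ]
  have h3 : G ((p : ℤ) + c) = G ((0:ℤ) + c) := by
    rw [show (p:ℤ) + c = ((0:ℤ) + c) + (p:ℤ) by ring, hG]
  omega

lemma shift_nat (p : ℕ) (G : ℤ → ℤ) (hG : ∀ j : ℤ, G (j + (p : ℤ)) = G j) (c : ℤ) (d : ℕ) :
    ∑ k ∈ Finset.range p, G ((k : ℤ) + (c + (d : ℤ))) = ∑ k ∈ Finset.range p, G ((k : ℤ) + c) := by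
  induction d with
  | zero => simp
  | succ d ih =>
      have h := shift_succ p G hG (c + (d:ℤ))
      calc ∑ k ∈ Finset.range p, G ((k:ℤ) + (c + (↑(d+1):ℤ)))
          = ∑ k ∈ Finset.range p, G ((k:ℤ) + ((c + (d:ℤ)) + 1)) := by
            apply Finset.sum_congr rfl; intro i _; congr 1; push_cast; ring
        _ = ∑ k ∈ Finset.range p, G ((k:ℤ) + (c + (d:ℤ))) := h
        _ = _ := ih

lemma shift_int (p : ℕ) (hp : 1 ≤ p) (G : ℤ → ℤ) (hG : ∀ j : ℤ, G (j + (p : ℤ)) = G j) (c : ℤ) :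
    ∑ k ∈ Finset.range p, G ((k : ℤ) + c) = ∑ k ∈ Finset.range p, G (k : ℤ) := by
  have hper : ∀ (M : ℕ) (j : ℤ), G (j + (M:ℤ) * (p:ℤ)) = G j := by
    intro M
    induction M with
    | zero => intro j; simp
    | succ M ih =>
        intro j
        calc G (j + (↑(M+1):ℤ) * (p:ℤ)) = G ((j + (M:ℤ)*(p:ℤ)) + (p:ℤ)) := by
              congr 1; push_cast; ring
          _ = G (j + (M:ℤ)*(p:ℤ)) := hG _
          _ = G j := ih j
  obtain ⟨N, hN⟩ : ∃ N : ℕ, 0 ≤ c + (N:ℤ) * (p:ℤ) := by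
    refine ⟨c.natAbs, ?_⟩
    have h0 : (0:ℤ) ≤ (c.natAbs:ℤ) := Int.natCast_nonneg _
    have h1 : (1:ℤ) ≤ (p:ℤ) := by exact_mod_cast hp
    have h2 : (c.natAbs:ℤ) * 1 ≤ (c.natAbs:ℤ) * (p:ℤ) := by
      apply mul_le_mul_of_nonneg_left h1 h0
    have h3 : -c ≤ (c.natAbs:ℤ) := by omega
    nlinarith
  obtain ⟨d, hd⟩ : ∃ d : ℕ, (d : ℤ) = c + (N:ℤ) * (p:ℤ) := ⟨(c + N*p).toNat, by omega⟩
  calc ∑ k ∈ Finset.range p, G ((k : ℤ) + c)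
      = ∑ k ∈ Finset.range p, G (((k : ℤ) + c) + (N:ℤ) * (p:ℤ)) := by
        apply Finset.sum_congr rfl; intro i _
        rw [hper N]
    _ = ∑ k ∈ Finset.range p, G ((k : ℤ) + ((0:ℤ) + (d:ℤ))) := by
        apply Finset.sum_congr rfl; intro i _; congr 1; rw [hd]; ring
    _ = ∑ k ∈ Finset.range p, G ((k : ℤ) + (0:ℤ)) := shift_nat p G hG 0 d
    _ = _ := by apply Finset.sum_congr rfl; intro i _; norm_num

/-- Easy direction -/
lemma easy (q n : ℕ) (hn : 1 ≤ n)
    (f : (Fin n → Fin q) → Fin q)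
    (P : (Fin n → Fin q) → Fin n → ℕ)
    (h1 : ∀ w : Fin n → Fin q, ∑ i : Fin n, P w i = ((f w : ℕ)))
    (h2 : ∀ w : ℕ → Fin q,
          ∑ i : Fin n, P (fun t => w (n - 1 - (i : ℕ) + (t : ℕ))) i ≤ ((w (n - 1) : ℕ))) :
    NonIncreasing q n f := by
  intro p hp w hper
  have hwin : ∀ j : ℤ, (fun t : Fin n => w ((j + (p:ℤ)) + ((t:ℕ):ℤ))) = (fun t : Fin n => w (j + ((t:ℕ):ℤ))) := by
    intro j; funext t
    rw [show j + (p:ℤ) + ((t:ℕ):ℤ) = (j + ((t:ℕ):ℤ)) + (p:ℤ) by ring, hper]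
  have step1 : ∑ k ∈ Finset.range p, ((f (fun t => w ((k : ℤ) + ((t : ℕ) : ℤ)))) : ℤ)
      = ∑ i : Fin n, ∑ k ∈ Finset.range p, ((P (fun t => w ((k : ℤ) + ((t:ℕ):ℤ))) i : ℤ)) := by
    rw [Finset.sum_comm]
    apply Finset.sum_congr rfl
    intro k _
    rw [show ((f (fun t => w ((k : ℤ) + ((t : ℕ) : ℤ)))) : ℤ)
        = ((∑ i : Fin n, P (fun t => w ((k : ℤ) + ((t:ℕ):ℤ))) i : ℕ) : ℤ) by rw [h1]]
    push_cast
    rfl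
  rw [step1]
  have step2 : ∀ i : Fin n, ∑ k ∈ Finset.range p, ((P (fun t => w ((k : ℤ) + ((t:ℕ):ℤ))) i : ℤ))
      = ∑ c ∈ Finset.range p, ((P (fun t => w (((c:ℤ) + -((i:ℕ):ℤ)) + ((t:ℕ):ℤ))) i : ℤ)) := by
    intro i
    have := shift_int p hp (fun j => ((P (fun t => w (j + ((t:ℕ):ℤ))) i : ℤ)))
      (by intro j; rw [hwin j]) (-((i:ℕ):ℤ))
    rw [← this]
  calc ∑ i : Fin n, ∑ k ∈ Finset.range p, ((P (fun t => w ((k : ℤ) + ((t:ℕ):ℤ))) i : ℤ))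
      = ∑ i : Fin n, ∑ c ∈ Finset.range p, ((P (fun t => w (((c:ℤ) + -((i:ℕ):ℤ)) + ((t:ℕ):ℤ))) i : ℤ)) := by
        apply Finset.sum_congr rfl; intro i _; exact step2 i
    _ = ∑ c ∈ Finset.range p, ∑ i : Fin n, ((P (fun t => w (((c:ℤ) + -((i:ℕ):ℤ)) + ((t:ℕ):ℤ))) i : ℤ)) :=
        Finset.sum_comm
    _ ≤ ∑ c ∈ Finset.range p, ((w (c : ℤ)) : ℤ) := by
        apply Finset.sum_le_sum
        intro c _
        have key := h2 (fun t : ℕ => w ((c:ℤ) - ((n:ℤ) - 1) + (t:ℤ)))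
        have hmid : w ((c:ℤ) - ((n:ℤ) - 1) + ((n-1:ℕ):ℤ)) = w (c:ℤ) := by
          congr 1; push_cast [Nat.cast_sub hn]; ring
        have key' : ∑ i : Fin n, P (fun t : Fin n => w (((c:ℤ) + -((i:ℕ):ℤ)) + ((t:ℕ):ℤ))) i ≤ ((w (c:ℤ) : ℕ)) := by
          calc ∑ i : Fin n, P (fun t : Fin n => w (((c:ℤ) + -((i:ℕ):ℤ)) + ((t:ℕ):ℤ))) i
              = ∑ i : Fin n, P (fun t : Fin n => w ((c:ℤ) - ((n:ℤ) - 1) + ((n - 1 - (i:ℕ) + (t:ℕ) : ℕ):ℤ))) i := by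
                apply Finset.sum_congr rfl; intro i _
                congr 1; funext t; congr 1
                have hi : (i:ℕ) ≤ n - 1 := by have := i.isLt; omega
                push_cast [Nat.cast_sub hi, Nat.cast_sub hn]
                ring
            _ ≤ ((w ((c:ℤ) - ((n:ℤ) - 1) + ((n-1:ℕ):ℤ)) : ℕ)) := key
            _ = _ := by rw [hmid]
        exact_mod_cast key'


variable (q n : ℕ) (f : (Fin n → Fin q) → Fin q)

def winF (x : ℕ → Fin q) (k : ℕ) : Fin n → Fin q := fun t => x (k + (t : ℕ))

def Fsum (x : ℕ → Fin q) (m : ℕ) : ℕ := ∑ k ∈ Finset.range m, ((f (winF q n x k)) : ℕ)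

def SsumW (x : ℕ → Fin q) (m : ℕ) : ℕ := ∑ k ∈ Finset.range m, ((x (n - 1 + k) : ℕ))

def PadW (x : ℕ → Fin q) : Prop := ∀ j, j < n - 1 → (x j : ℕ) = 0

def costW (x : ℕ → Fin q) (m : ℕ) : ℕ := SsumW q n x m - Fsum q n f x m

lemma keyA (hq : 0 < q) (hn : 0 < n) (hni : NonIncreasing q n f)
    (x : ℕ → Fin q) (m : ℕ) (hx : PadW q n x) :
    Fsum q n f x m ≤ SsumW q n x m := by
  rcases Nat.eq_zero_or_pos m with hm | hm
  · subst hm; simp [Fsum, SsumW]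
  set p : ℕ := m + (n - 1) with hp
  have hp1 : 1 ≤ p := by omega
  set y : ℤ → Fin q := fun j => if h : ((j % (p:ℤ)).toNat) < m then x (n - 1 + (j % (p:ℤ)).toNat) else ⟨0, hq⟩ with hy
  have hyper : ∀ j : ℤ, y (j + (p:ℤ)) = y j := by
    intro j
    have h : (j + (p:ℤ)) % (p:ℤ) = j % (p:ℤ) := by
      rw [show j + (p:ℤ) = j + 1 * (p:ℤ) by ring, Int.add_mul_emod_self_right]
    simp only [hy, h]
  have hni' := hni p hp1 y hyper
  have hval : ∀ k : ℕ, k < p → (((k:ℤ)) % (p:ℤ)).toNat = k := by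
    intro k hk
    have h : ((k:ℤ)) % (p:ℤ) = (k:ℤ) := by
      apply Int.emod_eq_of_lt (by positivity) (by exact_mod_cast hk)
    rw [h]; simp
  -- value of y at natural positions
  have hynat : ∀ k : ℕ, k < p → y (k:ℤ) = if h : k < m then x (n - 1 + k) else ⟨0, hq⟩ := by
    intro k hk
    simp only [hy, hval k hk]
  -- sum of letters
  have hlet : ∑ k ∈ Finset.range p, ((y (k : ℤ)) : ℤ) = (SsumW q n x m : ℤ) := by
    have hsplit : Finset.range p = Finset.range m ∪ Finset.Ico m p := by
      rw [Finset.range_eq_Ico, Finset.range_eq_Ico]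
      exact (Finset.Ico_union_Ico_eq_Ico (by omega : 0 ≤ m) (by omega : m ≤ p)).symm
    rw [hsplit, Finset.sum_union (by
      rw [Finset.range_eq_Ico]
      exact Finset.Ico_disjoint_Ico_consecutive 0 m p)]
    have h1 : ∑ k ∈ Finset.range m, ((y (k : ℤ)) : ℤ) = (SsumW q n x m : ℤ) := by
      rw [SsumW, Nat.cast_sum]
      apply Finset.sum_congr rfl
      intro k hk
      simp only [Finset.mem_range] at hk
      rw [hynat k (by omega), dif_pos hk]
    have h2 : ∑ k ∈ Finset.Ico m p, ((y (k : ℤ)) : ℤ) = 0 := by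
      apply Finset.sum_eq_zero
      intro k hk
      simp only [Finset.mem_Ico] at hk
      rw [hynat k hk.2, dif_neg (by omega : ¬ k < m)]
      simp
    omega
  set ι : ℕ → ℕ := fun k => if n - 1 ≤ k then k - (n - 1) else k + m with hι
  have hιlt : ∀ k, k < m → ι k < p := by intro k hk; simp only [hι]; split <;> omega
  have hιinj : ∀ k₁ ∈ Finset.range m, ∀ k₂ ∈ Finset.range m, ι k₁ = ι k₂ → k₁ = k₂ := by
    intro k₁ h₁ k₂ h₂ h
    simp only [Finset.mem_range] at h₁ h₂
    simp only [hι] at h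
    split at h <;> split at h <;> omega
  have hwin : ∀ k, k < m → (fun t : Fin n => y ((ι k : ℤ) + ((t:ℕ):ℤ))) = winF q n x k := by
    intro k hk
    funext t
    have ht := t.isLt
    have hcast : (ι k : ℤ) + ((t:ℕ):ℤ) = ((ι k + (t:ℕ) : ℕ) : ℤ) := by push_cast; ring
    rw [hcast]
    -- reduce the index mod p in ℕ
    have hred : ∃ r : ℕ, r < p ∧ ((((ι k + (t:ℕ) : ℕ)) : ℤ)) % (p:ℤ) = (r : ℤ) ∧
        ((n - 1 ≤ k + (t:ℕ) ∧ r = k + (t:ℕ) - (n-1)) ∨ (k + (t:ℕ) < n - 1 ∧ m ≤ r)) := by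
      by_cases hc : n - 1 ≤ k + (t:ℕ)
      · refine ⟨k + (t:ℕ) - (n-1), by omega, ?_, Or.inl ⟨hc, rfl⟩⟩
        by_cases hb : n - 1 ≤ k
        · have : ι k + (t:ℕ) = k + (t:ℕ) - (n-1) := by simp only [hι, if_pos hb]; omega
          rw [this]
          exact Int.emod_eq_of_lt (by positivity) (by exact_mod_cast (by omega : k + (t:ℕ) - (n-1) < p))
        · have h1 : ι k + (t:ℕ) = (k + (t:ℕ) - (n-1)) + p := by simp only [hι, if_neg hb]; omega
          have h2 : (((k + (t:ℕ) - (n-1)) + p : ℕ) : ℤ) % (p:ℤ) = (((k + (t:ℕ) - (n-1) : ℕ)) : ℤ) := by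
            rw [show (((k + (t:ℕ) - (n-1)) + p : ℕ) : ℤ) = ((k + (t:ℕ) - (n-1) : ℕ) : ℤ) + 1 * (p:ℤ) by push_cast; ring,
              Int.add_mul_emod_self_right]
            exact Int.emod_eq_of_lt (by positivity) (by exact_mod_cast (by omega : k + (t:ℕ) - (n-1) < p))
          rw [h1]
          exact h2
      · have hb : ¬ n - 1 ≤ k := by omega
        refine ⟨k + m + (t:ℕ), by omega, ?_, ?_⟩
        · have h1 : ι k + (t:ℕ) = k + m + (t:ℕ) := by simp only [hι, if_neg hb]
          rw [h1]
          exact Int.emod_eq_of_lt (by positivity) (by exact_mod_cast (by omega : k + m + (t:ℕ) < p))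
        · exact Or.inr ⟨by omega, by omega⟩
    obtain ⟨r, hrp, hrmod, hrcase⟩ := hred
    have hytoNat : ((((ι k + (t:ℕ) : ℕ) : ℤ)) % (p:ℤ)).toNat = r := by rw [hrmod]; simp
    simp only [hy, hytoNat]
    rcases hrcase with ⟨hc, hr⟩ | ⟨hc, hr⟩
    · rw [dif_pos (by omega : r < m)]
      show x (n - 1 + r) = winF q n x k t
      have : n - 1 + r = k + (t:ℕ) := by omega
      rw [this]; rfl
    · rw [dif_neg (by omega : ¬ r < m)]
      show (⟨0, hq⟩ : Fin q) = winF q n x k t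
      have hz := hx (k + (t:ℕ)) hc
      apply Fin.ext
      simp only [winF]
      omega
  -- assemble
  have hFs : (Fsum q n f x m : ℤ)
      = ∑ k ∈ Finset.range m, ((f (fun t : Fin n => y ((ι k : ℤ) + ((t:ℕ):ℤ))) : ℕ) : ℤ) := by
    rw [Fsum, Nat.cast_sum]
    apply Finset.sum_congr rfl
    intro k hk
    simp only [Finset.mem_range] at hk
    rw [hwin k hk]
  have himg : ∑ k ∈ Finset.range m, ((f (fun t : Fin n => y ((ι k : ℤ) + ((t:ℕ):ℤ))) : ℕ) : ℤ)
      = ∑ j ∈ (Finset.range m).image ι, ((f (fun t : Fin n => y ((j : ℤ) + ((t:ℕ):ℤ))) : ℕ) : ℤ) :=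
    (Finset.sum_image (f := fun j : ℕ => ((f (fun t : Fin n => y ((j : ℤ) + ((t:ℕ):ℤ))) : ℕ) : ℤ)) hιinj).symm
  have hsub : ∑ j ∈ (Finset.range m).image ι, ((f (fun t : Fin n => y ((j : ℤ) + ((t:ℕ):ℤ))) : ℕ) : ℤ)
      ≤ ∑ j ∈ Finset.range p, ((f (fun t : Fin n => y ((j : ℤ) + ((t:ℕ):ℤ))) : ℕ) : ℤ) := by
    apply Finset.sum_le_sum_of_subset_of_nonneg
    · intro j hj
      simp only [Finset.mem_image, Finset.mem_range] at hj ⊢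
      obtain ⟨k, hk, rfl⟩ := hj
      exact hιlt k hk
    · intro j _ _; positivity
  have : (Fsum q n f x m : ℤ) ≤ (SsumW q n x m : ℤ) := by
    rw [hFs, himg]
    calc _ ≤ _ := hsub
      _ ≤ ∑ k ∈ Finset.range p, ((y (k : ℤ)) : ℤ) := hni'
      _ = _ := hlet
  exact_mod_cast this

def PsiSet (s : ℕ → Fin q) : Set ℕ :=
  {c | ∃ x m, PadW q n x ∧ (∀ t, t < n - 1 → x (m + t) = s t) ∧ costW q n f x m = c}

noncomputable def Psi (s : ℕ → Fin q) : ℕ := sInf (PsiSet q n f s)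

lemma psiSet_nonempty (hq : 0 < q) (s : ℕ → Fin q) : (PsiSet q n f s).Nonempty := by
  set x : ℕ → Fin q := fun j => if h : n - 1 ≤ j ∧ j < (n-1) + (n-1) then s (j - (n-1)) else ⟨0, hq⟩ with hx
  refine ⟨costW q n f x (n-1), x, n - 1, ?_, ?_, rfl⟩
  · intro j hj; simp only [hx]; rw [dif_neg (by omega)]
  · intro t ht; simp only [hx]; rw [dif_pos (by omega)]; congr 1; omega

lemma psi_mem (hq : 0 < q) (s : ℕ → Fin q) : Psi q n f s ∈ PsiSet q n f s :=
  Nat.sInf_mem (psiSet_nonempty q n f hq s)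

lemma psi_le (s : ℕ → Fin q) {c : ℕ} (hc : c ∈ PsiSet q n f s) : Psi q n f s ≤ c :=
  Nat.sInf_le hc

lemma psi_congr (s s' : ℕ → Fin q) (h : ∀ t, t < n - 1 → s t = s' t) :
    Psi q n f s = Psi q n f s' := by
  unfold Psi
  congr 1
  unfold PsiSet
  ext c
  constructor
  · rintro ⟨x, m, h1, h2, h3⟩
    exact ⟨x, m, h1, fun t ht => by rw [h2 t ht, h t ht], h3⟩
  · rintro ⟨x, m, h1, h2, h3⟩
    exact ⟨x, m, h1, fun t ht => by rw [h2 t ht, ← h t ht], h3⟩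

lemma psi_le_sum (hq : 0 < q) (s : ℕ → Fin q) :
    Psi q n f s ≤ ∑ t ∈ Finset.range (n-1), ((s t : ℕ)) := by
  set x : ℕ → Fin q := fun j => if h : n - 1 ≤ j ∧ j < (n-1) + (n-1) then s (j - (n-1)) else ⟨0, hq⟩ with hx
  have hmem : costW q n f x (n-1) ∈ PsiSet q n f s := by
    refine ⟨x, n - 1, ?_, ?_, rfl⟩
    · intro j hj; simp only [hx]; rw [dif_neg (by omega)]
    · intro t ht; simp only [hx]; rw [dif_pos (by omega)]; congr 1; omega
  calc Psi q n f s ≤ costW q n f x (n-1) := psi_le q n f s hmem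
    _ ≤ SsumW q n x (n-1) := Nat.sub_le _ _
    _ = ∑ t ∈ Finset.range (n-1), ((s t : ℕ)) := by
        unfold SsumW
        apply Finset.sum_congr rfl
        intro k hk
        simp only [Finset.mem_range] at hk
        simp only [hx]
        rw [dif_pos (by omega)]
        congr 2
        omega

lemma psi_zero_of (hq : 0 < q) (s : ℕ → Fin q) (h : ∀ t, t < n - 1 → (s t : ℕ) = 0) :
    Psi q n f s = 0 := by
  have hmem : (0:ℕ) ∈ PsiSet q n f s := by
    refine ⟨s, 0, h, ?_, ?_⟩
    · intro t ht; rw [Nat.zero_add]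
    · simp [costW, SsumW, Fsum]
  exact Nat.le_zero.mp (psi_le q n f s hmem)

def initv (hn : 0 < n) (v : Fin n → Fin q) : ℕ → Fin q :=
  fun t => if h : t < n then v ⟨t, h⟩ else v ⟨0, hn⟩

def tailv (hn : 0 < n) (v : Fin n → Fin q) : ℕ → Fin q :=
  fun t => if h : t + 1 < n then v ⟨t + 1, h⟩ else v ⟨0, hn⟩

lemma psi_relax (hq : 0 < q) (hn : 0 < n) (hni : NonIncreasing q n f) (v : Fin n → Fin q) :
    (f v : ℕ) + Psi q n f (tailv q n hn v)
      ≤ ((v ⟨n-1, by omega⟩ : ℕ)) + Psi q n f (initv q n hn v) := by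
  obtain ⟨x, m, hpad, hst, hcost⟩ := psi_mem q n f hq (initv q n hn v)
  set a : Fin q := v ⟨n-1, by omega⟩ with ha
  set x' : ℕ → Fin q := fun j => if j = m + (n-1) then a else x j with hx'
  have hpad' : PadW q n x' := by
    intro j hj
    simp only [hx']
    rw [if_neg (by omega)]
    exact hpad j hj
  have hst' : ∀ t, t < n - 1 → x' (m + 1 + t) = tailv q n hn v t := by
    intro t ht
    simp only [hx', tailv]
    by_cases hteq : t = n - 2
    · rw [if_pos (by omega), dif_pos (by omega)]
      simp only [ha]
      exact congrArg v (Fin.ext (show n - 1 = t + 1 by omega))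
    · rw [if_neg (by omega), dif_pos (by omega)]
      have := hst (t+1) (by omega)
      rw [show m + 1 + t = m + (t+1) by ring, this]
      simp only [initv]
      rw [dif_pos (by omega)]
  have hxeq : ∀ j, j < m + (n-1) → x' j = x j := by
    intro j hj; simp only [hx']; rw [if_neg (by omega)]
  -- F and S computations
  have hFs : Fsum q n f x' (m+1) = Fsum q n f x m + (f v : ℕ) := by
    unfold Fsum
    rw [Finset.sum_range_succ]
    congr 1
    · apply Finset.sum_congr rfl
      intro k hk
      simp only [Finset.mem_range] at hk
      have hw : winF q n x' k = winF q n x k := by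
        funext t
        exact hxeq (k + (t:ℕ)) (by have := t.isLt; omega)
      rw [hw]
    · have hwv : winF q n x' m = v := by
        funext t
        have ht := t.isLt
        unfold winF
        simp only [hx']
        by_cases hc : (t:ℕ) = n - 1
        · rw [if_pos (by omega), ha]
          apply congrArg v
          apply Fin.ext
          show n - 1 = (t:ℕ)
          omega
        · rw [if_neg (by omega)]
          have := hst (t:ℕ) (by omega)
          rw [this]
          simp only [initv]
          rw [dif_pos (by omega)]
      rw [hwv]
  have hSs : SsumW q n x' (m+1) = SsumW q n x m + (a : ℕ) := by
    unfold SsumW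
    rw [Finset.sum_range_succ]
    congr 1
    · apply Finset.sum_congr rfl
      intro k hk
      simp only [Finset.mem_range] at hk
      rw [hxeq (n - 1 + k) (by omega)]
    · simp only [hx']
      rw [if_pos (by omega)]
  have hk1 := keyA q n f hq hn hni x m hpad
  have hk2 := keyA q n f hq hn hni x' (m+1) hpad'
  have hmem' : costW q n f x' (m+1) ∈ PsiSet q n f (tailv q n hn v) :=
    ⟨x', m+1, hpad', hst', rfl⟩
  have hle := psi_le q n f _ hmem'
  unfold costW at hle hcost
  rw [hFs, hSs] at hle hk2
  omega

def RC (s : ℕ → Fin q) (j : ℕ) : ℕ := ∑ t ∈ Finset.Ico j (n-1), ((s t : ℕ))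

noncomputable def Cc (s : ℕ → Fin q) (j : ℕ) : ℕ := min (Psi q n f s) (RC q n s j)

noncomputable def shps (s : ℕ → Fin q) (j : ℕ) : ℕ := Cc q n f s j - Cc q n f s (j+1)

lemma wcongr (v : Fin n → Fin q) (i j : ℕ) (hi : i < n) (hj : j < n) (hij : i = j) :
    v ⟨i, hi⟩ = v ⟨j, hj⟩ := by subst hij; rfl

lemma RC_antitone (s : ℕ → Fin q) {j j' : ℕ} (h : j ≤ j') : RC q n s j' ≤ RC q n s j :=
  Finset.sum_le_sum_of_subset (Finset.Ico_subset_Ico h le_rfl)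

lemma Cc_succ_le (s : ℕ → Fin q) (j : ℕ) : Cc q n f s (j+1) ≤ Cc q n f s j :=
  min_le_min le_rfl (RC_antitone q n s (Nat.le_succ j))

lemma Cc_zero (hq : 0 < q) (s : ℕ → Fin q) : Cc q n f s 0 = Psi q n f s := by
  apply min_eq_left
  have := psi_le_sum q n f hq s
  unfold RC
  rwa [← Finset.range_eq_Ico]

lemma Cc_top (s : ℕ → Fin q) : Cc q n f s (n-1) = 0 := by
  unfold Cc RC
  simp

lemma shps_cast (s : ℕ → Fin q) (j : ℕ) :
    ((shps q n f s j : ℤ)) = ((Cc q n f s j : ℤ)) - ((Cc q n f s (j+1) : ℤ)) := by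
  unfold shps
  have := Cc_succ_le q n f s j
  omega

lemma sum_shps (s : ℕ → Fin q) (k : ℕ) :
    ∑ j ∈ Finset.range k, ((shps q n f s j : ℤ)) = ((Cc q n f s 0 : ℤ)) - ((Cc q n f s k : ℤ)) := by
  have h : ∀ j ∈ Finset.range k, ((shps q n f s j : ℤ)) = (fun j => ((Cc q n f s j : ℤ))) j - (fun j => ((Cc q n f s j : ℤ))) (j+1) := by
    intro j _; exact shps_cast q n f s j
  rw [Finset.sum_congr rfl h, Finset.sum_range_sub' (fun j => ((Cc q n f s j : ℤ)))]

lemma RC_congr (s s' : ℕ → Fin q) (h : ∀ t, t < n - 1 → s t = s' t) (j : ℕ) :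
    RC q n s j = RC q n s' j := by
  unfold RC
  apply Finset.sum_congr rfl
  intro t ht
  simp only [Finset.mem_Ico] at ht
  rw [h t ht.2]

lemma shps_congr (s s' : ℕ → Fin q) (h : ∀ t, t < n - 1 → s t = s' t) (j : ℕ) :
    shps q n f s j = shps q n f s' j := by
  unfold shps Cc
  rw [psi_congr q n f s s' h, RC_congr q n s s' h j, RC_congr q n s s' h (j+1)]

lemma psi_tail_le (hq : 0 < q) (hn : 0 < n) (hni : NonIncreasing q n f) (v : Fin n → Fin q) :
    Psi q n f (tailv q n hn v) ≤ ((v ⟨n-1, by omega⟩ : ℕ)) + Psi q n f (initv q n hn v) := by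
  have := psi_relax q n f hq hn hni v
  omega

lemma RC_shift (hn : 0 < n) (v : Fin n → Fin q) (j : ℕ) (hj : j + 1 ≤ n - 1) :
    RC q n (tailv q n hn v) j = RC q n (initv q n hn v) (j+1) + ((v ⟨n-1, by omega⟩ : ℕ)) := by
  have h1 : RC q n (tailv q n hn v) j = ∑ i ∈ Finset.range (n-1-j), ((tailv q n hn v (j+i) : ℕ)) := by
    rw [RC, Finset.sum_Ico_eq_sum_range]
  have h2 : RC q n (initv q n hn v) (j+1) = ∑ i ∈ Finset.range (n-1-(j+1)), ((initv q n hn v (j+1+i) : ℕ)) := by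
    rw [RC, Finset.sum_Ico_eq_sum_range]
  rw [h1, h2, show n-1-j = (n-1-(j+1)) + 1 by omega, Finset.sum_range_succ]
  congr 1
  · apply Finset.sum_congr rfl
    intro i hi
    simp only [Finset.mem_range] at hi
    simp only [tailv, initv]
    rw [dif_pos (by omega), dif_pos (by omega)]
    congr 1
    exact congrArg v (by apply Fin.ext; show j + i + 1 = j + 1 + i; omega)
  · simp only [tailv]
    rw [dif_pos (by omega)]
    congr 1
    exact congrArg v (by apply Fin.ext; show j + (n-1-(j+1)) + 1 = n - 1; omega)

lemma sh_mono (hq : 0 < q) (hn : 0 < n) (hni : NonIncreasing q n f) (v : Fin n → Fin q)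
    (i : ℕ) (h1 : 1 ≤ i) (h2 : i + 1 ≤ n - 1) :
    shps q n f (tailv q n hn v) (i-1) ≤ shps q n f (initv q n hn v) i := by
  have e1 : RC q n (tailv q n hn v) (i-1) = RC q n (initv q n hn v) i + ((v ⟨n-1, by omega⟩ : ℕ)) := by
    have := RC_shift q n hn v (i-1) (by omega)
    rwa [show i - 1 + 1 = i by omega] at this
  have e2 : RC q n (tailv q n hn v) i = RC q n (initv q n hn v) (i+1) + ((v ⟨n-1, by omega⟩ : ℕ)) :=
    RC_shift q n hn v i h2
  have e3 : RC q n (initv q n hn v) (i+1) ≤ RC q n (initv q n hn v) i :=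
    RC_antitone q n _ (Nat.le_succ i)
  have e4 := psi_tail_le q n f hq hn hni v
  unfold shps Cc
  rw [e1, show i - 1 + 1 = i by omega, e2]
  simp only [Nat.min_def]
  split_ifs <;> omega

----------------------------------------------------------------
-- the particle function

noncomputable def rawT (hn : 0 < n) (w : Fin n → Fin q) (i : ℕ) : ℕ :=
  if i = n - 1 then ((w ⟨n-1, by omega⟩ : ℕ)) - Psi q n f (tailv q n hn w)
  else if i = 0 then shps q n f (initv q n hn w) 0
  else shps q n f (initv q n hn w) i - shps q n f (tailv q n hn w) (i-1)

noncomputable def sigW (hn : 0 < n) (w : Fin n → Fin q) : ℕ :=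
  (((w ⟨n-1, by omega⟩ : ℕ)) + Psi q n f (initv q n hn w)) - (Psi q n f (tailv q n hn w) + ((f w : ℕ)))

noncomputable def cumW (hn : 0 < n) (w : Fin n → Fin q) (i : ℕ) : ℕ :=
  (∑ i' ∈ Finset.range i, rawT q n f hn w i') - sigW q n f hn w

noncomputable def Pw (hn : 0 < n) (w : Fin n → Fin q) (i : ℕ) : ℕ :=
  cumW q n f hn w (i+1) - cumW q n f hn w i

lemma raw_sum (hq : 0 < q) (hn : 0 < n) (hni : NonIncreasing q n f) (w : Fin n → Fin q) :
    (∑ i ∈ Finset.range n, rawT q n f hn w i) + Psi q n f (tailv q n hn w)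
      = ((w ⟨n-1, by omega⟩ : ℕ)) + Psi q n f (initv q n hn w) := by
  set s := initv q n hn w with hs
  set s' := tailv q n hn w with hs'
  set a := ((w ⟨n-1, by omega⟩ : ℕ)) with ha
  by_cases hn1 : n = 1
  · subst hn1
    have hz : Psi q 1 f s' = 0 := psi_zero_of q 1 f hq s' (by intro t ht; omega)
    have hz2 : Psi q 1 f s = 0 := psi_zero_of q 1 f hq s (by intro t ht; omega)
    rw [Finset.sum_range_one, hz, hz2]
    unfold rawT
    rw [if_pos (by omega)]
    rw [hz]
    omega
  have hn2 : 2 ≤ n := by omega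
  set m := Psi q n f s with hm
  set m' := Psi q n f s' with hm'
  obtain ⟨K, hK⟩ : ∃ K, n = K + 2 := ⟨n - 2, by omega⟩
  have hsplit : ∑ i ∈ Finset.range n, rawT q n f hn w i
      = ((∑ i ∈ Finset.range K, rawT q n f hn w (i+1)) + rawT q n f hn w 0) + rawT q n f hn w (K+1) := by
    rw [show Finset.range n = Finset.range (K+1+1) by rw [hK]]
    rw [Finset.sum_range_succ, Finset.sum_range_succ']
  have hraw0 : rawT q n f hn w 0 = shps q n f s 0 := by
    unfold rawT; rw [if_neg (by omega), if_pos rfl]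
  have hrawlast : rawT q n f hn w (K+1) = a - m' := by
    unfold rawT; rw [if_pos (by omega : K+1 = n-1)]
  have hrawmid : ∀ i, i < K → rawT q n f hn w (i+1) = shps q n f s (i+1) - shps q n f s' i := by
    intro i hi
    unfold rawT
    rw [if_neg (by omega), if_neg (by omega)]
    rfl
  have hmono : ∀ i, i < K → shps q n f s' i ≤ shps q n f s (i+1) := by
    intro i hi
    have := sh_mono q n f hq hn hni w (i+1) (by omega) (by omega)
    rwa [show i + 1 - 1 = i by omega] at this
  have hS1 : ∑ i ∈ Finset.range K, ((shps q n f s (i+1) : ℤ)) = ((Cc q n f s 1 : ℤ)) - ((Cc q n f s (K+1) : ℤ)) := by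
    have h : ∀ i ∈ Finset.range K, ((shps q n f s (i+1) : ℤ)) = (fun j => ((Cc q n f s (j+1) : ℤ))) i - (fun j => ((Cc q n f s (j+1) : ℤ))) (i+1) := by
      intro i _
      simp only []
      rw [shps_cast]
    rw [Finset.sum_congr rfl h, Finset.sum_range_sub' (fun j => ((Cc q n f s (j+1) : ℤ)))]
  have hS2 : ∑ i ∈ Finset.range K, ((shps q n f s' i : ℤ)) = ((Cc q n f s' 0 : ℤ)) - ((Cc q n f s' K : ℤ)) :=
    sum_shps q n f s' K
  have hCs0 : Cc q n f s 0 = m := Cc_zero q n f hq s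
  have hCstop : Cc q n f s (K+1) = 0 := by
    rw [show K + 1 = n - 1 by omega]; exact Cc_top q n f s
  have hCs'0 : Cc q n f s' 0 = m' := Cc_zero q n f hq s'
  have hRCs' : RC q n s' K = a := by
    unfold RC
    rw [show Finset.Ico K (n-1) = {K} by rw [show n - 1 = K + 1 by omega]; exact Nat.Ico_succ_singleton K]
    rw [Finset.sum_singleton]
    simp only [hs', tailv]
    rw [dif_pos (by omega), ha]
    exact congrArg (fun z : Fin q => (z : ℕ)) (wcongr q n w (K+1) (n-1) (by omega) (by omega) (by omega))
  have hCs'top : Cc q n f s' K = min m' a := by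
    unfold Cc; rw [hRCs', hm']
  have hsh0 : ((shps q n f s 0 : ℤ)) = ((Cc q n f s 0 : ℤ)) - ((Cc q n f s 1 : ℤ)) := shps_cast q n f s 0
  have hminle : min m' a ≤ m' := min_le_left _ _
  have hminle2 : min m' a ≤ a := min_le_right _ _
  have hlast : ((a - m' : ℕ) : ℤ) = (a : ℤ) - ((min m' a : ℕ) : ℤ) := by
    rcases Nat.le_total m' a with h | h
    · rw [min_eq_left h]; omega
    · rw [min_eq_right h]; omega
  have hmid : ∑ i ∈ Finset.range K, ((shps q n f s (i+1) - shps q n f s' i : ℕ) : ℤ)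
      = (∑ i ∈ Finset.range K, ((shps q n f s (i+1) : ℤ))) - ∑ i ∈ Finset.range K, ((shps q n f s' i : ℤ)) := by
    rw [← Finset.sum_sub_distrib]
    apply Finset.sum_congr rfl
    intro i hi
    simp only [Finset.mem_range] at hi
    have := hmono i hi
    omega
  have goalZ : ((((∑ i ∈ Finset.range K, (shps q n f s (i+1) - shps q n f s' i)) + shps q n f s 0) + (a - m') + m' : ℕ) : ℤ)
      = ((a + m : ℕ) : ℤ) := by
    push_cast
    rw [hmid, hS1, hS2, hCs'0, hCstop, hCs'top, hsh0, hCs0, hlast]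
    push_cast
    omega
  rw [hsplit, hraw0, hrawlast, Finset.sum_congr rfl (fun i hi => hrawmid i (Finset.mem_range.mp hi))]
  exact_mod_cast goalZ


lemma cum_zero (hn : 0 < n) (w : Fin n → Fin q) : cumW q n f hn w 0 = 0 := by
  unfold cumW
  simp

lemma cum_succ_sub (hn : 0 < n) (w : Fin n → Fin q) (i : ℕ) :
    cumW q n f hn w (i+1) - cumW q n f hn w i ≤ rawT q n f hn w i ∧
    cumW q n f hn w i ≤ cumW q n f hn w (i+1) := by
  unfold cumW
  rw [Finset.sum_range_succ]
  omega

lemma pw_le_raw (hn : 0 < n) (w : Fin n → Fin q) (i : ℕ) :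
    Pw q n f hn w i ≤ rawT q n f hn w i := (cum_succ_sub q n f hn w i).1

lemma pw_partial (hn : 0 < n) (w : Fin n → Fin q) (k : ℕ) :
    ∑ i ∈ Finset.range k, Pw q n f hn w i = cumW q n f hn w k := by
  induction k with
  | zero => rw [Finset.sum_range_zero, cum_zero]
  | succ k ih =>
      rw [Finset.sum_range_succ, ih]
      have h := (cum_succ_sub q n f hn w k).2
      unfold Pw
      omega

lemma cond1 (hq : 0 < q) (hn : 0 < n) (hni : NonIncreasing q n f) (w : Fin n → Fin q) :
    ∑ i ∈ Finset.range n, Pw q n f hn w i = ((f w : ℕ)) := by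
  rw [pw_partial]
  unfold cumW sigW
  have h1 := raw_sum q n f hq hn hni w
  have h2 := psi_relax q n f hq hn hni w
  omega

lemma raw2 (hq : 0 < q) (hn : 0 < n) (hni : NonIncreasing q n f) (x : ℕ → Fin q) :
    ∑ i ∈ Finset.range n, rawT q n f hn (winF q n x (n-1-i)) i ≤ ((x (n-1) : ℕ)) := by
  set stA : ℕ → ℕ → Fin q := fun k => fun t => x (k + t) with hstA
  have hic : ∀ k t, t < n - 1 → initv q n hn (winF q n x k) t = stA k t := by
    intro k t ht
    simp only [initv, hstA]
    rw [dif_pos (by omega)]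
    rfl
  have htc : ∀ k t, t < n - 1 → tailv q n hn (winF q n x k) t = stA (k+1) t := by
    intro k t ht
    simp only [tailv, hstA]
    rw [dif_pos (by omega)]
    show x (k + (t+1)) = x (k + 1 + t)
    exact congrArg x (by omega)
  have hshc : ∀ k j, shps q n f (initv q n hn (winF q n x k)) j = shps q n f (stA k) j := by
    intro k j; exact shps_congr q n f _ _ (hic k) j
  have hshc' : ∀ k j, shps q n f (tailv q n hn (winF q n x k)) j = shps q n f (stA (k+1)) j := by
    intro k j; exact shps_congr q n f _ _ (htc k) j
  by_cases hn1 : n = 1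
  · rw [show Finset.range n = Finset.range 1 by rw [hn1], Finset.sum_range_one]
    unfold rawT
    rw [if_pos (by omega)]
    calc ((winF q n x (n-1-0) ⟨n-1, by omega⟩ : ℕ)) - Psi q n f (tailv q n hn (winF q n x (n-1-0)))
        ≤ ((winF q n x (n-1-0) ⟨n-1, by omega⟩ : ℕ)) := Nat.sub_le _ _
      _ = ((x (n-1) : ℕ)) := by
          show ((x ((n-1-0) + ((⟨n-1, by omega⟩ : Fin n) : ℕ)) : ℕ)) = ((x (n-1) : ℕ))
          have : (n-1-0) + (((⟨n-1, by omega⟩ : Fin n) : ℕ)) = n - 1 := by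
            show (n-1-0) + (n-1) = n - 1
            omega
          rw [this]
  -- n ≥ 2
  have hn2 : 2 ≤ n := by omega
  obtain ⟨K, hK⟩ : ∃ K, n = K + 2 := ⟨n - 2, by omega⟩
  set X : ℕ := ((x (n-1) : ℕ)) with hX
  set m1 : ℕ := Psi q n f (stA 1) with hm1
  set g : ℕ → ℕ := fun i => rawT q n f hn (winF q n x (n-1-i)) i with hg
  have hsplit : ∑ i ∈ Finset.range n, g i
      = ((∑ i ∈ Finset.range K, g (i+1)) + g 0) + g (K+1) := by
    rw [show Finset.range n = Finset.range (K+1+1) by rw [hK]]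
    rw [Finset.sum_range_succ, Finset.sum_range_succ']
  set Sh : ℕ → ℕ := fun k => shps q n f (stA k) (n-1-k) with hSh
  have hg0 : g 0 = Sh (n-1) := by
    simp only [hg, hSh]
    unfold rawT
    rw [if_neg (by omega), if_pos rfl, hshc (n-1-0) 0, show n-1-(n-1) = 0 by omega]
    norm_num
  have hglast : g (K+1) = X - m1 := by
    simp only [hg]
    unfold rawT
    rw [if_pos (by omega : K+1 = n-1)]
    have h1 : ((winF q n x (n-1-(K+1)) ⟨n-1, by omega⟩ : ℕ)) = X := by
      show ((x ((n-1-(K+1)) + (((⟨n-1, by omega⟩ : Fin n) : ℕ))) : ℕ)) = X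
      rw [hX]
      have : (n-1-(K+1)) + (((⟨n-1, by omega⟩ : Fin n) : ℕ)) = n - 1 := by
        show (n-1-(K+1)) + (n-1) = n - 1
        omega
      rw [this]
    have h2 : Psi q n f (tailv q n hn (winF q n x (n-1-(K+1)))) = m1 := by
      rw [hm1]
      apply psi_congr
      intro t ht
      rw [htc (n-1-(K+1)) t ht]
      have : n-1-(K+1)+1 = 1 := by omega
      rw [this]
    rw [h1, h2]
  have hgmid : ∀ i, i < K → g (i+1) = Sh (n-2-i) - Sh (n-1-i) := by
    intro i hi
    simp only [hg, hSh]
    unfold rawT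
    rw [if_neg (by omega), if_neg (by omega), hshc (n-1-(i+1)) (i+1)]
    rw [show (i+1) - 1 = i by omega, hshc' (n-1-(i+1)) i]
    rw [show n-1-(i+1) = n-2-i by omega, show n-2-i+1 = n-1-i by omega]
    rw [show n-1-(n-2-i) = i+1 by omega, show n-1-(n-1-i) = i by omega]
  have hmono2 : ∀ i, i < K → Sh (n-1-i) ≤ Sh (n-2-i) := by
    intro i hi
    simp only [hSh]
    rw [show n-1-(n-2-i) = i+1 by omega, show n-1-(n-1-i) = i by omega]
    have h := sh_mono q n f hq hn hni (winF q n x (n-2-i)) (i+1) (by omega) (by omega)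
    rw [show i+1-1 = i by omega, hshc (n-2-i) (i+1), hshc' (n-2-i) i] at h
    rw [show n-2-i+1 = n-1-i by omega] at h
    exact h
  -- Sh 1 = min m1 X
  have hSh1 : Sh 1 = min m1 X := by
    simp only [hSh]
    rw [show n-1-1 = n-2 by omega]
    unfold shps Cc
    have hR1 : RC q n (stA 1) (n-2) = X := by
      unfold RC
      rw [show Finset.Ico (n-2) (n-1) = {n-2} by rw [show n - 1 = (n-2) + 1 by omega]; exact Nat.Ico_succ_singleton (n-2)]
      rw [Finset.sum_singleton, hX]
      show ((x (1 + (n-2)) : ℕ)) = ((x (n-1) : ℕ))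
      rw [show 1 + (n-2) = n-1 by omega]
    have hR2 : RC q n (stA 1) (n-2+1) = 0 := by
      unfold RC
      rw [show n-2+1 = n-1 by omega, Finset.Ico_self, Finset.sum_empty]
    rw [hR1, hR2, ← hm1]
    simp
  -- cast computation
  have hlastZ : ((X - m1 : ℕ) : ℤ) = (X : ℤ) - ((min m1 X : ℕ) : ℤ) := by
    rcases Nat.le_total m1 X with h | h
    · rw [min_eq_left h]; omega
    · rw [min_eq_right h]; omega
  have hmidZ : ∑ i ∈ Finset.range K, ((g (i+1) : ℕ) : ℤ)
      = ((Sh 1 : ℤ)) - ((Sh (K+1) : ℤ)) := by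
    have h1 : ∀ i ∈ Finset.range K, ((g (i+1) : ℕ) : ℤ)
        = (fun j => ((Sh (j+1) : ℤ))) (K-1-i) - (fun j => ((Sh (j+1) : ℤ))) ((K-1-i)+1) := by
      intro i hi
      simp only [Finset.mem_range] at hi
      simp only []
      rw [hgmid i hi]
      have hmm := hmono2 i hi
      rw [show K-1-i+1 = n-2-i by omega, show n-2-i+1 = n-1-i by omega]
      omega
    rw [Finset.sum_congr rfl h1]
    rw [show (∑ i ∈ Finset.range K, ((fun j => ((Sh (j+1) : ℤ))) (K-1-i) - (fun j => ((Sh (j+1) : ℤ))) ((K-1-i)+1)))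
      = ∑ i ∈ Finset.range K, (fun j => ((Sh (j+1) : ℤ)) - ((Sh (j+2) : ℤ))) (K-1-i) by apply Finset.sum_congr rfl; intro i _; rfl]
    rw [Finset.sum_range_reflect (fun j => ((Sh (j+1) : ℤ)) - ((Sh (j+2) : ℤ))) K]
    have := Finset.sum_range_sub' (fun j => ((Sh (j+1) : ℤ))) K
    convert this using 2
  have hShtop : Sh (K+1) = Sh (n-1) := by rw [show K + 1 = n - 1 by omega]
  -- total
  have goalZ : ((((∑ i ∈ Finset.range K, g (i+1)) + g 0) + g (K+1) : ℕ) : ℤ) = (X : ℤ) := by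
    push_cast
    rw [hmidZ, hg0, hglast, hlastZ, hSh1, hShtop]
    have : ((min m1 X : ℕ) : ℤ) ≤ (X : ℤ) := by exact_mod_cast min_le_right m1 X
    omega
  have goalN : (((∑ i ∈ Finset.range K, g (i+1)) + g 0) + g (K+1) : ℕ) = X := by exact_mod_cast goalZ
  rw [hsplit, goalN]

lemma cond2 (hq : 0 < q) (hn : 0 < n) (hni : NonIncreasing q n f) (x : ℕ → Fin q) :
    ∑ i ∈ Finset.range n, Pw q n f hn (winF q n x (n-1-i)) i ≤ ((x (n-1) : ℕ)) := by
  calc ∑ i ∈ Finset.range n, Pw q n f hn (winF q n x (n-1-i)) i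
      ≤ ∑ i ∈ Finset.range n, rawT q n f hn (winF q n x (n-1-i)) i :=
        Finset.sum_le_sum (fun i _ => pw_le_raw q n f hn _ i)
    _ ≤ _ := raw2 q n f hq hn hni x

end PartRep

/-- `f` is non-increasing iff it admits a particle-contribution function
`P`, where `P w i` is the number of particles contributed by cell `i` of the window `w`
to the image cell.  Words of length `2n-1` in condition (2) are encoded as functions
`ℕ → Fin q` (only coordinates `0,…,2n-2` are read). -/
theorem nonincreasing_iff_particle_representation
    (q n : ℕ) (hn : 1 ≤ n)
    (f : (Fin n → Fin q) → Fin q) :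
    NonIncreasing q n f ↔
      ∃ P : (Fin n → Fin q) → Fin n → ℕ,
        (∀ w : Fin n → Fin q, ∑ i : Fin n, P w i = ((f w : ℕ))) ∧
        (∀ w : ℕ → Fin q,
          ∑ i : Fin n, P (fun t => w (n - 1 - (i : ℕ) + (t : ℕ))) i ≤ ((w (n - 1) : ℕ))) := by
  constructor
  · intro hni
    rcases Nat.eq_zero_or_pos q with hq0 | hq
    · subst hq0
      refine ⟨fun w i => 0, ?_, ?_⟩
      · intro w
        exact (f w).elim0
      · intro w
        exact (w 0).elim0
    · refine ⟨fun w i => PartRep.Pw q n f hn w ((i : ℕ)), ?_, ?_⟩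
      · intro w
        calc ∑ i : Fin n, PartRep.Pw q n f hn w ((i : ℕ))
            = ∑ i ∈ Finset.range n, PartRep.Pw q n f hn w i :=
              Fin.sum_univ_eq_sum_range (fun j => PartRep.Pw q n f hn w j) n
          _ = ((f w : ℕ)) := PartRep.cond1 q n f hq hn hni w
      · intro x
        have h := PartRep.cond2 q n f hq hn hni x
        refine le_trans (le_of_eq ?_) h
        exact Fin.sum_univ_eq_sum_range (fun j => PartRep.Pw q n f hn (PartRep.winF q n x (n-1-j)) j) n
  · rintro ⟨P, h1, h2⟩
    exact PartRep.easy q n hn f P h1 h2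
end

section
/- Let Q = {0,…,q−1} and f : Q^n → Q. For α ∈ Q let δ_α : Q → {0,1} be δ_α(x) = 1 if x = α and 0 otherwise. Say that f is state-conserving if for every p ≥ 1, every circular word w : ℤ/pℤ → Q, and every α ∈ Q: ∑_{k=0}^{p−1} δ_α(f(w_k,…,w_{k+n−1})) = ∑_{k=0}^{p−1} δ_α(w_k) (indices mod p). Then f is state-conserving if and only if for all α ∈ Q and all (x_1,…,x_n) ∈ Q^n: δ_α(f(x_1,…,x_n)) = δ_α(x_1) + ∑_{k=1}^{n−1} [ δ_α(f(0^{n−k}, x_2,…,x_{k+1})) − δ_α(f(0^{n−k}, x_1,…,x_k)) ], where 0^{n−k} denotes n−k consecutive zeros. -/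
/-- `delta α x = 1` if `x = α` and `0` otherwise. -/
def delta {q : ℕ} (α x : Fin q) : ℤ := if x = α then 1 else 0

/-- A local rule `f ∈ CA(q,n)` is state-conserving if, for every period `p ≥ 1`, every
`p`-periodic (circular) word `w` and every state `α`, the number of cells in state `α`
over one period is preserved by the rule. -/
def StateConserving (q n : ℕ) (f : (Fin n → Fin q) → Fin q) : Prop :=
  ∀ p : ℕ, 1 ≤ p → ∀ w : ℤ → Fin q, (∀ i : ℤ, w (i + (p : ℤ)) = w i) → ∀ α : Fin q,
    ∑ k ∈ Finset.range p, delta α (f (fun t => w ((k : ℤ) + ((t : ℕ) : ℤ)))) =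
    ∑ k ∈ Finset.range p, delta α (w (k : ℤ))

/-- auxiliary: the word `x_0 ⋯ x_{m-1} 0 0 ⋯`. -/
def padw {q : ℕ} [NeZero q] (m : ℕ) (x : ℕ → Fin q) : ℕ → Fin q :=
  fun t => if t < m then x t else 0

/-- auxiliary: the `p`-periodic bi-infinite word built from `v`. -/
def circ {q : ℕ} (p : ℕ) (v : ℕ → Fin q) : ℤ → Fin q :=
  fun i => v ((i % (p : ℤ)).toNat)

lemma circ_period {q : ℕ} (p : ℕ) (v : ℕ → Fin q) (i : ℤ) :
    circ p v (i + (p : ℤ)) = circ p v i := by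
  simp [circ]

lemma circ_nat {q : ℕ} (p : ℕ) (v : ℕ → Fin q) (a : ℕ) :
    circ p v ((a : ℕ) : ℤ) = v (a % p) := by
  have h : (((a : ℕ) : ℤ) % ((p : ℕ) : ℤ)).toNat = a % p := by omega
  simp only [circ, h]


/-- characterization of state-conserving rules.  Words of length `n` are
encoded as functions `ℕ → Fin q` (only coordinates `0,…,n-1` are read); `g` is `f` read
on the first `n` coordinates, and `pad m y` is the word `0^m y_0 y_1 ⋯`. -/
theorem state_conserving_iff
    (q n : ℕ) [NeZero q] (hn : 1 ≤ n)
    (f : (Fin n → Fin q) → Fin q)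
    (g : (ℕ → Fin q) → Fin q) (hg : ∀ y, g y = f (fun t => y (t : ℕ)))
    (pad : ℕ → (ℕ → Fin q) → ℕ → Fin q)
    (hpad : ∀ m y t, pad m y t = if t < m then 0 else y (t - m)) :
    StateConserving q n f ↔
      ∀ (α : Fin q) (x : ℕ → Fin q),
        delta α (g x) = delta α (x 0) +
          ∑ k ∈ Finset.Icc 1 (n - 1),
            (delta α (g (pad (n - k) (fun t => x (t + 1)))) -
             delta α (g (pad (n - k) x))) := by
  constructor
  · intro H α x
    -- f of the zero word is 0
    have h00 : f (fun _ => (0 : Fin q)) = 0 := by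
      have h := H 1 le_rfl (fun _ => 0) (fun i => rfl) (f (fun _ => (0 : Fin q)))
      simp [delta] at h
      exact h.symm
    set p := 2 * n - 1 with hpdef
    have hp1 : 1 ≤ p := by omega
    have hcast : ∀ (k : ℕ) (t : Fin n), ((k : ℤ) + ((t : ℕ) : ℤ)) = (((k + (t : ℕ) : ℕ)) : ℤ) := by
      intro k t; push_cast; ring
    have E1 := H p hp1 (circ p (padw n x)) (circ_period p _) α
    have E2 := H p hp1 (circ p (padw (n - 1) (fun s => x (s + 1)))) (circ_period p _) α
    -- LHS of E1
    have L1 : ∑ k ∈ Finset.range p, delta α (f fun t => circ p (padw n x) ((k : ℤ) + ((t : ℕ) : ℤ)))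
        = (∑ k ∈ Finset.range n, delta α (f fun t => if k + (t : ℕ) < n then x (k + (t : ℕ)) else 0))
          + ∑ m ∈ Finset.Icc 1 (n - 1), delta α (g (pad m x)) := by
      rw [Finset.range_eq_Ico, ← Finset.sum_Ico_consecutive _ (Nat.zero_le n) (by omega : n ≤ p)]
      congr 1
      · rw [← Finset.range_eq_Ico]
        refine Finset.sum_congr rfl fun k hk => ?_
        rw [Finset.mem_range] at hk
        refine congrArg (delta α) (congrArg f (funext fun t => ?_))
        have ht : (t : ℕ) < n := t.isLt
        rw [hcast, circ_nat, Nat.mod_eq_of_lt (by omega)]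
        rfl
      · have step : ∀ k ∈ Finset.Ico n p,
            delta α (f fun t => circ p (padw n x) ((k : ℤ) + ((t : ℕ) : ℤ)))
              = delta α (g (pad (p - k) x)) := by
          intro k hk
          rw [Finset.mem_Ico] at hk
          rw [hg]
          refine congrArg (delta α) (congrArg f (funext fun t => ?_))
          have ht : (t : ℕ) < n := t.isLt
          rw [hcast, circ_nat, hpad]
          unfold padw
          by_cases hc : k + (t : ℕ) < p
          · rw [Nat.mod_eq_of_lt hc, if_neg (by omega), if_pos (by omega)]
          · have h1 : (k + (t : ℕ)) % p = k + (t : ℕ) - p := by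
              rw [Nat.mod_eq_sub_mod (by omega)]
              exact Nat.mod_eq_of_lt (by omega)
            rw [h1, if_pos (by omega), if_neg (by omega)]
            congr 1
            omega
        rw [Finset.sum_congr rfl step]
        refine Finset.sum_nbij' (fun k => p - k) (fun m => p - m) ?_ ?_ ?_ ?_ ?_ <;>
          intro a ha <;>
          first
            | rfl
            | (simp only [Finset.mem_Ico, Finset.mem_Icc] at ha ⊢; omega)
    -- RHS of E1
    have R1 : ∑ k ∈ Finset.range p, delta α (circ p (padw n x) ((k : ℕ) : ℤ))
        = (∑ k ∈ Finset.range n, delta α (x k)) + ((n : ℤ) - 1) * delta α 0 := by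
      rw [Finset.range_eq_Ico, ← Finset.sum_Ico_consecutive _ (Nat.zero_le n) (by omega : n ≤ p)]
      congr 1
      · rw [← Finset.range_eq_Ico]
        refine Finset.sum_congr rfl fun k hk => ?_
        rw [Finset.mem_range] at hk
        rw [circ_nat, Nat.mod_eq_of_lt (by omega)]
        unfold padw
        rw [if_pos hk]
      · have step : ∀ k ∈ Finset.Ico n p,
            delta α (circ p (padw n x) ((k : ℕ) : ℤ)) = delta α 0 := by
          intro k hk
          rw [Finset.mem_Ico] at hk
          rw [circ_nat, Nat.mod_eq_of_lt (by omega)]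
          unfold padw
          rw [if_neg (by omega)]
        rw [Finset.sum_congr rfl step, Finset.sum_const, Nat.card_Ico, nsmul_eq_mul]
        congr 1
        omega
    -- LHS of E2
    have L2 : ∑ k ∈ Finset.range p,
          delta α (f fun t => circ p (padw (n - 1) (fun s => x (s + 1))) ((k : ℤ) + ((t : ℕ) : ℤ)))
        = (∑ k ∈ Finset.range (n - 1),
            delta α (f fun t => if k + 1 + (t : ℕ) < n then x (k + 1 + (t : ℕ)) else 0))
          + delta α 0
          + ∑ m ∈ Finset.Icc 1 (n - 1), delta α (g (pad m (fun t => x (t + 1)))) := by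
      rw [Finset.range_eq_Ico,
        ← Finset.sum_Ico_consecutive _ (Nat.zero_le (n - 1)) (by omega : n - 1 ≤ p),
        ← Finset.sum_Ico_consecutive _ (by omega : n - 1 ≤ n) (by omega : n ≤ p)]
      rw [← add_assoc]
      congr 1
      congr 1
      · rw [← Finset.range_eq_Ico]
        refine Finset.sum_congr rfl fun k hk => ?_
        rw [Finset.mem_range] at hk
        refine congrArg (delta α) (congrArg f (funext fun t => ?_))
        have ht : (t : ℕ) < n := t.isLt
        rw [hcast, circ_nat, Nat.mod_eq_of_lt (by omega)]
        unfold padw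
        by_cases hc : k + (t : ℕ) < n - 1
        · rw [if_pos hc, if_pos (by omega)]
          show x (k + (t : ℕ) + 1) = x (k + 1 + (t : ℕ))
          congr 1
          omega
        · rw [if_neg hc, if_neg (by omega)]
      · have step : ∀ k ∈ Finset.Ico (n - 1) n,
            delta α (f fun t => circ p (padw (n - 1) (fun s => x (s + 1))) ((k : ℤ) + ((t : ℕ) : ℤ)))
              = delta α 0 := by
          intro k hk
          rw [Finset.mem_Ico] at hk
          have hfz : (fun t : Fin n =>
              circ p (padw (n - 1) (fun s => x (s + 1))) ((k : ℤ) + ((t : ℕ) : ℤ)))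
              = fun _ => (0 : Fin q) := by
            funext t
            have ht : (t : ℕ) < n := t.isLt
            rw [hcast, circ_nat, Nat.mod_eq_of_lt (by omega)]
            unfold padw
            rw [if_neg (by omega)]
          rw [hfz, h00]
        rw [Finset.sum_congr rfl step, Finset.sum_const, Nat.card_Ico,
          (by omega : n - (n - 1) = 1), one_nsmul]
      · have step : ∀ k ∈ Finset.Ico n p,
            delta α (f fun t => circ p (padw (n - 1) (fun s => x (s + 1))) ((k : ℤ) + ((t : ℕ) : ℤ)))
              = delta α (g (pad (p - k) (fun t => x (t + 1)))) := by
          intro k hk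
          rw [Finset.mem_Ico] at hk
          rw [hg]
          refine congrArg (delta α) (congrArg f (funext fun t => ?_))
          have ht : (t : ℕ) < n := t.isLt
          rw [hcast, circ_nat, hpad]
          unfold padw
          by_cases hc : k + (t : ℕ) < p
          · rw [Nat.mod_eq_of_lt hc, if_neg (by omega), if_pos (by omega)]
          · have h1 : (k + (t : ℕ)) % p = k + (t : ℕ) - p := by
              rw [Nat.mod_eq_sub_mod (by omega)]
              exact Nat.mod_eq_of_lt (by omega)
            rw [h1, if_pos (by omega), if_neg (by omega)]
            show x (k + (t : ℕ) - p + 1) = x ((t : ℕ) - (p - k) + 1)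
            congr 1
            omega
        rw [Finset.sum_congr rfl step]
        refine Finset.sum_nbij' (fun k => p - k) (fun m => p - m) ?_ ?_ ?_ ?_ ?_ <;>
          intro a ha <;>
          first
            | rfl
            | (simp only [Finset.mem_Ico, Finset.mem_Icc] at ha ⊢; omega)
    -- RHS of E2
    have R2 : ∑ k ∈ Finset.range p, delta α (circ p (padw (n - 1) (fun s => x (s + 1))) ((k : ℕ) : ℤ))
        = (∑ k ∈ Finset.range (n - 1), delta α (x (k + 1))) + (n : ℤ) * delta α 0 := by
      rw [Finset.range_eq_Ico,
        ← Finset.sum_Ico_consecutive _ (Nat.zero_le (n - 1)) (by omega : n - 1 ≤ p)]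
      congr 1
      · rw [← Finset.range_eq_Ico]
        refine Finset.sum_congr rfl fun k hk => ?_
        rw [Finset.mem_range] at hk
        rw [circ_nat, Nat.mod_eq_of_lt (by omega)]
        unfold padw
        rw [if_pos hk]
      · have step : ∀ k ∈ Finset.Ico (n - 1) p,
            delta α (circ p (padw (n - 1) (fun s => x (s + 1))) ((k : ℕ) : ℤ)) = delta α 0 := by
          intro k hk
          rw [Finset.mem_Ico] at hk
          rw [circ_nat, Nat.mod_eq_of_lt (by omega)]
          unfold padw
          rw [if_neg (by omega)]
        rw [Finset.sum_congr rfl step, Finset.sum_const, Nat.card_Ico, nsmul_eq_mul]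
        congr 1
        omega
    -- head-of-sum decompositions
    have hS0 : ∑ k ∈ Finset.range n,
          delta α (f fun t => if k + (t : ℕ) < n then x (k + (t : ℕ)) else 0)
        = (∑ k ∈ Finset.range (n - 1),
            delta α (f fun t => if k + 1 + (t : ℕ) < n then x (k + 1 + (t : ℕ)) else 0))
          + delta α (g x) := by
      have h1 := Finset.sum_range_succ'
        (fun k => delta α (f fun t => if k + (t : ℕ) < n then x (k + (t : ℕ)) else 0)) (n - 1)
      rw [Nat.sub_add_cancel hn] at h1
      rw [h1]
      congr 1
      rw [hg]
      refine congrArg (delta α) (congrArg f (funext fun t => ?_))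
      have ht : (t : ℕ) < n := t.isLt
      rw [if_pos (by omega)]
      congr 1
      omega
    have hX0 : ∑ k ∈ Finset.range n, delta α (x k)
        = (∑ k ∈ Finset.range (n - 1), delta α (x (k + 1))) + delta α (x 0) := by
      have h1 := Finset.sum_range_succ' (fun k => delta α (x k)) (n - 1)
      rw [Nat.sub_add_cancel hn] at h1
      exact h1
    -- reindex the goal sum
    have P3 : ∑ k ∈ Finset.Icc 1 (n - 1),
          (delta α (g (pad (n - k) (fun t => x (t + 1)))) - delta α (g (pad (n - k) x)))
        = ∑ m ∈ Finset.Icc 1 (n - 1),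
          (delta α (g (pad m (fun t => x (t + 1)))) - delta α (g (pad m x))) := by
      refine Finset.sum_nbij' (fun k => n - k) (fun m => n - m) ?_ ?_ ?_ ?_ ?_ <;>
        intro a ha <;>
        first
          | rfl
          | (simp only [Finset.mem_Icc] at ha ⊢; omega)
    rw [L1, R1] at E1
    rw [L2, R2] at E2
    rw [P3, Finset.sum_sub_distrib]
    rw [hS0, hX0] at E1
    linarith
  · -- backward direction
    intro H p hp w hw α
    -- windows
    set X : ℕ → (ℕ → Fin q) := fun k => fun s => w ((k : ℤ) + (s : ℤ)) with hX
    have hshift : ∀ k : ℕ, (fun t => X k (t + 1)) = X (k + 1) := by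
      intro k
      funext t
      simp only [hX]
      congr 1
      push_cast
      ring
    have hXp : X p = X 0 := by
      funext s
      simp only [hX]
      rw [add_comm, hw]
      norm_num
    set Φ : ℕ → ℤ := fun k =>
      ∑ j ∈ Finset.Icc 1 (n - 1), delta α (g (pad (n - j) (X k))) with hΦ
    have key : ∀ k : ℕ,
        delta α (f (fun t => w ((k : ℤ) + ((t : ℕ) : ℤ)))) - delta α (w (k : ℤ))
          = Φ (k + 1) - Φ k := by
      intro k
      have h1 := H α (X k)
      have h2 : g (X k) = f (fun t => w ((k : ℤ) + ((t : ℕ) : ℤ))) := by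
        rw [hg]
      have h3 : X k 0 = w (k : ℤ) := by simp [hX]
      rw [h2, h3, hshift] at h1
      simp only [hΦ, Finset.sum_sub_distrib] at *
      linarith
    have tele : ∑ k ∈ Finset.range p,
        (delta α (f (fun t => w ((k : ℤ) + ((t : ℕ) : ℤ)))) - delta α (w (k : ℤ))) = 0 := by
      rw [Finset.sum_congr rfl (fun k _ => key k), Finset.sum_range_sub Φ p]
      simp [hΦ, hXp]
    rw [Finset.sum_sub_distrib] at tele
    linarith
end

section
/- Let G be a particle automaton with states Q = {0,…,q−1} and neighborhood N = {−ℓ,…,r}, and let n = ℓ + r + 1. Then the global map G : Q^ℤ → Q^ℤ of G is a cellular automaton with neighborhood of size 2n−1: there exists a unique local rule f : Q^{2(ℓ+r)+1} → Q such that G(c)_i = f(c_{i−(ℓ+r)}, …, c_{i+(ℓ+r)}) for all c ∈ Q^ℤ and all i ∈ ℤ. -/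
/-- A particle automaton (PA) with states `Q = {0,…,q−1}` and neighborhood
`N = {−L,…,R}`.  For each state `v` and each context
`(u, u') ∈ Q^L × Q^R` (the states of the `L` cells to the left and the `R` cells to the
right), `g v u u'` is a list of `v` values in `N ∪ {†}`, encoded as `Option ℤ` where
`none` is the vanishing symbol `†` and `some d` is a displacement `d ∈ {−L,…,R}`. -/
structure PA (q L R : ℕ) where
  g : (v : Fin q) → (Fin L → Fin q) → (Fin R → Fin q) → Fin (v : ℕ) → Option ℤ
  mem_range : ∀ v u u' k d, g v u u' k = some d → -(L : ℤ) ≤ d ∧ d ≤ (R : ℤ)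

namespace PA

variable {q L R : ℕ}

/-- `N(c,j,i)`: the number of particles sent from cell `j` to cell `i` in
configuration `c`. -/
def count (A : PA q L R) (c : ℤ → Fin q) (j i : ℤ) : ℕ :=
  (Finset.univ.filter fun k : Fin ((c j : ℕ)) =>
    A.g (c j) (fun t => c (j - (L : ℤ) + ((t : ℕ) : ℤ)))
      (fun t => c (j + 1 + ((t : ℕ) : ℤ))) k = some (i - j)).card

/-- The global map of the PA: `G(c)_i = min(q−1, ∑_{j∈ℤ} N(c,j,i))`. -/
noncomputable def glob [NeZero q] (A : PA q L R) (c : ℤ → Fin q) (i : ℤ) : Fin q :=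
  ⟨min (q - 1) (∑ᶠ j : ℤ, A.count c j i),
    lt_of_le_of_lt (Nat.min_le_left _ _)
      (by have := Nat.pos_of_ne_zero (NeZero.ne q); omega)⟩

/-- A PA is conservative if no entry of any `g_v` on any context is `†`, and the total
number of particles arriving at any cell is at most `q − 1` (no overflow). -/
def Conservative (A : PA q L R) : Prop :=
  (∀ v u u' k, A.g v u u' k ≠ none) ∧
  (∀ (c : ℤ → Fin q) (i : ℤ), (∑ᶠ j : ℤ, A.count c j i) ≤ q - 1)

lemma count_support (A : PA q L R) (c : ℤ → Fin q) (j i : ℤ)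
    (h : A.count c j i ≠ 0) : i - R ≤ j ∧ j ≤ i + L := by
  rw [count, Finset.card_ne_zero] at h
  obtain ⟨k, hk⟩ := h.exists_mem
  rw [Finset.mem_filter] at hk
  have := A.mem_range _ _ _ _ _ hk.2
  omega

lemma count_congr (A : PA q L R) {c c' : ℤ → Fin q} {i i' : ℤ}
    (h : ∀ z : ℤ, -((L : ℤ) + R) ≤ z → z ≤ (L : ℤ) + R → c (i + z) = c' (i' + z))
    {j : ℤ} (hj1 : i - R ≤ j) (hj2 : j ≤ i + L) :
    A.count c j i = A.count c' (j - i + i') i' := by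
  set j' := j - i + i' with hj'
  have hc : c' j' = c j := by
    have := h (j - i) (by omega) (by omega)
    rw [show i + (j - i) = j by ring, show i' + (j - i) = j' by omega] at this
    exact this.symm
  have hl : (fun t : Fin L => c' (j' - (L : ℤ) + ((t : ℕ) : ℤ)))
      = fun t : Fin L => c (j - (L : ℤ) + ((t : ℕ) : ℤ)) := by
    funext t
    have ht := t.isLt
    have := h (j - i - L + (t : ℕ)) (by omega) (by omega)
    rw [show i + (j - i - L + ((t : ℕ) : ℤ)) = j - L + (t : ℕ) by ring,
      show i' + (j - i - L + ((t : ℕ) : ℤ)) = j' - L + (t : ℕ) by omega] at this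
    exact this.symm
  have hr : (fun t : Fin R => c' (j' + 1 + ((t : ℕ) : ℤ)))
      = fun t : Fin R => c (j + 1 + ((t : ℕ) : ℤ)) := by
    funext t
    have ht := t.isLt
    have := h (j - i + 1 + (t : ℕ)) (by omega) (by omega)
    rw [show i + (j - i + 1 + ((t : ℕ) : ℤ)) = j + 1 + (t : ℕ) by ring,
      show i' + (j - i + 1 + ((t : ℕ) : ℤ)) = j' + 1 + (t : ℕ) by omega] at this
    exact this.symm
  rw [count, count, hc, hl, hr, show i' - j' = i - j by omega]

lemma glob_congr [NeZero q] (A : PA q L R) {c c' : ℤ → Fin q} {i i' : ℤ}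
    (h : ∀ z : ℤ, -((L : ℤ) + R) ≤ z → z ≤ (L : ℤ) + R → c (i + z) = c' (i' + z)) :
    A.glob c i = A.glob c' i' := by
  have key : (∑ᶠ j : ℤ, A.count c j i) = ∑ᶠ j : ℤ, A.count c' j i' := by
    rw [finsum_eq_sum_of_support_subset (fun j => A.count c j i)
        (s := Finset.Icc (i - R) (i + L))
        (fun j hj => by
          have := A.count_support c j i hj
          simp [Finset.mem_Icc]; omega),
      finsum_eq_sum_of_support_subset (fun j => A.count c' j i')
        (s := Finset.Icc (i' - R) (i' + L))
        (fun j hj => by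
          have := A.count_support c' j i' hj
          simp [Finset.mem_Icc]; omega)]
    refine Finset.sum_nbij' (fun j => j - i + i') (fun j => j - i' + i) ?_ ?_ ?_ ?_ ?_
    · intro a ha; simp only [Finset.mem_Icc] at *; omega
    · intro a ha; simp only [Finset.mem_Icc] at *; omega
    · intro a _; ring
    · intro a _; ring
    · intro a ha
      simp only [Finset.mem_Icc] at ha
      exact A.count_congr h ha.1 ha.2
  simp only [glob, key]

end PA

/-- the global map of a particle automaton with neighborhood `{−ℓ,…,r}`
(`n = ℓ + r + 1`) is a cellular automaton whose local rule has `2n − 1 = 2(ℓ+r)+1`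
inputs, and this local rule is unique. -/
theorem pa_global_is_ca (q ℓ r : ℕ) [NeZero q] (A : PA q ℓ r) :
    ∃! f : (Fin (2 * (ℓ + r) + 1) → Fin q) → Fin q,
      ∀ (c : ℤ → Fin q) (i : ℤ),
        A.glob c i = f (fun t => c (i - ((ℓ : ℤ) + (r : ℤ)) + ((t : ℕ) : ℤ))) := by
  set m := 2 * (ℓ + r) + 1 with hm
  have hmpos : 0 < m := by omega
  -- canonical configuration associated to a word
  set fill : (Fin m → Fin q) → ℤ → Fin q :=
    fun u z => u ⟨(z + (ℓ + r)).toNat % m, Nat.mod_lt _ hmpos⟩ with hfill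
  set f : (Fin m → Fin q) → Fin q := fun u => A.glob (fill u) 0 with hf
  have hwin : ∀ u : Fin m → Fin q,
      (fun t : Fin m => fill u ((0 : ℤ) - ((ℓ : ℤ) + (r : ℤ)) + ((t : ℕ) : ℤ))) = u := by
    intro u
    funext t
    have ht := t.isLt
    simp only [hfill]
    have h1 : ((0:ℤ) - ((ℓ:ℤ) + (r:ℤ)) + ((t:ℕ):ℤ) + ((ℓ:ℤ) + (r:ℤ))).toNat % m
        = (t : ℕ) := by
      have h2 : ((0:ℤ) - ((ℓ:ℤ) + (r:ℤ)) + ((t:ℕ):ℤ) + ((ℓ:ℤ) + (r:ℤ))).toNat = (t : ℕ) := by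
        omega
      rw [h2, Nat.mod_eq_of_lt t.isLt]
    exact congrArg u (Fin.ext h1)
  have hprop : ∀ (c : ℤ → Fin q) (i : ℤ),
      A.glob c i = f (fun t => c (i - ((ℓ : ℤ) + (r : ℤ)) + ((t : ℕ) : ℤ))) := by
    intro c i
    rw [hf]
    refine A.glob_congr ?_
    intro z hz1 hz2
    simp only [hfill]
    have hmod : ((0 : ℤ) + z + (ℓ + r)).toNat % m = ((0 : ℤ) + z + (ℓ + r)).toNat :=
      Nat.mod_eq_of_lt (by omega)
    congr 1
    omega
  refine ⟨f, hprop, ?_⟩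
  intro f' hf'
  funext u
  have := hf' (fill u) 0
  rw [hwin u] at this
  rw [← this, hf]
end

section
/- Let G be a particle automaton with states Q = {0,…,q−1} and let F = Π(G) be its global map (which is a cellular automaton). Then: (1) F is always non-increasing, i.e. for every p ≥ 1 and every p-periodic configuration c ∈ Q^ℤ, ∑_{k=0}^{p−1} F(c)_k ≤ ∑_{k=0}^{p−1} c_k; and (2) F is conservative (∑_{k=0}^{p−1} F(c)_k = ∑_{k=0}^{p−1} c_k for every p-periodic c) if and only if G is a conservative PA, i.e. no entry of any g_v on any context is † and for every c ∈ Q^ℤ and i ∈ ℤ the total number of particles arriving at i is at most q−1. -/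
namespace PAProof
open Finset
variable {q L R : ℕ}



/-- Sum of particles arriving at `i`. -/
noncomputable def S (A : PA q L R) (c : ℤ → Fin q) (i : ℤ) : ℕ := ∑ᶠ j : ℤ, A.count c j i

lemma count_eq_zero (A : PA q L R) (c : ℤ → Fin q) {j i : ℤ}
    (h : ¬ (i - (R:ℤ) ≤ j ∧ j ≤ i + (L:ℤ))) : A.count c j i = 0 := by
  unfold PA.count
  rw [Finset.card_eq_zero, Finset.filter_eq_empty_iff]
  intro k _ hk
  have := A.mem_range _ _ _ _ _ hk
  omega

lemma S_eq (A : PA q L R) (c : ℤ → Fin q) (i : ℤ) :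
    S A c i = ∑ j ∈ Finset.Icc (i - (R:ℤ)) (i + (L:ℤ)), A.count c j i := by
  apply finsum_eq_finset_sum_of_support_subset
  intro j hj
  simp only [Function.mem_support, ne_eq] at hj
  rw [Finset.coe_Icc, Set.mem_Icc]
  by_contra h
  exact hj (count_eq_zero A c h)

lemma count_congr (A : PA q L R) (c c' : ℤ → Fin q) (j j' i i' : ℤ)
    (h1 : c j = c' j')
    (h2 : ∀ t : Fin L, c (j - (L:ℤ) + (t:ℕ)) = c' (j' - (L:ℤ) + (t:ℕ)))
    (h3 : ∀ t : Fin R, c (j + 1 + (t:ℕ)) = c' (j' + 1 + (t:ℕ)))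
    (h4 : i - j = i' - j') :
    A.count c j i = A.count c' j' i' := by
  unfold PA.count
  rw [show (fun t : Fin L => c (j - (L:ℤ) + (t:ℕ))) = (fun t : Fin L => c' (j' - (L:ℤ) + (t:ℕ))) from funext h2,
    show (fun t : Fin R => c (j + 1 + (t:ℕ))) = (fun t : Fin R => c' (j' + 1 + (t:ℕ))) from funext h3,
    h4, h1]



lemma count_shift (A : PA q L R) (c : ℤ → Fin q) {p : ℕ}
    (hc : ∀ n : ℤ, c (n + (p:ℤ)) = c n) (j i : ℤ) :
    A.count c (j + (p:ℤ)) (i + (p:ℤ)) = A.count c j i := by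
  apply count_congr
  · exact hc j
  · intro t
    rw [show j + (p:ℤ) - (L:ℤ) + (t:ℕ) = (j - (L:ℤ) + (t:ℕ)) + (p:ℤ) by ring, hc]
  · intro t
    rw [show j + (p:ℤ) + 1 + (t:ℕ) = (j + 1 + (t:ℕ)) + (p:ℤ) by ring, hc]
  · ring

lemma S_shift (A : PA q L R) (c : ℤ → Fin q) {p : ℕ}
    (hc : ∀ n : ℤ, c (n + (p:ℤ)) = c n) (i : ℤ) :
    S A c (i + (p:ℤ)) = S A c i := by
  rw [S_eq, S_eq]
  apply Finset.sum_nbij' (fun j => j - (p:ℤ)) (fun j => j + (p:ℤ))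
  · intro a ha; simp only [Finset.mem_Icc] at *; omega
  · intro a ha; simp only [Finset.mem_Icc] at *; omega
  · intro a _; ring
  · intro a _; ring
  · intro a _
    rw [show A.count c a (i + (p:ℤ)) = A.count c ((a - (p:ℤ)) + (p:ℤ)) (i + (p:ℤ)) by ring_nf,
      count_shift A c hc]

/-- Outflow formula: the total number of particles leaving cell `j` equals the number of
non-vanishing entries. -/
lemma sum_count_out (A : PA q L R) (c : ℤ → Fin q) (j : ℤ) :
    ∑ i ∈ Finset.Icc (j - (L:ℤ)) (j + (R:ℤ)), A.count c j i
      = (Finset.univ.filter fun k : Fin ((c j : ℕ)) =>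
          A.g (c j) (fun t => c (j - (L : ℤ) + ((t : ℕ) : ℤ)))
            (fun t => c (j + 1 + ((t : ℕ) : ℤ))) k ≠ none).card := by
  classical
  have hset : (Finset.univ.filter fun k : Fin ((c j : ℕ)) =>
          A.g (c j) (fun t => c (j - (L : ℤ) + ((t : ℕ) : ℤ)))
            (fun t => c (j + 1 + ((t : ℕ) : ℤ))) k ≠ none)
      = (Finset.Icc (j - (L:ℤ)) (j + (R:ℤ))).biUnion
          (fun i => Finset.univ.filter fun k =>
            A.g (c j) (fun t => c (j - (L : ℤ) + ((t : ℕ) : ℤ)))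
              (fun t => c (j + 1 + ((t : ℕ) : ℤ))) k = some (i - j)) := by
    ext k
    simp only [Finset.mem_filter, Finset.mem_biUnion, Finset.mem_univ, true_and,
      Finset.mem_Icc, ne_eq]
    constructor
    · intro hk
      obtain ⟨d, hd⟩ := Option.ne_none_iff_exists'.mp hk
      have hb := A.mem_range _ _ _ _ _ hd
      refine ⟨j + d, ⟨by omega, by omega⟩, ?_⟩
      rw [hd]; congr 1; ring
    · rintro ⟨i, -, hi⟩
      simp [hi]
  rw [hset, Finset.card_biUnion]
  · rfl
  · intro i _ i' _ hii'
    simp only [Finset.disjoint_left, Finset.mem_filter, Finset.mem_univ, true_and]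
    intro k h1 h2
    apply hii'
    rw [h1] at h2
    have : i - j = i' - j := by exact_mod_cast Option.some.inj h2
    omega

lemma out_le (A : PA q L R) (c : ℤ → Fin q) (j : ℤ) :
    ∑ i ∈ Finset.Icc (j - (L:ℤ)) (j + (R:ℤ)), A.count c j i ≤ (c j : ℕ) := by
  rw [sum_count_out]
  calc _ ≤ (Finset.univ : Finset (Fin ((c j : ℕ)))).card := Finset.card_filter_le _ _
  _ = (c j : ℕ) := by simp

lemma sum_shift {p : ℕ} (f : ℤ → ℕ) (hf : ∀ n : ℤ, f (n + (p:ℤ)) = f n) (a : ℤ) :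
    ∑ k ∈ Finset.range p, f (a + (k:ℤ)) = ∑ k ∈ Finset.range p, f (k:ℤ) := by
  have step : ∀ b : ℤ, ∑ k ∈ Finset.range p, f (b + 1 + (k:ℤ))
      = ∑ k ∈ Finset.range p, f (b + (k:ℤ)) := by
    intro b
    have h1 : ∑ k ∈ Finset.range (p+1), f (b + (k:ℤ))
        = (∑ k ∈ Finset.range p, f (b + ((k+1 : ℕ):ℤ))) + f (b + ((0:ℕ):ℤ)) :=
      Finset.sum_range_succ' _ p
    have h2 : ∑ k ∈ Finset.range (p+1), f (b + (k:ℤ))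
        = (∑ k ∈ Finset.range p, f (b + (k:ℤ))) + f (b + (p:ℤ)) :=
      Finset.sum_range_succ _ p
    have h3 : (∑ k ∈ Finset.range p, f (b + ((k+1 : ℕ):ℤ)))
        = ∑ k ∈ Finset.range p, f (b + 1 + (k:ℤ)) :=
      Finset.sum_congr rfl (fun k _ => congrArg f (by push_cast; ring))
    have h4 : f (b + (p:ℤ)) = f b := hf b
    have h5 : f (b + ((0:ℕ):ℤ)) = f b := congrArg f (by push_cast; ring)
    omega
  induction a using Int.induction_on with
  | zero => simp
  | succ n ih => rw [show ((n:ℤ)+1) = (n:ℤ) + 1 from rfl, step]; exact ih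
  | pred n ih =>
    have h := step (-(n:ℤ) - 1)
    have h' : ∑ k ∈ Finset.range p, f (-(n:ℤ) - 1 + 1 + (k:ℤ))
        = ∑ k ∈ Finset.range p, f (-(n:ℤ) + (k:ℤ)) :=
      Finset.sum_congr rfl (fun k _ => congrArg f (by ring))
    have h'' : ∑ k ∈ Finset.range p, f (-((n:ℤ)+1) + (k:ℤ))
        = ∑ k ∈ Finset.range p, f (-(n:ℤ) - 1 + (k:ℤ)) :=
      Finset.sum_congr rfl (fun k _ => congrArg f (by ring))
    rw [← h, h']
    exact ih

lemma shift_mul {p : ℕ} (f : ℤ → ℕ) (hf : ∀ n : ℤ, f (n + (p:ℤ)) = f n) (n : ℤ) (m : ℤ) :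
    f (n + m * (p:ℤ)) = f n := by
  induction m using Int.induction_on with
  | zero => simp
  | succ k ih =>
    rw [show n + ((k:ℤ)+1) * (p:ℤ) = (n + (k:ℤ) * (p:ℤ)) + (p:ℤ) by ring, hf]
    exact ih
  | pred k ih =>
    have := hf (n + (-(k:ℤ)-1) * (p:ℤ))
    rw [show n + (-(k:ℤ)-1) * (p:ℤ) + (p:ℤ) = n + (-(k:ℤ)) * (p:ℤ) by ring] at this
    rw [← this]
    exact ih

/-- Double counting: total inflow over a period equals total outflow over a period. -/
lemma key (A : PA q L R) (c : ℤ → Fin q) {p : ℕ}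
    (hc : ∀ n : ℤ, c (n + (p:ℤ)) = c n) :
    ∑ k ∈ Finset.range p, S A c (k:ℤ)
      = ∑ j ∈ Finset.range p,
          ∑ i ∈ Finset.Icc ((j:ℤ) - (L:ℤ)) ((j:ℤ) + (R:ℤ)), A.count c (j:ℤ) i := by
  have fper : ∀ d : ℤ, ∀ n : ℤ, A.count c (n + (p:ℤ)) ((n + (p:ℤ)) + d) = A.count c n (n + d) := by
    intro d n
    rw [show (n + (p:ℤ)) + d = (n + d) + (p:ℤ) by ring, count_shift A c hc]
  have hL : ∀ k : ℤ, S A c k = ∑ d ∈ Finset.Icc (-(L:ℤ)) (R:ℤ), A.count c (k - d) k := by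
    intro k
    rw [S_eq]
    apply Finset.sum_nbij' (fun j => k - j) (fun d => k - d)
    · intro a ha; simp only [Finset.mem_Icc] at *; omega
    · intro a ha; simp only [Finset.mem_Icc] at *; omega
    · intro a _; ring
    · intro a _; ring
    · intro a _; rw [show k - (k - a) = a by ring]
  have hRr : ∀ j : ℤ, ∑ i ∈ Finset.Icc (j - (L:ℤ)) (j + (R:ℤ)), A.count c j i
      = ∑ d ∈ Finset.Icc (-(L:ℤ)) (R:ℤ), A.count c j (j + d) := by
    intro j
    apply Finset.sum_nbij' (fun i => i - j) (fun d => j + d)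
    · intro a ha; simp only [Finset.mem_Icc] at *; omega
    · intro a ha; simp only [Finset.mem_Icc] at *; omega
    · intro a _; ring
    · intro a _; ring
    · intro a _; rw [show j + (a - j) = a by ring]
  calc ∑ k ∈ Finset.range p, S A c (k:ℤ)
      = ∑ k ∈ Finset.range p, ∑ d ∈ Finset.Icc (-(L:ℤ)) (R:ℤ), A.count c ((k:ℤ) - d) (k:ℤ) :=
        Finset.sum_congr rfl (fun k _ => hL k)
    _ = ∑ d ∈ Finset.Icc (-(L:ℤ)) (R:ℤ), ∑ k ∈ Finset.range p, A.count c ((k:ℤ) - d) (k:ℤ) :=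
        Finset.sum_comm
    _ = ∑ d ∈ Finset.Icc (-(L:ℤ)) (R:ℤ), ∑ k ∈ Finset.range p, A.count c (k:ℤ) ((k:ℤ) + d) := by
        refine Finset.sum_congr rfl (fun d _ => ?_)
        have := sum_shift (fun n => A.count c n (n + d)) (fper d) (-d)
        calc ∑ k ∈ Finset.range p, A.count c ((k:ℤ) - d) (k:ℤ)
            = ∑ k ∈ Finset.range p, A.count c (-d + (k:ℤ)) ((-d + (k:ℤ)) + d) :=
              Finset.sum_congr rfl (fun k _ => by
                rw [show -d + (k:ℤ) = (k:ℤ) - d by ring, show ((k:ℤ) - d) + d = (k:ℤ) by ring])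
          _ = ∑ k ∈ Finset.range p, A.count c (k:ℤ) ((k:ℤ) + d) := this
    _ = ∑ j ∈ Finset.range p,
          ∑ i ∈ Finset.Icc ((j:ℤ) - (L:ℤ)) ((j:ℤ) + (R:ℤ)), A.count c (j:ℤ) i := by
        rw [Finset.sum_comm]
        exact Finset.sum_congr rfl (fun j _ => (hRr (j:ℤ)).symm)
lemma glob_val [NeZero q] (A : PA q L R) (c : ℤ → Fin q) (i : ℤ) :
    ((A.glob c i : ℕ)) = min (q - 1) (S A c i) := rfl

lemma sum_S_le (A : PA q L R) (c : ℤ → Fin q) {p : ℕ}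
    (hc : ∀ n : ℤ, c (n + (p:ℤ)) = c n) :
    ∑ k ∈ Finset.range p, S A c (k:ℤ) ≤ ∑ k ∈ Finset.range p, ((c (k:ℤ) : ℕ)) := by
  rw [key A c hc]
  exact Finset.sum_le_sum (fun j _ => out_le A c (j:ℤ))

lemma forward_eq (A : PA q L R) [NeZero q] (hA : A.Conservative) (c : ℤ → Fin q) {p : ℕ}
    (hc : ∀ n : ℤ, c (n + (p:ℤ)) = c n) :
    ∑ k ∈ Finset.range p, ((A.glob c (k:ℤ) : ℕ)) = ∑ k ∈ Finset.range p, ((c (k:ℤ) : ℕ)) := by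
  obtain ⟨h1, h2⟩ := hA
  have hmin : ∀ k : ℤ, ((A.glob c k : ℕ)) = S A c k := by
    intro k
    rw [glob_val]
    exact min_eq_right (h2 c k)
  calc ∑ k ∈ Finset.range p, ((A.glob c (k:ℤ) : ℕ))
      = ∑ k ∈ Finset.range p, S A c (k:ℤ) := Finset.sum_congr rfl (fun k _ => hmin k)
    _ = ∑ j ∈ Finset.range p,
          ∑ i ∈ Finset.Icc ((j:ℤ) - (L:ℤ)) ((j:ℤ) + (R:ℤ)), A.count c (j:ℤ) i := key A c hc
    _ = ∑ k ∈ Finset.range p, ((c (k:ℤ) : ℕ)) := by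
        refine Finset.sum_congr rfl (fun j _ => ?_)
        rw [sum_count_out]
        rw [Finset.filter_true_of_mem (fun k _ => h1 _ _ _ k)]
        simp
lemma backward_none (A : PA q L R) [NeZero q]
    (heq : ∀ p : ℕ, 1 ≤ p → ∀ c : ℤ → Fin q, (∀ i : ℤ, c (i + (p : ℤ)) = c i) →
        ∑ k ∈ Finset.range p, ((A.glob c (k:ℤ) : ℕ)) =
        ∑ k ∈ Finset.range p, ((c (k : ℤ) : ℕ))) :
    ∀ v u u' k, A.g v u u' k ≠ none := by
  intro v u u' k hk
  set p : ℕ := L + 1 + R with hp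
  have hppos : (0:ℤ) < (p:ℤ) := by positivity
  set w : ℕ → Fin q := fun m =>
    if h : m < L then u ⟨m, h⟩
    else if h2 : m - L - 1 < R ∧ L < m then u' ⟨m - L - 1, h2.1⟩
    else v with hw
  set c : ℤ → Fin q := fun n => w (n % (p:ℤ)).toNat with hc
  have hper : ∀ n : ℤ, c (n + (p:ℤ)) = c n := by
    intro n
    simp only [hc]
    congr 2
    rw [show n + (p:ℤ) = n + 1*(p:ℤ) by ring, Int.add_mul_emod_self_right]
  have hval : ∀ n : ℤ, 0 ≤ n → n < (p:ℤ) → c n = w n.toNat := by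
    intro n h0 h1
    simp only [hc, Int.emod_eq_of_lt h0 h1]
  have hcL : c (L:ℤ) = v := by
    rw [hval (L:ℤ) (by positivity) (by exact_mod_cast by omega)]
    simp only [Int.toNat_natCast, hw]
    rw [dif_neg (lt_irrefl L), dif_neg (by omega)]
  have hctxL : ∀ t : Fin L, c ((L:ℤ) - (L:ℤ) + ((t:ℕ):ℤ)) = u t := by
    intro t
    have ht := t.isLt
    rw [show (L:ℤ) - (L:ℤ) + ((t:ℕ):ℤ) = ((t:ℕ):ℤ) by ring,
      hval _ (by positivity) (by exact_mod_cast by omega)]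
    simp only [Int.toNat_natCast, hw]
    rw [dif_pos ht]
  have hctxR : ∀ t : Fin R, c ((L:ℤ) + 1 + ((t:ℕ):ℤ)) = u' t := by
    intro t
    have ht := t.isLt
    have harg : ((L:ℤ) + 1 + ((t:ℕ):ℤ)) = ((L + 1 + (t:ℕ) : ℕ) : ℤ) := by push_cast; ring
    rw [harg, hval _ (by positivity) (by exact_mod_cast by omega)]
    simp only [Int.toNat_natCast, hw]
    rw [dif_neg (by omega), dif_pos (by omega)]
    congr 1
    exact Fin.ext (by simp; omega)
  have E := heq p (by omega) c hper
  have hstrict : ∑ i ∈ Finset.Icc ((L:ℤ) - (L:ℤ)) ((L:ℤ) + (R:ℤ)), A.count c (L:ℤ) i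
      < (c (L:ℤ) : ℕ) := by
    rw [sum_count_out,
      show (fun t : Fin L => c ((L:ℤ) - (L:ℤ) + ((t:ℕ):ℤ))) = u from funext hctxL,
      show (fun t : Fin R => c ((L:ℤ) + 1 + ((t:ℕ):ℤ))) = u' from funext hctxR, hcL]
    calc (Finset.univ.filter fun k' : Fin ((v:ℕ)) => A.g v u u' k' ≠ none).card
        < (Finset.univ : Finset (Fin ((v:ℕ)))).card :=
          Finset.card_lt_card (Finset.filter_ssubset.mpr ⟨k, Finset.mem_univ k, by simp [hk]⟩)
      _ = (v : ℕ) := by simp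
  have hlt : ∑ j ∈ Finset.range p,
        ∑ i ∈ Finset.Icc ((j:ℤ) - (L:ℤ)) ((j:ℤ) + (R:ℤ)), A.count c (j:ℤ) i
      < ∑ k' ∈ Finset.range p, ((c (k':ℤ) : ℕ)) := by
    exact Finset.sum_lt_sum (s := Finset.range p)
      (f := fun j : ℕ => ∑ i ∈ Finset.Icc ((j:ℤ) - (L:ℤ)) ((j:ℤ) + (R:ℤ)), A.count c (j:ℤ) i)
      (g := fun j : ℕ => ((c (j:ℤ) : ℕ)))
      (fun j _ => out_le A c (j:ℤ))
      ⟨L, Finset.mem_range.mpr (by omega), hstrict⟩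
  have hle : ∑ k' ∈ Finset.range p, ((A.glob c (k':ℤ) : ℕ))
      ≤ ∑ k' ∈ Finset.range p, S A c (k':ℤ) :=
    Finset.sum_le_sum (fun k' _ => by rw [glob_val]; exact Nat.min_le_right _ _)
  rw [key A c hper] at hle
  omega

lemma backward_overflow (A : PA q L R) [NeZero q]
    (heq : ∀ p : ℕ, 1 ≤ p → ∀ c : ℤ → Fin q, (∀ i : ℤ, c (i + (p : ℤ)) = c i) →
        ∑ k ∈ Finset.range p, ((A.glob c (k:ℤ) : ℕ)) =
        ∑ k ∈ Finset.range p, ((c (k : ℤ) : ℕ))) :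
    ∀ (c : ℤ → Fin q) (i : ℤ), S A c i ≤ q - 1 := by
  intro c i
  by_contra hS
  push_neg at hS
  set B : ℕ := L + R with hB
  set p : ℕ := 2 * B + 1 with hp
  have hppos : (0:ℤ) < (p:ℤ) := by positivity
  set base : ℤ := i - (B:ℤ) with hbase
  set c' : ℤ → Fin q := fun n => c (base + (n - base) % (p:ℤ)) with hc'
  have hper : ∀ n : ℤ, c' (n + (p:ℤ)) = c' n := by
    intro n
    simp only [hc']
    congr 2
    rw [show n + (p:ℤ) - base = (n - base) + 1*(p:ℤ) by ring, Int.add_mul_emod_self_right]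
  have hwin : ∀ n : ℤ, base ≤ n → n ≤ base + 2 * (B:ℤ) → c' n = c n := by
    intro n h0 h1
    simp only [hc']
    rw [Int.emod_eq_of_lt (by omega) (by omega)]
    congr 1
    ring
  have hcount : ∀ j ∈ Finset.Icc (i - (R:ℤ)) (i + (L:ℤ)), A.count c' j i = A.count c j i := by
    intro j hj
    rw [Finset.mem_Icc] at hj
    apply count_congr
    · exact hwin j (by omega) (by omega)
    · intro t
      have ht := t.isLt
      exact hwin _ (by omega) (by omega)
    · intro t
      have ht := t.isLt
      exact hwin _ (by omega) (by omega)
    · rfl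
  have hSe : S A c' i = S A c i := by
    rw [S_eq, S_eq]
    exact Finset.sum_congr rfl hcount
  have hTper := S_shift A c' hper
  set k0 : ℤ := i % (p:ℤ) with hk0
  have hk0b : 0 ≤ k0 ∧ k0 < (p:ℤ) := ⟨Int.emod_nonneg i (by omega), Int.emod_lt_of_pos i hppos⟩
  have hSk0 : S A c' k0 = S A c' i := by
    conv_rhs => rw [show i = k0 + (i / (p:ℤ)) * (p:ℤ) from (Int.emod_add_ediv_mul i (p:ℤ)).symm]
    exact (shift_mul (S A c') hTper k0 (i / (p:ℤ))).symm
  have E := heq p (by omega) c' hper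
  have hlt : ∑ k ∈ Finset.range p, ((A.glob c' (k:ℤ) : ℕ))
      < ∑ k ∈ Finset.range p, S A c' (k:ℤ) := by
    refine Finset.sum_lt_sum (s := Finset.range p)
      (f := fun k : ℕ => ((A.glob c' (k:ℤ) : ℕ)))
      (g := fun k : ℕ => S A c' (k:ℤ))
      (fun k _ => by
        show ((A.glob c' (k:ℤ) : ℕ)) ≤ S A c' (k:ℤ)
        rw [glob_val]; exact Nat.min_le_right _ _)
      ⟨k0.toNat, Finset.mem_range.mpr (by omega), ?_⟩
    show ((A.glob c' ((k0.toNat:ℕ):ℤ) : ℕ)) < S A c' ((k0.toNat:ℕ):ℤ)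
    have hcast : ((k0.toNat : ℕ) : ℤ) = k0 := Int.toNat_of_nonneg hk0b.1
    rw [glob_val, hcast, hSk0, hSe]
    calc min (q - 1) (S A c i) ≤ q - 1 := Nat.min_le_left _ _
      _ < S A c i := hS
  have hle := sum_S_le A c' hper
  omega
end PAProof

/-- the global map of a particle automaton is always non-increasing, and
it is conservative if and only if the particle automaton is conservative. -/
theorem pa_global_nonincreasing_and_conservative_iff
    (q L R : ℕ) [NeZero q] (A : PA q L R)
    (F : (ℤ → Fin q) → ℤ → Fin q)
    (hF : ∀ (c : ℤ → Fin q) (i : ℤ), F c i = A.glob c i) :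
    (∀ p : ℕ, 1 ≤ p → ∀ c : ℤ → Fin q, (∀ i : ℤ, c (i + (p : ℤ)) = c i) →
        ∑ k ∈ Finset.range p, ((F c (k : ℤ) : ℕ)) ≤
        ∑ k ∈ Finset.range p, ((c (k : ℤ) : ℕ))) ∧
    ((∀ p : ℕ, 1 ≤ p → ∀ c : ℤ → Fin q, (∀ i : ℤ, c (i + (p : ℤ)) = c i) →
        ∑ k ∈ Finset.range p, ((F c (k : ℤ) : ℕ)) =
        ∑ k ∈ Finset.range p, ((c (k : ℤ) : ℕ))) ↔
      A.Conservative) := by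
  have hsum : ∀ (c : ℤ → Fin q) (p : ℕ),
      ∑ k ∈ Finset.range p, ((F c (k : ℤ) : ℕ))
        = ∑ k ∈ Finset.range p, ((A.glob c (k:ℤ) : ℕ)) :=
    fun c p => Finset.sum_congr rfl (fun k _ => by rw [hF])
  constructor
  · intro p hp c hc
    rw [hsum]
    calc ∑ k ∈ Finset.range p, ((A.glob c (k:ℤ) : ℕ))
        ≤ ∑ k ∈ Finset.range p, PAProof.S A c (k:ℤ) :=
          Finset.sum_le_sum (fun k _ => by
            rw [PAProof.glob_val]; exact Nat.min_le_right _ _)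
      _ ≤ ∑ k ∈ Finset.range p, ((c (k:ℤ) : ℕ)) := PAProof.sum_S_le A c hc
  · constructor
    · intro h
      have heq : ∀ p : ℕ, 1 ≤ p → ∀ c : ℤ → Fin q, (∀ i : ℤ, c (i + (p : ℤ)) = c i) →
          ∑ k ∈ Finset.range p, ((A.glob c (k:ℤ) : ℕ)) =
          ∑ k ∈ Finset.range p, ((c (k : ℤ) : ℕ)) := by
        intro p hp c hc
        rw [← hsum]
        exact h p hp c hc
      exact ⟨PAProof.backward_none A heq, PAProof.backward_overflow A heq⟩
    · intro hA p hp c hc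
      rw [hsum]
      exact PAProof.forward_eq A hA c hc
end
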